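/- arXiv:1601.05594 — 9 statements merged into one kernel-verified Lean document; each statement's English description precedes it below -/
import Mathlib

section
/- Let Σ be a finite alphabet, k ≥ 2, and let Γ be a closed subset of P(Σ^k) disjoint from the set of shift-invariant measures P_si(Σ^k). Then the set B(Γ) = { ω ∈ Σ^* : fr_ω^k ∈ Γ } is finite. -/
open Finset

def occCount {A : Type*} [DecidableEq A] (k : ℕ) (ω : List A) (φ : Fin k → A) : ℕ :=
  ((Finset.range (ω.length - k + 1)).filter
    (fun i => ∀ j : Fin k, ω[i + (j : ℕ)]? = some (φ j))).card

noncomputable def freq {A : Type*} [DecidableEq A] (k : ℕ) (ω : List A) (φ : Fin k → A) : ℝ :=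
  (occCount k ω φ : ℝ) / ((ω.length - k + 1 : ℕ) : ℝ)

def IsProbVec {A : Type*} [Fintype A] {k : ℕ} (η : (Fin k → A) → ℝ) : Prop :=
  (∀ φ, 0 ≤ η φ) ∧ ∑ φ : Fin k → A, η φ = 1

def ShiftInv {A : Type*} [Fintype A] (k : ℕ) (η : (Fin (k + 2) → A) → ℝ) : Prop :=
  ∀ ψ : Fin (k + 1) → A, ∑ a : A, η (Fin.cons a ψ) = ∑ a : A, η (Fin.snoc ψ a)

def genFrom {A V : Type*} (E : V → V → A → Prop) (ω : List A) : Prop :=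
  ∃ f : Fin (ω.length + 1) → V, ∀ i : Fin ω.length, E (f i.castSucc) (f i.succ) (ω.get i)

noncomputable def capacity {A : Type*} (T : Set (List A)) : ℝ :=
  Filter.atTop.limsup fun n : ℕ =>
    Real.logb 2 (Nat.card {ω : List A // ω ∈ T ∧ ω.length = n}) / n

def memGammaEps {A : Type*} [Fintype A] [DecidableEq A] {k : ℕ}
    (Γ : Set ((Fin k → A) → ℝ)) (ε : ℝ) (η : (Fin k → A) → ℝ) : Prop :=
  IsProbVec η ∧ ∃ δ, ε < δ ∧ ∀ μ : (Fin k → A) → ℝ, IsProbVec μ → μ ∉ Γ → δ ≤ ‖η - μ‖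

lemma sum_occ_cons {A : Type*} [Fintype A] [DecidableEq A] (k : ℕ) (ω : List A)
    (hn : k + 2 ≤ ω.length) (ψ : Fin (k + 1) → A) :
    ∑ a : A, occCount (k + 2) ω (Fin.cons a ψ) =
      ((Finset.range (ω.length - (k + 2) + 1)).filter
        (fun i => ∀ j : Fin (k + 1), ω[i + 1 + (j : ℕ)]? = some (ψ j))).card := by
  unfold occCount
  simp only [Finset.card_filter]
  rw [Finset.sum_comm]
  refine Finset.sum_congr rfl fun i hi => ?_
  have hiN : i < ω.length - (k + 2) + 1 := Finset.mem_range.mp hi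
  have hilt : i < ω.length := by omega
  by_cases hR : ∀ j : Fin (k + 1), ω[i + 1 + (j : ℕ)]? = some (ψ j)
  · rw [if_pos hR]
    have hgi : ω[i]? = some (ω.get ⟨i, hilt⟩) := List.getElem?_eq_getElem hilt
    have hQc : ∀ a : A,
        (∀ j : Fin (k + 2), ω[i + (j : ℕ)]? = some ((Fin.cons a ψ : Fin (k+2) → A) j))
          ↔ a = ω.get ⟨i, hilt⟩ := by
      intro a
      constructor
      · intro h
        have h0 := h 0
        simp only [Fin.val_zero, Nat.add_zero, Fin.cons_zero] at h0
        rw [hgi] at h0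
        exact (Option.some_inj.mp h0).symm
      · rintro rfl
        intro j
        refine Fin.cases ?_ (fun j' => ?_) j
        · simpa using hgi
        · have := hR j'
          have harith : i + ((j'.succ : Fin (k+2)) : ℕ) = i + 1 + (j' : ℕ) := by
            simp [Fin.val_succ]; omega
          rw [harith, Fin.cons_succ]
          exact this
    have hsum : ∀ a : A,
        (if ∀ j : Fin (k + 2), ω[i + (j : ℕ)]? = some ((Fin.cons a ψ : Fin (k+2) → A) j) then (1:ℕ) else 0)
          = if a = ω.get ⟨i, hilt⟩ then 1 else 0 := by
      intro a
      by_cases h : a = ω.get ⟨i, hilt⟩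
      · rw [if_pos h, if_pos ((hQc a).mpr h)]
      · rw [if_neg h, if_neg (fun hq => h ((hQc a).mp hq))]
    simp only [hsum]
    simp
  · rw [if_neg hR]
    refine Finset.sum_eq_zero fun a _ => ?_
    rw [if_neg]
    intro hQ
    refine hR fun j' => ?_
    have := hQ j'.succ
    have harith : i + ((j'.succ : Fin (k+2)) : ℕ) = i + 1 + (j' : ℕ) := by
      simp [Fin.val_succ]; omega
    rw [harith, Fin.cons_succ] at this
    exact this

lemma sum_occ_snoc {A : Type*} [Fintype A] [DecidableEq A] (k : ℕ) (ω : List A)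
    (hn : k + 2 ≤ ω.length) (ψ : Fin (k + 1) → A) :
    ∑ a : A, occCount (k + 2) ω (Fin.snoc ψ a) =
      ((Finset.range (ω.length - (k + 2) + 1)).filter
        (fun i => ∀ j : Fin (k + 1), ω[i + (j : ℕ)]? = some (ψ j))).card := by
  unfold occCount
  simp only [Finset.card_filter]
  rw [Finset.sum_comm]
  refine Finset.sum_congr rfl fun i hi => ?_
  have hiN : i < ω.length - (k + 2) + 1 := Finset.mem_range.mp hi
  have hilt : i + (k + 1) < ω.length := by omega
  by_cases hR : ∀ j : Fin (k + 1), ω[i + (j : ℕ)]? = some (ψ j)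
  · rw [if_pos hR]
    have hgi : ω[i + (k + 1)]? = some (ω.get ⟨i + (k + 1), hilt⟩) := List.getElem?_eq_getElem hilt
    have hQc : ∀ a : A,
        (∀ j : Fin (k + 2), ω[i + (j : ℕ)]? = some ((Fin.snoc ψ a : Fin (k+2) → A) j))
          ↔ a = ω.get ⟨i + (k + 1), hilt⟩ := by
      intro a
      constructor
      · intro h
        have h0 := h (Fin.last (k + 1))
        simp only [Fin.val_last, Fin.snoc_last] at h0
        rw [hgi] at h0
        exact (Option.some_inj.mp h0).symm
      · rintro rfl
        intro j
        refine Fin.lastCases ?_ (fun j' => ?_) j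
        · simpa using hgi
        · rw [Fin.snoc_castSucc]
          simpa using hR j'
    have hsum : ∀ a : A,
        (if ∀ j : Fin (k + 2), ω[i + (j : ℕ)]? = some ((Fin.snoc ψ a : Fin (k+2) → A) j) then (1:ℕ) else 0)
          = if a = ω.get ⟨i + (k + 1), hilt⟩ then 1 else 0 := by
      intro a
      by_cases h : a = ω.get ⟨i + (k + 1), hilt⟩
      · rw [if_pos h, if_pos ((hQc a).mpr h)]
      · rw [if_neg h, if_neg (fun hq => h ((hQc a).mp hq))]
    simp only [hsum]
    simp
  · rw [if_neg hR]
    refine Finset.sum_eq_zero fun a _ => ?_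
    rw [if_neg]
    intro hQ
    refine hR fun j' => ?_
    have := hQ j'.castSucc
    rw [Fin.snoc_castSucc] at this
    simpa using this

lemma cardA_le (p : ℕ → Prop) [DecidablePred p] (N : ℕ) :
    ((Finset.range N).filter fun i => p (i + 1)).card ≤ ((Finset.range N).filter p).card + 1 := by
  have h1 : ((Finset.range N).filter fun i => p (i + 1)).card
      ≤ ((Finset.range (N + 1)).filter p).card := by
    apply Finset.card_le_card_of_injOn (fun i => i + 1)
    · intro i hi
      simp only [Finset.coe_filter, Finset.mem_coe, Set.mem_setOf_eq, Finset.mem_filter, Finset.mem_range] at hi ⊢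
      exact ⟨by omega, hi.2⟩
    · intro a _ b _ h; simp only at h; omega
  have h2 : ((Finset.range (N + 1)).filter p).card ≤ ((Finset.range N).filter p).card + 1 := by
    rw [Finset.range_add_one, Finset.filter_insert]
    split
    · exact Finset.card_insert_le _ _
    · omega
  omega

lemma cardB_le (p : ℕ → Prop) [DecidablePred p] (N : ℕ) :
    ((Finset.range N).filter p).card ≤ ((Finset.range N).filter fun i => p (i + 1)).card + 1 := by
  have hsub : (Finset.range N).filter p ⊆
      insert 0 ((Finset.range N).filter fun i => 0 < i ∧ p i) := by
    intro i hi
    simp only [Finset.mem_filter, Finset.mem_range] at hi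
    rcases Nat.eq_zero_or_pos i with h | h
    · rw [h]; exact Finset.mem_insert_self _ _
    · simp only [Finset.mem_insert, Finset.mem_filter, Finset.mem_range]
      exact Or.inr ⟨hi.1, h, hi.2⟩
  have h1 := le_trans (Finset.card_le_card hsub) (Finset.card_insert_le _ _)
  have h2 : ((Finset.range N).filter fun i => 0 < i ∧ p i).card
      ≤ ((Finset.range N).filter fun i => p (i + 1)).card := by
    apply Finset.card_le_card_of_injOn (fun i => i - 1)
    · intro i hi
      simp only [Finset.coe_filter, Finset.mem_coe, Set.mem_setOf_eq, Finset.mem_filter, Finset.mem_range] at hi ⊢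
      refine ⟨by omega, ?_⟩
      have : i - 1 + 1 = i := by omega
      rw [this]; exact hi.2.2
    · intro a ha b hb h
      simp only [Finset.coe_filter, Set.mem_setOf_eq, Finset.mem_range] at ha hb
      simp only at h
      omega
  omega

lemma freq_defect {A : Type*} [Fintype A] [DecidableEq A] (k : ℕ) (ω : List A)
    (hn : k + 2 ≤ ω.length) (ψ : Fin (k + 1) → A) :
    |∑ a : A, freq (k + 2) ω (Fin.cons a ψ) - ∑ a : A, freq (k + 2) ω (Fin.snoc ψ a)|
      ≤ 1 / ((ω.length - (k + 2) + 1 : ℕ) : ℝ) := by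
  set N := ω.length - (k + 2) + 1 with hNdef
  have hN : (0:ℝ) < (N : ℕ) := by positivity
  unfold freq
  rw [← Finset.sum_div, ← Finset.sum_div, ← Nat.cast_sum, ← Nat.cast_sum,
    sum_occ_cons k ω hn ψ, sum_occ_snoc k ω hn ψ]
  set p : ℕ → Prop := fun m => ∀ j : Fin (k + 1), ω[m + (j : ℕ)]? = some (ψ j) with hp
  have hA : ((Finset.range N).filter (fun i => ∀ j : Fin (k + 1),
      ω[i + 1 + (j : ℕ)]? = some (ψ j))) = ((Finset.range N).filter fun i => p (i + 1)) := by
    rfl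
  rw [hA]
  set x := ((Finset.range N).filter fun i => p (i + 1)).card
  set y := ((Finset.range N).filter p).card
  have h1 : x ≤ y + 1 := cardA_le p N
  have h2 : y ≤ x + 1 := cardB_le p N
  rw [div_sub_div_same, abs_div, abs_of_pos hN, div_le_div_iff₀ hN hN, one_mul]
  have habs : |(x:ℝ) - (y:ℝ)| ≤ 1 := by
    have hx : (x:ℝ) ≤ (y:ℝ) + 1 := by exact_mod_cast h1
    have hy : (y:ℝ) ≤ (x:ℝ) + 1 := by exact_mod_cast h2
    rw [abs_sub_le_iff]
    constructor <;> linarith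
  calc |(x:ℝ) - (y:ℝ)| * (N:ℝ) ≤ 1 * (N:ℝ) :=
        mul_le_mul_of_nonneg_right habs (le_of_lt hN)
    _ = (N:ℝ) := one_mul _

theorem stmt1 {A : Type*} [Fintype A] [DecidableEq A] (k : ℕ)
    (Γ : Set ((Fin (k + 2) → A) → ℝ))
    (hP : ∀ η ∈ Γ, IsProbVec η) (hcl : IsClosed Γ)
    (hdisj : ∀ η ∈ Γ, ¬ ShiftInv k η) :
    {ω : List A | k + 2 ≤ ω.length ∧ freq (k + 2) ω ∈ Γ}.Finite := by
  classical
  rcases Set.eq_empty_or_nonempty Γ with hΓ | hΓne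
  · have : {ω : List A | k + 2 ≤ ω.length ∧ freq (k + 2) ω ∈ Γ} = ∅ := by
      ext ω; simp [hΓ]
    rw [this]; exact Set.finite_empty
  have hΓK : Γ ⊆ Set.pi Set.univ (fun _ : Fin (k + 2) → A => Set.Icc (0:ℝ) 1) := by
    intro η hη φ _
    obtain ⟨hpos, hsum⟩ := hP η hη
    refine ⟨hpos φ, ?_⟩
    rw [← hsum]
    exact Finset.single_le_sum (fun ψ _ => hpos ψ) (Finset.mem_univ φ)
  have hcomp : IsCompact Γ :=
    IsCompact.of_isClosed_subset (isCompact_univ_pi fun _ => isCompact_Icc) hcl hΓK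
  set F : ((Fin (k + 2) → A) → ℝ) → ℝ := fun η =>
    ∑ ψ : Fin (k + 1) → A, |∑ a : A, η (Fin.cons a ψ) - ∑ a : A, η (Fin.snoc ψ a)| with hF
  have hFcont : Continuous F := by
    apply continuous_finset_sum
    intro ψ _
    have h1 : Continuous fun η : (Fin (k + 2) → A) → ℝ => ∑ a : A, η (Fin.cons a ψ) :=
      continuous_finset_sum _ fun a _ => continuous_apply (Fin.cons a ψ : Fin (k + 2) → A)
    have h2 : Continuous fun η : (Fin (k + 2) → A) → ℝ => ∑ a : A, η (Fin.snoc ψ a) :=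
      continuous_finset_sum _ fun a _ => continuous_apply (Fin.snoc ψ a : Fin (k + 2) → A)
    exact (h1.sub h2).abs
  obtain ⟨η0, hη0, hmin⟩ := hcomp.exists_isMinOn hΓne hFcont.continuousOn
  have hε : 0 < F η0 := by
    have hnsi := hdisj η0 hη0
    unfold ShiftInv at hnsi
    push_neg at hnsi
    obtain ⟨ψ0, hψ0⟩ := hnsi
    exact Finset.sum_pos' (fun _ _ => abs_nonneg _)
      ⟨ψ0, Finset.mem_univ _, abs_pos.mpr (sub_ne_zero.mpr hψ0)⟩
  set ε := F η0 with hεdef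
  set C := (Fintype.card (Fin (k + 1) → A) : ℝ) with hC
  obtain ⟨L, hL⟩ := exists_nat_gt (C / ε)
  apply Set.Finite.subset (List.finite_length_le A (k + 1 + L))
  rintro ω ⟨hlen, hmem⟩
  set n := ω.length with hn
  set N := n - (k + 2) + 1 with hN
  have hNpos : (0:ℝ) < (N : ℕ) := by positivity
  have hFle : F (freq (k + 2) ω) ≤ C / N := by
    rw [hF]
    calc ∑ ψ : Fin (k + 1) → A,
          |∑ a : A, freq (k + 2) ω (Fin.cons a ψ) - ∑ a : A, freq (k + 2) ω (Fin.snoc ψ a)|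
        ≤ ∑ _ψ : Fin (k + 1) → A, 1 / ((N : ℕ) : ℝ) :=
          Finset.sum_le_sum fun ψ _ => freq_defect k ω hlen ψ
      _ = C / N := by
          rw [Finset.sum_const, nsmul_eq_mul, Finset.card_univ, mul_one_div]
  have hεle : ε ≤ F (freq (k + 2) ω) := hmin hmem
  have hNle : ((N : ℕ) : ℝ) ≤ C / ε := by
    rw [le_div_iff₀ hε, mul_comm]
    exact (le_div_iff₀ hNpos).mp (hεle.trans hFle)
  have hNL : N ≤ L := by
    by_contra h
    push_neg at h
    have : (L : ℝ) < (N : ℕ) := by exact_mod_cast h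
    linarith
  show ω.length ≤ k + 1 + L
  omega
end

section
/- Let ω = ω_1 ω_2 ⋯ ω_ℓ be a concatenation of ℓ words each of length m ≥ k over a finite alphabet Σ, and let μ_i = fr_{ω_i}^k and μ = (1/ℓ) Σ_{i=1}^ℓ μ_i. Then for every φ ∈ Σ^k, |fr_ω^k(φ) − μ(φ)| ≤ (ℓ−1)(k−1)/(mℓ − k + 1). -/
open Finset

lemma join_get_aux {A : Type*} (m : ℕ) :
    ∀ (L : List (List A)) (i j : ℕ) (w : List A),
      (∀ u ∈ L, u.length = m) → L[i]? = some w → j < m →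
      L.flatten[i * m + j]? = w[j]? := by
  intro L
  induction L with
  | nil => intro i j w _ hw _; simp at hw
  | cons v L ih =>
    intro i j w hlen hw hj
    have hv : v.length = m := hlen v (by simp)
    cases i with
    | zero =>
      simp only [List.getElem?_cons_zero] at hw
      cases hw
      rw [List.flatten_cons, Nat.zero_mul, Nat.zero_add,
        List.getElem?_append_left (by rw [hv]; exact hj)]
    | succ i' =>
      simp only [List.getElem?_cons_succ] at hw
      rw [List.flatten_cons, List.getElem?_append_right (by rw [hv]; nlinarith [Nat.zero_le (i' * m)])]
      have : (i' + 1) * m + j - v.length = i' * m + j := by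
        rw [hv]; ring_nf; omega
      rw [this]
      exact ih i' j w (fun u hu => hlen u (by simp [hu])) hw hj

lemma occ_le {A : Type*} [DecidableEq A] (k : ℕ) (ω : List A) (φ : Fin k → A) :
    occCount k ω φ ≤ ω.length - k + 1 := by
  classical
  calc occCount k ω φ ≤ (Finset.range (ω.length - k + 1)).card := Finset.card_filter_le _ _
  _ = ω.length - k + 1 := Finset.card_range _

lemma occ_bounds {A : Type*} [DecidableEq A] (k m : ℕ) (hk : 1 ≤ k) (hkm : k ≤ m)
    (L : List (List A)) (hℓ : 1 ≤ L.length) (hlen : ∀ w ∈ L, w.length = m)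
    (φ : Fin k → A) :
    (∑ i : Fin L.length, occCount k (L.get i) φ) ≤ occCount k L.flatten φ ∧
    occCount k L.flatten φ ≤ (∑ i : Fin L.length, occCount k (L.get i) φ)
      + (L.length - 1) * (k - 1) := by
  classical
  set ℓ := L.length with hℓdef
  have hm : 0 < m := lt_of_lt_of_le hk hkm
  have hjlen : L.flatten.length = ℓ * m := by
    rw [List.length_flatten]
    have : L.map List.length = List.replicate ℓ m := by
      apply List.eq_replicate_iff.mpr
      constructor
      · simp [hℓdef]
      · intro b hb
        simp only [List.mem_map] at hb
        obtain ⟨w, hw, rfl⟩ := hb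
        exact hlen w hw
    rw [this, List.sum_replicate, smul_eq_mul, mul_comm]
  -- the set of matching positions in the join
  set P : Finset ℕ := (Finset.range (ℓ * m - k + 1)).filter
      (fun p => ∀ t : Fin k, L.flatten[p + (t : ℕ)]? = some (φ t)) with hP
  have hoccj : occCount k L.flatten φ = P.card := by
    rw [occCount, hjlen]
  -- blocks
  set B : Fin ℓ → Finset ℕ := fun i =>
    ((Finset.range (m - k + 1)).filter
      (fun j => ∀ t : Fin k, (L.get i)[j + (t : ℕ)]? = some (φ t))).image
      (fun j => (i : ℕ) * m + j) with hB
  have hgetlen : ∀ i : Fin ℓ, (L.get i).length = m := fun i => hlen _ (L.get_mem _)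
  have hcardB : ∀ i : Fin ℓ, (B i).card = occCount k (L.get i) φ := by
    intro i
    rw [hB]
    rw [Finset.card_image_of_injective _ (add_right_injective _)]
    rw [occCount, hgetlen i]
  -- correspondence of matching conditions
  have hmatch : ∀ (i : Fin ℓ) (j : ℕ), j ≤ m - k →
      ((∀ t : Fin k, L.flatten[(i : ℕ) * m + j + (t : ℕ)]? = some (φ t)) ↔
      (∀ t : Fin k, (L.get i)[j + (t : ℕ)]? = some (φ t))) := by
    intro i j hj
    have key : ∀ t : Fin k, L.flatten[(i : ℕ) * m + j + (t : ℕ)]?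
        = (L.get i)[j + (t : ℕ)]? := by
      intro t
      rw [add_assoc]
      exact join_get_aux m L i (j + (t : ℕ)) (L.get i) hlen
        (by simp) (by omega)
    constructor
    · intro h t; rw [← key t]; exact h t
    · intro h t; rw [key t]; exact h t
  -- B i ⊆ P
  have hBP : ∀ i : Fin ℓ, B i ⊆ P := by
    intro i p hp
    rw [hB] at hp
    simp only [Finset.mem_image, Finset.mem_filter, Finset.mem_range] at hp
    obtain ⟨j, ⟨hjr, hjm⟩, rfl⟩ := hp
    have hj : j ≤ m - k := by omega
    rw [hP, Finset.mem_filter, Finset.mem_range]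
    constructor
    · have h1 : ((i : ℕ) + 1) * m ≤ ℓ * m := Nat.mul_le_mul_right _ i.isLt
      have h2 : ((i : ℕ) + 1) * m = (i : ℕ) * m + m := by ring
      omega
    · exact (hmatch i j hj).mpr hjm
  -- disjointness
  have hdisj : ∀ i ∈ (Finset.univ : Finset (Fin ℓ)), ∀ i' ∈ (Finset.univ : Finset (Fin ℓ)),
      i ≠ i' → Disjoint (B i) (B i') := by
    intro i _ i' _ hne
    rw [Finset.disjoint_left]
    intro p hp hp'
    rw [hB] at hp hp'
    simp only [Finset.mem_image, Finset.mem_filter, Finset.mem_range] at hp hp'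
    obtain ⟨j, ⟨hjr, _⟩, hje⟩ := hp
    obtain ⟨j', ⟨hjr', _⟩, hje'⟩ := hp'
    apply hne
    have hdiv : (i : ℕ) = (i' : ℕ) := by
      have e1 : ((i : ℕ) * m + j) / m = (i : ℕ) := by
        rw [mul_comm, Nat.mul_add_div hm, Nat.div_eq_of_lt (by omega), add_zero]
      have e2 : ((i' : ℕ) * m + j') / m = (i' : ℕ) := by
        rw [mul_comm, Nat.mul_add_div hm, Nat.div_eq_of_lt (by omega), add_zero]
      rw [← e1, ← e2, hje, hje']
    exact Fin.ext hdiv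
  have hsum : ∑ i : Fin ℓ, occCount k (L.get i) φ = (Finset.univ.biUnion B).card := by
    rw [Finset.card_biUnion hdisj]
    exact Finset.sum_congr rfl (fun i _ => (hcardB i).symm)
  -- lower bound
  have hlow : Finset.univ.biUnion B ⊆ P := by
    intro p hp
    rw [Finset.mem_biUnion] at hp
    obtain ⟨i, _, hp⟩ := hp
    exact hBP i hp
  -- crossing set
  set C : Finset ℕ := (Finset.range (ℓ * m - k + 1)).filter (fun p => m - k < p % m) with hC
  have hPsub : P ⊆ Finset.univ.biUnion B ∪ C := by
    intro p hp
    rw [hP, Finset.mem_filter, Finset.mem_range] at hp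
    obtain ⟨hpr, hpm⟩ := hp
    by_cases hcase : p % m ≤ m - k
    · apply Finset.mem_union_left
      rw [Finset.mem_biUnion]
      have hmlm : m ≤ ℓ * m := Nat.le_mul_of_pos_left m hℓ
      have hplt : p < ℓ * m := by omega
      have hilt : p / m < ℓ := Nat.div_lt_of_lt_mul (by rwa [mul_comm])
      refine ⟨⟨p / m, hilt⟩, Finset.mem_univ _, ?_⟩
      rw [hB]
      simp only [Finset.mem_image, Finset.mem_filter, Finset.mem_range]
      refine ⟨p % m, ⟨by omega, ?_⟩, by rw [mul_comm]; exact Nat.div_add_mod p m⟩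
      have hpe : (p / m) * m + p % m = p := by rw [mul_comm]; exact Nat.div_add_mod p m
      refine (hmatch ⟨p / m, hilt⟩ (p % m) hcase).mp ?_
      intro t
      rw [hpe]
      exact hpm t
    · apply Finset.mem_union_right
      rw [hC, Finset.mem_filter, Finset.mem_range]
      exact ⟨hpr, by omega⟩
  have hcardC : C.card ≤ (ℓ - 1) * (k - 1) := by
    have : C.card ≤ ((Finset.range (ℓ - 1)) ×ˢ (Finset.Ico (m - k + 1) m)).card := by
      apply Finset.card_le_card_of_injOn (fun p => (p / m, p % m))
      · intro p hp
        rw [hC, Finset.mem_coe, Finset.mem_filter, Finset.mem_range] at hp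
        obtain ⟨hpr, hpm⟩ := hp
        rw [Finset.mem_coe, Finset.mem_product, Finset.mem_range, Finset.mem_Ico]
        constructor
        · by_contra hcon
          push_neg at hcon
          have h1 : (ℓ - 1) * m ≤ (p / m) * m := Nat.mul_le_mul_right _ hcon
          have h2 : (p / m) * m + p % m = p := by rw [mul_comm]; exact Nat.div_add_mod p m
          have h3 : (ℓ - 1) * m + m = ℓ * m := by
            have : ℓ - 1 + 1 = ℓ := by omega
            calc (ℓ - 1) * m + m = (ℓ - 1 + 1) * m := by ring
            _ = ℓ * m := by rw [this]
          have h4 : p % m < m := Nat.mod_lt _ hm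
          omega
        · exact ⟨by dsimp only; omega, Nat.mod_lt _ hm⟩
      · intro p hp q hq he
        simp only [Prod.mk.injEq] at he
        have h2 : (p / m) * m + p % m = p := by rw [mul_comm]; exact Nat.div_add_mod p m
        have h3 : (q / m) * m + q % m = q := by rw [mul_comm]; exact Nat.div_add_mod q m
        rw [← h2, ← h3, he.1, he.2]
    rw [Finset.card_product, Finset.card_range, Nat.card_Ico] at this
    have : C.card ≤ (ℓ - 1) * (m - (m - k + 1)) := this
    have he : m - (m - k + 1) = k - 1 := by omega
    rwa [he] at this
  constructor
  · rw [hsum, hoccj]; exact Finset.card_le_card hlow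
  · rw [hsum, hoccj]
    calc P.card ≤ (Finset.univ.biUnion B ∪ C).card := Finset.card_le_card hPsub
    _ ≤ (Finset.univ.biUnion B).card + C.card := Finset.card_union_le _ _
    _ ≤ (Finset.univ.biUnion B).card + (ℓ - 1) * (k - 1) := by omega

lemma real_final (a s d0 lr e : ℝ) (hd0 : 0 < d0) (hl : 1 ≤ lr) (he : 0 ≤ e)
    (hs0 : 0 ≤ s) (hsa : s ≤ a) (hase : a ≤ s + e) (hsld : s ≤ lr * d0) :
    |a / (lr * d0 + e) - (1 / lr) * (s / d0)| ≤ e / (lr * d0 + e) := by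
  have hld : 0 < lr * d0 := mul_pos (lt_of_lt_of_le one_pos hl) hd0
  have hD : 0 < lr * d0 + e := by linarith
  have hmu : (1 / lr) * (s / d0) = s / (lr * d0) := by
    rw [div_mul_div_comm, one_mul]
  rw [hmu, abs_le]
  have h1 : a / (lr * d0 + e) - s / (lr * d0) ≤ e / (lr * d0 + e) := by
    rw [div_sub_div _ _ hD.ne' hld.ne', div_le_div_iff₀ (mul_pos hD hld) hD]
    nlinarith [mul_nonneg (mul_nonneg (by linarith : (0:ℝ) ≤ e - (a - s)) hld.le) hD.le,
      mul_nonneg (mul_nonneg he hs0) hD.le]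
  have h2 : s / (lr * d0) - a / (lr * d0 + e) ≤ e / (lr * d0 + e) := by
    rw [div_sub_div _ _ hld.ne' hD.ne', div_le_div_iff₀ (mul_pos hld hD) hD]
    nlinarith [mul_nonneg (mul_nonneg hld.le (by linarith : (0:ℝ) ≤ a - s)) hD.le,
      mul_nonneg (mul_nonneg he (by linarith : (0:ℝ) ≤ lr * d0 - s)) hD.le]
  exact ⟨by linarith, h1⟩


theorem stmt2 {A : Type*} [Fintype A] [DecidableEq A] (k m : ℕ)
    (hk : 1 ≤ k) (hkm : k ≤ m)
    (L : List (List A)) (hℓ : 1 ≤ L.length) (hlen : ∀ w ∈ L, w.length = m)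
    (φ : Fin k → A) :
    |freq k L.flatten φ - (1 / (L.length : ℝ)) * ∑ i : Fin L.length, freq k (L.get i) φ| ≤
      ((L.length : ℝ) - 1) * ((k : ℝ) - 1) / ((m : ℝ) * (L.length : ℝ) - (k : ℝ) + 1) := by
  classical
  have hm : 0 < m := lt_of_lt_of_le hk hkm
  obtain ⟨hlow, hhigh⟩ := occ_bounds k m hk hkm L hℓ hlen φ
  set ℓ := L.length with hℓdef
  have hjlen : L.flatten.length = ℓ * m := by
    show L.flatten.length = ℓ * m
    rw [List.length_flatten]
    have : L.map List.length = List.replicate ℓ m := by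
      apply List.eq_replicate_iff.mpr
      refine ⟨by simp [hℓdef], ?_⟩
      intro b hb
      simp only [List.mem_map] at hb
      obtain ⟨w, hw, rfl⟩ := hb
      exact hlen w hw
    rw [this, List.sum_replicate, smul_eq_mul, mul_comm]
  have hgetlen : ∀ i : Fin ℓ, (L.get i).length = m := fun i => hlen _ (L.get_mem _)
  have hklm : k ≤ ℓ * m := le_trans hkm (Nat.le_mul_of_pos_left m hℓ)
  set S := ∑ i : Fin ℓ, occCount k (L.get i) φ with hS
  have hSle : S ≤ ℓ * (m - k + 1) := by
    rw [hS]
    calc ∑ i : Fin ℓ, occCount k (L.get i) φ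
        ≤ ∑ _i : Fin ℓ, (m - k + 1) := Finset.sum_le_sum (fun i _ => by
          have := occ_le k (L.get i) φ
          rwa [hgetlen i] at this)
    _ = ℓ * (m - k + 1) := by
        rw [Finset.sum_const, Finset.card_univ, Fintype.card_fin, smul_eq_mul]
  -- real abbreviations
  set a : ℝ := (occCount k L.flatten φ : ℝ) with ha
  set s : ℝ := (S : ℝ) with hsr
  set d0 : ℝ := ((m : ℝ) - (k : ℝ) + 1) with hd0def
  set lr : ℝ := (ℓ : ℝ) with hlr
  set e : ℝ := ((lr : ℝ) - 1) * ((k : ℝ) - 1) with he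
  have hd0cast : ((m - k + 1 : ℕ) : ℝ) = d0 := by
    rw [hd0def]; push_cast [Nat.cast_sub hkm]; ring
  have hDcast : ((ℓ * m - k + 1 : ℕ) : ℝ) = lr * d0 + e := by
    rw [hd0def, he, hlr]; push_cast [Nat.cast_sub hklm]; ring
  have hecast : (((ℓ - 1) * (k - 1) : ℕ) : ℝ) = e := by
    rw [he, hlr]; push_cast [Nat.cast_sub hℓ, Nat.cast_sub hk]; ring
  have hfj : freq k L.flatten φ = a / (lr * d0 + e) := by
    rw [freq, hjlen, hDcast]
  have hfs : ∑ i : Fin ℓ, freq k (L.get i) φ = s / d0 := by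
    have step : ∀ i : Fin ℓ, freq k (L.get i) φ = (occCount k (L.get i) φ : ℝ) / d0 := by
      intro i
      rw [freq, hgetlen i, hd0cast]
    rw [Finset.sum_congr rfl (fun i _ => step i), ← Finset.sum_div]
    congr 1
    rw [hsr, hS]
    push_cast
    rfl
  have hd0 : (0:ℝ) < d0 := by
    rw [hd0def]
    have : (k:ℝ) ≤ (m:ℝ) := by exact_mod_cast hkm
    linarith
  have hl : (1:ℝ) ≤ lr := by rw [hlr]; exact_mod_cast hℓ
  have hee : (0:ℝ) ≤ e := by
    rw [he]
    have h1 : (1:ℝ) ≤ (k:ℝ) := by exact_mod_cast hk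
    nlinarith
  have hs0 : (0:ℝ) ≤ s := by rw [hsr]; positivity
  have hsa : s ≤ a := by rw [hsr, ha]; exact_mod_cast hlow
  have hase : a ≤ s + e := by
    rw [hsr, ha, ← hecast]
    push_cast
    exact_mod_cast hhigh
  have hsld : s ≤ lr * d0 := by
    rw [hsr, hlr, hd0def]
    calc (S:ℝ) ≤ ((ℓ * (m - k + 1) : ℕ) : ℝ) := by exact_mod_cast hSle
    _ = (ℓ:ℝ) * ((m:ℝ) - (k:ℝ) + 1) := by push_cast [Nat.cast_sub hkm]; ring
  have hgoalden : (m : ℝ) * (lr : ℝ) - (k : ℝ) + 1 = lr * d0 + e := by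
    rw [hd0def, he]; ring
  rw [hfj, hfs, hgoalden]
  exact real_final a s d0 lr e hd0 hl hee hs0 hsa hase hsld
end

section
/- Let Γ ⊆ P(Σ^k) be convex, let ε > 0, and let Γ_ε = { η ∈ P(Σ^k) : inf_{μ ∉ Γ} ‖η − μ‖_∞ > ε }. If m > (k−1)/ε, then every word that is a concatenation of length-m words each with empirical k-tuple frequency in Γ_ε, itself has empirical k-tuple frequency in Γ. That is, R_m(Γ_ε) ⊆ B(Γ) where R_m(Γ_ε) = (B(Γ_ε) ∩ Σ^m)^*. -/
open Finset

def headCount {A : Type*} [DecidableEq A] (k : ℕ) (w r : List A) (φ : Fin k → A) : ℕ :=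
  ((Finset.range w.length).filter
    (fun i => ∀ j : Fin k, (w ++ r)[i + (j : ℕ)]? = some (φ j))).card

lemma occ_append {A : Type*} [DecidableEq A] (k : ℕ) (w r : List A) (hr : k ≤ r.length)
    (φ : Fin k → A) :
    occCount k (w ++ r) φ = headCount k w r φ + occCount k r φ := by
  unfold occCount headCount
  have h1 : (w ++ r).length - k + 1 = w.length + (r.length - k + 1) := by
    rw [List.length_append]; omega
  rw [h1, Finset.range_add, Finset.filter_union,
    Finset.card_union_of_disjoint, Finset.filter_map, Finset.card_map]
  · congr 1
    apply congrArg Finset.card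
    apply Finset.filter_congr
    intro q hq
    simp only [Function.comp_apply, addLeftEmbedding_apply]
    constructor
    · intro h j
      have := h j
      rwa [add_assoc, List.getElem?_append_right (Nat.le_add_right _ _),
        Nat.add_sub_cancel_left] at this
    · intro h j
      rw [add_assoc, List.getElem?_append_right (Nat.le_add_right _ _),
        Nat.add_sub_cancel_left]
      exact h j
  · apply Finset.disjoint_filter_filter
    rw [Finset.disjoint_left]
    intro x hx hx2
    simp only [Finset.mem_range] at hx
    simp only [Finset.mem_map, Finset.mem_range, addLeftEmbedding_apply] at hx2
    obtain ⟨q, _, rfl⟩ := hx2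
    omega


lemma head_lower {A : Type*} [DecidableEq A] (k : ℕ) (hk : 1 ≤ k) (w r : List A)
    (hw : k ≤ w.length) (φ : Fin k → A) :
    occCount k w φ ≤ headCount k w r φ := by
  unfold occCount headCount
  apply Finset.card_le_card
  intro p hp
  simp only [Finset.mem_filter, Finset.mem_range] at hp ⊢
  refine ⟨by omega, fun j => ?_⟩
  have hj := j.isLt
  rw [List.getElem?_append_left (by omega : p + (j : ℕ) < w.length)]
  exact hp.2 j

lemma head_upper {A : Type*} [DecidableEq A] (k : ℕ) (hk : 1 ≤ k) (w r : List A)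
    (hw : k ≤ w.length) (φ : Fin k → A) :
    headCount k w r φ ≤ occCount k w φ + (k - 1) := by
  unfold occCount headCount
  have hsplit : Finset.range w.length =
      Finset.range (w.length - k + 1) ∪ Finset.Ico (w.length - k + 1) w.length := by
    rw [Finset.range_eq_Ico, Finset.range_eq_Ico, Finset.Ico_union_Ico_eq_Ico (Nat.zero_le _) (by omega)]
  rw [hsplit, Finset.filter_union]
  refine le_trans (Finset.card_union_le _ _) (add_le_add ?_ ?_)
  · apply Finset.card_le_card
    intro p hp
    simp only [Finset.mem_filter, Finset.mem_range] at hp ⊢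
    refine ⟨hp.1, fun j => ?_⟩
    have hj := j.isLt
    have := hp.2 j
    rwa [List.getElem?_append_left (by omega : p + (j : ℕ) < w.length)] at this
  · refine le_trans (Finset.card_filter_le _ _) ?_
    rw [Nat.card_Ico]; omega

lemma sum_head {A : Type*} [Fintype A] [DecidableEq A] (k : ℕ) (hk : 1 ≤ k) (w r : List A)
    (hr : k ≤ r.length) :
    ∑ φ : Fin k → A, headCount k w r φ = w.length := by
  unfold headCount
  simp only [Finset.card_filter]
  rw [Finset.sum_comm]
  have key : ∀ p ∈ Finset.range w.length,
      (∑ φ : Fin k → A, if (∀ j : Fin k, (w ++ r)[p + (j : ℕ)]? = some (φ j)) then 1 else 0)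
        = 1 := by
    intro p hp
    rw [Finset.mem_range] at hp
    have hpf : ∀ j : Fin k, p + (j : ℕ) < (w ++ r).length := by
      intro j; have := j.isLt; rw [List.length_append]; omega
    have hiff : ∀ φ : Fin k → A,
        (∀ j : Fin k, (w ++ r)[p + (j : ℕ)]? = some (φ j)) ↔
          φ = fun j : Fin k => (w ++ r).get ⟨p + (j : ℕ), hpf j⟩ := by
      intro φ
      constructor
      · intro h
        funext j
        have := h j
        rw [List.getElem?_eq_getElem (hpf j)] at this
        exact (Option.some_injective _ this).symm
      · rintro rfl j
        exact List.getElem?_eq_getElem (hpf j)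
    simp only [hiff]
    rw [Finset.sum_ite_eq']
    simp
  rw [Finset.sum_congr rfl key]
  simp


theorem stmt4 {A : Type*} [Fintype A] [DecidableEq A] (k m : ℕ) (hk : 1 ≤ k)
    (Γ : Set ((Fin k → A) → ℝ)) (hΓP : ∀ η ∈ Γ, IsProbVec η) (hconv : Convex ℝ Γ)
    (ε : ℝ) (hε : 0 < ε) (hm : ((k : ℝ) - 1) / ε < (m : ℝ))
    (L : List (List A)) (hL : ∀ w ∈ L, w.length = m ∧ memGammaEps Γ ε (freq k w))
    (hne : L ≠ []) :
    freq k L.flatten ∈ Γ := by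
  -- step 0 : k ≤ m
  have hkm : k ≤ m := by
    by_contra hlt
    push_neg at hlt
    obtain ⟨w0, hw0⟩ := List.exists_mem_of_ne_nil L hne
    obtain ⟨hw0len, ⟨hP, _⟩⟩ := hL w0 hw0
    have hzero : ∀ φ, freq k w0 φ = 0 := by
      intro φ
      have hocc : occCount k w0 φ = 0 := by
        rw [occCount, Finset.card_eq_zero, Finset.filter_eq_empty_iff]
        intro i _ hall
        have h2 := hall ⟨k - 1, by omega⟩
        rw [List.getElem?_eq_none (by simp only [hw0len]; omega)] at h2
        exact Option.some_ne_none _ h2.symm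
      simp [freq, hocc]
    have hsum := hP.2
    rw [Finset.sum_congr rfl (fun φ _ => hzero φ)] at hsum
    simp at hsum
  have hm0 : (0 : ℝ) < (m : ℝ) := by
    have : 0 < m := by omega
    exact_mod_cast this
  have hkε : ((k : ℝ) - 1) / (m : ℝ) < ε := by
    rw [div_lt_iff₀ hm0]
    have := (div_lt_iff₀ hε).mp hm
    linarith
  induction L with
  | nil => exact absurd rfl hne
  | cons w L' ih =>
    obtain ⟨hwlen, hwP, δ, hδε, hδ⟩ := hL w (List.mem_cons_self)
    by_cases hL' : L' = []
    · subst hL'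
      have hj : (([w] : List (List A)).flatten) = w := by simp
      rw [hj]
      by_contra hnot
      have := hδ (freq k w) hwP hnot
      rw [sub_self, norm_zero] at this
      linarith
    · have hL'' : ∀ v ∈ L', v.length = m ∧ memGammaEps Γ ε (freq k v) :=
        fun v hv => hL v (List.mem_cons_of_mem _ hv)
      have hν' : freq k L'.flatten ∈ Γ := ih hL'' hL'
      obtain ⟨J, hJeq⟩ : ∃ J : List A, L'.flatten = J := ⟨_, rfl⟩
      rw [hJeq] at hν'
      have hJlen : k ≤ J.length := by
        obtain ⟨w1, t, hE⟩ : ∃ w1 t, L' = w1 :: t := by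
          cases L' with
          | nil => exact absurd rfl hL'
          | cons a b => exact ⟨a, b, rfl⟩
        have h1 : J.length = w1.length + t.flatten.length := by
          rw [← hJeq, hE]; simp
        have hw1 : w1.length = m := (hL'' w1 (hE ▸ List.mem_cons_self)).1
        omega
      have hjoin : (w :: L').flatten = w ++ J := by rw [← hJeq]; simp
      rw [hjoin]
      have hwk : k ≤ w.length := by omega
      obtain ⟨d, hd⟩ : ∃ d : ℕ, J.length - k + 1 = d := ⟨_, rfl⟩
      have hd1 : 1 ≤ d := by omega
      have hd0 : (0 : ℝ) < (d : ℝ) := by exact_mod_cast hd1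
      have hT0 : (0 : ℝ) < ((m : ℝ) + (d : ℝ)) := by linarith
      have hT : (w ++ J).length - k + 1 = m + d := by
        rw [List.length_append, hwlen]; omega
      have hJfreq : ∀ φ, freq k J φ = (occCount k J φ : ℝ) / (d : ℝ) := by
        intro φ; rw [freq, hd]
      have hnum : ∀ φ, freq k (w ++ J) φ =
          ((headCount k w J φ : ℝ) + (occCount k J φ : ℝ)) / ((m : ℝ) + (d : ℝ)) := by
        intro φ
        rw [freq, occ_append k w J hJlen φ, hT]
        push_cast
        ring
      obtain ⟨ξ, hξ⟩ : ∃ ξ : (Fin k → A) → ℝ,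
          ξ = fun φ => (headCount k w J φ : ℝ) / (m : ℝ) := ⟨_, rfl⟩
      -- ξ is a probability vector
      have hξP : IsProbVec ξ := by
        constructor
        · intro φ; rw [hξ]; positivity
        · rw [hξ]
          rw [← Finset.sum_div, ← Nat.cast_sum, sum_head k hk w J hJlen, hwlen,
            div_self hm0.ne']
      -- ξ is within (k-1)/m of freq k w
      obtain ⟨e, he⟩ : ∃ e : ℕ, w.length - k + 1 = e := ⟨_, rfl⟩
      have he1 : 1 ≤ e := by omega
      have he0 : (0 : ℝ) < (e : ℝ) := by exact_mod_cast he1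
      have hmeN : m = e + (k - 1) := by omega
      have hme : (m : ℝ) = (e : ℝ) + ((k : ℝ) - 1) := by
        rw [hmeN]
        push_cast [Nat.cast_sub hk]
        ring
      have hk1 : (0 : ℝ) ≤ (k : ℝ) - 1 := by
        have : (1 : ℝ) ≤ (k : ℝ) := by exact_mod_cast hk
        linarith
      have hnorm : ‖freq k w - ξ‖ ≤ ((k : ℝ) - 1) / (m : ℝ) := by
        rw [pi_norm_le_iff_of_nonneg (by positivity)]
        intro φ
        have hlow := head_lower k hk w J hwk φ
        have hup := head_upper k hk w J hwk φ
        have hoccle := occ_le k w φ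
        have hlowR : (occCount k w φ : ℝ) ≤ (headCount k w J φ : ℝ) := by exact_mod_cast hlow
        have hupR : (headCount k w J φ : ℝ) ≤ (occCount k w φ : ℝ) + ((k : ℝ) - 1) := by
          have h2 : (headCount k w J φ : ℝ) ≤ ((occCount k w φ + (k - 1) : ℕ) : ℝ) := by
            exact_mod_cast hup
          rw [Nat.cast_add, Nat.cast_sub hk] at h2
          push_cast at h2
          linarith
        have hoccleN : occCount k w φ ≤ e := he ▸ hoccle
        have hoccleR : (occCount k w φ : ℝ) ≤ (e : ℝ) := by exact_mod_cast hoccleN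
        simp only [Pi.sub_apply, hξ, freq, he, Real.norm_eq_abs]
        rw [abs_sub_le_iff]
        constructor
        · rw [div_sub_div _ _ he0.ne' hm0.ne', div_le_div_iff₀ (by positivity) hm0]
          have h1 : (occCount k w φ : ℝ) * (m : ℝ) - (e : ℝ) * (headCount k w J φ : ℝ)
              ≤ ((k : ℝ) - 1) * (e : ℝ) := by
            nlinarith [mul_nonneg (sub_nonneg.mpr hlowR) he0.le,
              mul_nonneg (sub_nonneg.mpr hoccleR) hk1]
          have h2 := mul_le_mul_of_nonneg_right h1 hm0.le
          linarith
        · rw [div_sub_div _ _ hm0.ne' he0.ne', div_le_div_iff₀ (by positivity) hm0]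
          have h1 : (headCount k w J φ : ℝ) * (e : ℝ) - (m : ℝ) * (occCount k w φ : ℝ)
              ≤ ((k : ℝ) - 1) * (e : ℝ) := by
            nlinarith [mul_nonneg (sub_nonneg.mpr hupR) he0.le,
              mul_nonneg (Nat.cast_nonneg (occCount k w φ)) hk1]
          have h2 := mul_le_mul_of_nonneg_right h1 hm0.le
          linarith
      -- hence ξ ∈ Γ
      have hξΓ : ξ ∈ Γ := by
        by_contra hnot
        have hge := hδ ξ hξP hnot
        have : δ ≤ ((k : ℝ) - 1) / (m : ℝ) := le_trans hge hnorm
        linarith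
      -- conclude by convexity
      have key : ∀ a b : ℝ, (a + b) / ((m : ℝ) + (d : ℝ)) =
          ((m : ℝ) / ((m : ℝ) + (d : ℝ))) * (a / (m : ℝ))
            + ((d : ℝ) / ((m : ℝ) + (d : ℝ))) * (b / (d : ℝ)) := by
        intro a b
        field_simp
      have hfun : freq k (w ++ J) =
          ((m : ℝ) / ((m : ℝ) + (d : ℝ))) • ξ
            + ((d : ℝ) / ((m : ℝ) + (d : ℝ))) • freq k J := by
        funext φ
        simp only [Pi.add_apply, Pi.smul_apply, smul_eq_mul, hξ]
        rw [hnum φ, hJfreq φ, key]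
      have ha : 0 ≤ (m : ℝ) / ((m : ℝ) + (d : ℝ)) := by positivity
      have hb : 0 ≤ (d : ℝ) / ((m : ℝ) + (d : ℝ)) := by positivity
      have hab : (m : ℝ) / ((m : ℝ) + (d : ℝ)) + (d : ℝ) / ((m : ℝ) + (d : ℝ)) = 1 := by
        rw [← add_div, div_self hT0.ne']
      rw [hfun]
      exact hconv hξΓ hν' ha hb hab
end

section
/- Let ω ∈ Σ^n with n ≥ 3m − 2 and m ≥ k, and suppose every length-m contiguous subword ω_i (i = 1,…,n−m+1) has empirical k-tuple frequency μ_i. Let μ = (1/(n−m+1)) Σ_i μ_i. Then for every φ ∈ Σ^k, |fr_ω^k(φ) − μ(φ)| ≤ (2m−2)(m−k)/(n−k+1). -/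
open Finset

lemma occCount_window {A : Type*} [DecidableEq A] (k m i : ℕ) (hk : 1 ≤ k) (hkm : k ≤ m)
    (ω : List A) (him : i + m ≤ ω.length) (φ : Fin k → A) :
    occCount k ((ω.drop i).take m) φ =
      ((Finset.range (m - k + 1)).filter
        (fun j => ∀ l : Fin k, ω[i + j + (l : ℕ)]? = some (φ l))).card := by
  have hlen : ((ω.drop i).take m).length = m := by
    rw [List.length_take, List.length_drop]; omega
  unfold occCount
  rw [hlen]
  congr 1
  apply Finset.filter_congr
  intro j hj
  rw [Finset.mem_range] at hj
  refine forall_congr' fun l => ?_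
  have hjl : j + (l : ℕ) < m := by have := l.isLt; omega
  rw [List.getElem?_take_of_lt hjl, List.getElem?_drop, ← add_assoc]

lemma real_key (Nr Sr Kr Rr Jr ar : ℝ) (hK : 0 < Kr) (hR : 0 < Rr) (hJ : 0 < Jr)
    (hN0 : 0 ≤ Nr) (hS0 : 0 ≤ Sr) (ha0 : 0 ≤ ar)
    (h1 : Sr ≤ Jr * Nr) (h2 : Jr * Nr ≤ Sr + Jr * ar)
    (h3 : Nr ≤ Kr) (h5 : Kr = Rr + ar) :
    |Nr / Kr - Sr / (Rr * Jr)| ≤ ar / Rr := by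
  have hRJ : 0 < Rr * Jr := mul_pos hR hJ
  rw [abs_sub_le_iff]
  subst h5
  constructor
  · rw [div_sub_div _ _ hK.ne' hRJ.ne', div_le_div_iff₀ (by positivity) hR]
    nlinarith [mul_le_mul_of_nonneg_right (mul_le_mul_of_nonneg_left h2 hK.le) hR.le,
      mul_nonneg (mul_nonneg (mul_nonneg ha0 hJ.le) hN0) hR.le,
      mul_nonneg (mul_nonneg (mul_nonneg ha0 hJ.le) ha0) hR.le]
  · rw [div_sub_div _ _ hRJ.ne' hK.ne', div_le_div_iff₀ (by positivity) hR]
    nlinarith [mul_le_mul_of_nonneg_right (mul_le_mul_of_nonneg_left h1 hK.le) hR.le,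
      mul_le_mul_of_nonneg_right (mul_le_mul_of_nonneg_left h3 (mul_nonneg (mul_nonneg ha0 hJ.le) hR.le)) hR.le,
      mul_nonneg (mul_nonneg (mul_nonneg ha0 hJ.le) hN0) hR.le]

theorem stmt7 {A : Type*} [Fintype A] [DecidableEq A] (k m : ℕ)
    (hk : 1 ≤ k) (hkm : k ≤ m)
    (ω : List A) (hn : 3 * m ≤ ω.length + 2)
    (μ : (Fin k → A) → ℝ)
    (hμ : ∀ φ, μ φ = (1 / ((ω.length - m + 1 : ℕ) : ℝ)) *
      ∑ i ∈ Finset.range (ω.length - m + 1), freq k ((ω.drop i).take m) φ)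
    (φ : Fin k → A) :
    |freq k ω φ - μ φ| ≤
      (2 * (m : ℝ) - 2) * ((m : ℝ) - (k : ℝ)) / ((ω.length : ℝ) - (k : ℝ) + 1) := by
  have hmn : m ≤ ω.length := by omega
  have hkn : k ≤ ω.length := hkm.trans hmn
  set n := ω.length with hvn
  set N := occCount k ω φ with hN
  have hNle : N ≤ n - k + 1 := by
    have := Finset.card_filter_le (Finset.range (n - k + 1))
      (fun i => ∀ j : Fin k, ω[i + (j : ℕ)]? = some (φ j))
    simpa [hN, occCount] using this
  set B : ℕ → ℕ := fun j => ((Finset.range (n - m + 1)).filter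
      (fun i => ∀ l : Fin k, ω[i + j + (l : ℕ)]? = some (φ l))).card with hB
  -- upper bound on B j
  have hBub : ∀ j, j ≤ m - k → B j ≤ N := by
    intro j hj
    rw [hN, hB]
    show _ ≤ (Finset.filter _ _).card
    apply Finset.card_le_card_of_injOn (fun i => i + j)
    · intro i hi
      simp only [Finset.mem_coe, Finset.mem_filter, Finset.mem_range] at hi ⊢
      exact ⟨by omega, hi.2⟩
    · intro x hx y hy hxy
      simp only [add_left_inj] at hxy
      exact hxy
  -- lower bound on B j
  have hBlb : ∀ j, j ≤ m - k → N ≤ B j + (m - k) := by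
    intro j hj
    have h1 : ((Finset.range (n - k + 1)).filter
        (fun q => (∀ l : Fin k, ω[q + (l : ℕ)]? = some (φ l)) ∧ j ≤ q ∧ q ≤ n - m + j)).card
        ≤ B j := by
      rw [hB]
      apply Finset.card_le_card_of_injOn (fun q => q - j)
      · intro q hq
        simp only [Finset.mem_coe, Finset.mem_filter, Finset.mem_range] at hq ⊢
        obtain ⟨hq1, hq2, hq3, hq4⟩ := hq
        refine ⟨by omega, fun l => ?_⟩
        have hqe : q - j + j = q := by omega
        rw [hqe]
        exact hq2 l
      · intro x hx y hy hxy
        have hxy' : x - j = y - j := hxy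
        simp only [Finset.coe_filter, Set.mem_setOf_eq, Finset.mem_range] at hx hy
        omega
    have h2 : ((Finset.range (n - k + 1)).filter
        (fun q => (∀ l : Fin k, ω[q + (l : ℕ)]? = some (φ l)) ∧ ¬(j ≤ q ∧ q ≤ n - m + j))).card
        ≤ m - k := by
      have hsub : (Finset.range (n - k + 1)).filter
          (fun q => (∀ l : Fin k, ω[q + (l : ℕ)]? = some (φ l)) ∧ ¬(j ≤ q ∧ q ≤ n - m + j))
          ⊆ Finset.range j ∪ Finset.Ioc (n - m + j) (n - k) := by
        intro q hq
        simp only [Finset.mem_filter, Finset.mem_range, Finset.mem_union, Finset.mem_Ioc,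
          not_and, not_le] at hq ⊢
        omega
      calc _ ≤ (Finset.range j ∪ Finset.Ioc (n - m + j) (n - k)).card := Finset.card_le_card hsub
        _ ≤ (Finset.range j).card + (Finset.Ioc (n - m + j) (n - k)).card := Finset.card_union_le _ _
        _ = j + (n - k - (n - m + j)) := by rw [Finset.card_range, Nat.card_Ioc]
        _ ≤ m - k := by omega
    rw [← Finset.filter_filter] at h1 h2
    have h3 := Finset.card_filter_add_card_filter_not
      (s := (Finset.range (n - k + 1)).filter
        (fun q => ∀ l : Fin k, ω[q + (l : ℕ)]? = some (φ l)))
      (p := fun q => j ≤ q ∧ q ≤ n - m + j)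
    have h4 : N = (((Finset.range (n - k + 1)).filter
        (fun q => ∀ l : Fin k, ω[q + (l : ℕ)]? = some (φ l)))).card := rfl
    omega
  -- sum swap
  have hswap : ∑ i ∈ Finset.range (n - m + 1),
      ((Finset.range (m - k + 1)).filter
        (fun j => ∀ l : Fin k, ω[i + j + (l : ℕ)]? = some (φ l))).card
      = ∑ j ∈ Finset.range (m - k + 1), B j := by
    simp only [hB, Finset.card_filter]
    exact Finset.sum_comm
  set Ssum := ∑ j ∈ Finset.range (m - k + 1), B j with hS
  have hub : Ssum ≤ (m - k + 1) * N := by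
    calc Ssum ≤ ∑ _j ∈ Finset.range (m - k + 1), N :=
        Finset.sum_le_sum (fun j hj => hBub j (by rw [Finset.mem_range] at hj; omega))
      _ = (m - k + 1) * N := by rw [Finset.sum_const, Finset.card_range, smul_eq_mul]
  have hlb : (m - k + 1) * N ≤ Ssum + (m - k + 1) * (m - k) := by
    calc (m - k + 1) * N = ∑ _j ∈ Finset.range (m - k + 1), N := by
          rw [Finset.sum_const, Finset.card_range, smul_eq_mul]
      _ ≤ ∑ j ∈ Finset.range (m - k + 1), (B j + (m - k)) :=
        Finset.sum_le_sum (fun j hj => hBlb j (by rw [Finset.mem_range] at hj; omega))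
      _ = Ssum + (m - k + 1) * (m - k) := by
          rw [Finset.sum_add_distrib, Finset.sum_const, Finset.card_range, smul_eq_mul]
  -- evaluate μ φ
  have hwin : ∀ i ∈ Finset.range (n - m + 1), freq k ((ω.drop i).take m) φ =
      (((Finset.range (m - k + 1)).filter
        (fun j => ∀ l : Fin k, ω[i + j + (l : ℕ)]? = some (φ l))).card : ℝ)
        / ((m - k + 1 : ℕ) : ℝ) := by
    intro i hi
    rw [Finset.mem_range] at hi
    have hlen : ((ω.drop i).take m).length = m := by
      rw [List.length_take, List.length_drop]; omega
    unfold freq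
    rw [occCount_window k m i hk hkm ω (by omega) φ, hlen]
  have hJ0 : (0:ℝ) < ((m - k + 1 : ℕ) : ℝ) := by exact_mod_cast Nat.succ_pos _
  have hR0 : (0:ℝ) < ((n - m + 1 : ℕ) : ℝ) := by exact_mod_cast Nat.succ_pos _
  have hK0 : (0:ℝ) < ((n - k + 1 : ℕ) : ℝ) := by exact_mod_cast Nat.succ_pos _
  have hμφ : μ φ = (Ssum : ℝ) / (((n - m + 1 : ℕ) : ℝ) * ((m - k + 1 : ℕ) : ℝ)) := by
    rw [hμ φ, Finset.sum_congr rfl hwin, ← Finset.sum_div, ← Nat.cast_sum, hswap]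
    field_simp
  have hfreq : freq k ω φ = (N : ℝ) / ((n - k + 1 : ℕ) : ℝ) := rfl
  rw [hfreq, hμφ]
  clear hμ hμφ hfreq hwin hswap hS hB hBub hBlb hN hvn
  clear_value N Ssum B n
  clear B ω
  have key : |(N : ℝ) / ((n - k + 1 : ℕ) : ℝ)
      - (Ssum : ℝ) / (((n - m + 1 : ℕ) : ℝ) * ((m - k + 1 : ℕ) : ℝ))|
      ≤ ((m - k : ℕ) : ℝ) / ((n - m + 1 : ℕ) : ℝ) := by
    apply real_key _ _ _ _ _ _ hK0 hR0 hJ0 (by positivity) (by positivity) (by positivity)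
    · exact_mod_cast hub
    · exact_mod_cast hlb
    · exact_mod_cast hNle
    · have : (n - k + 1 : ℕ) = (n - m + 1) + (m - k) := by omega
      exact_mod_cast congrArg (fun x : ℕ => (x : ℝ)) this
  refine key.trans ?_
  have hcast1 : ((m : ℝ) - (k : ℝ)) = ((m - k : ℕ) : ℝ) := by
    rw [Nat.cast_sub hkm]
  have hcast2 : ((n : ℝ) - (k : ℝ) + 1) = ((n - k + 1 : ℕ) : ℝ) := by
    push_cast [Nat.cast_sub hkn]; ring
  rw [hcast1, hcast2]
  rcases Nat.eq_zero_or_pos (m - k) with hz | hpos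
  · rw [hz]
    simp
  · have hm2 : 2 ≤ m := by omega
    have hnat : (n - k + 1) ≤ (2 * m - 2) * (n - m + 1) := by
      have h2 : 2 * (n - m + 1) ≤ (2 * m - 2) * (n - m + 1) :=
        Nat.mul_le_mul_right _ (by omega)
      omega
    rw [div_le_div_iff₀ hR0 hK0]
    have hc := (Nat.cast_le (α := ℝ)).mpr hnat
    have ha0 : (0:ℝ) ≤ ((m - k : ℕ) : ℝ) := by positivity
    push_cast [Nat.cast_sub (show 2 ≤ 2 * m by omega)] at hc ⊢
    nlinarith [mul_le_mul_of_nonneg_left hc ha0]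
end

section
/- Let Γ ⊆ P(Σ^k) be convex, ε > 0, and m ≥ k sufficiently large (specifically large enough that (mk + 2(m−k+1))/(m² − k + 1) ≤ ε). Then R_m(Γ_ε) ⊆ N_{m²}(Γ): every length-m² contiguous subword of a concatenation of length-m words each with empirical frequency in Γ_ε has empirical k-tuple frequency in Γ. -/
open Finset

lemma join_get_uniform {A : Type*} {m : ℕ} :
    ∀ (L : List (List A)), (∀ u ∈ L, u.length = m) →
    ∀ t s, t < L.length → s < m →
      L.flatten[t * m + s]? = (L.getD t [])[s]? := by
  intro L
  induction L with
  | nil => intro _ t s ht _; simp at ht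
  | cons u L ih =>
    intro h t s ht hs
    have hu : u.length = m := h u (by simp)
    cases t with
    | zero =>
      simp only [List.flatten_cons, Nat.zero_mul, Nat.zero_add, List.getD_cons_zero]
      exact List.getElem?_append_left (by omega)
    | succ t =>
      have harith : (t + 1) * m + s = u.length + (t * m + s) := by rw [hu]; ring
      simp only [List.flatten_cons, List.getD_cons_succ]
      rw [harith, List.getElem?_append_right (by omega)]
      have h2 : u.length + (t * m + s) - u.length = t * m + s := by omega
      rw [h2]
      exact ih (fun v hv => h v (List.mem_cons_of_mem _ hv)) t s (by simpa using ht) hs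

lemma sum_occCount {A : Type*} [Fintype A] [DecidableEq A] {k : ℕ} (hk : 1 ≤ k)
    (u : List A) (hu : k ≤ u.length) :
    ∑ φ : Fin k → A, occCount k u φ = u.length - k + 1 := by
  classical
  have hne : u ≠ [] := by
    intro h; subst h; simp at hu; omega
  obtain ⟨d, _⟩ : ∃ d : A, d ∈ u := List.exists_mem_of_ne_nil u hne
  set n := u.length - k + 1 with hn
  have key : ∀ p ∈ Finset.range n, ∀ j : Fin k, p + (j : ℕ) < u.length := by
    intro p hp j
    simp only [Finset.mem_range] at hp
    have := j.isLt
    omega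
  have hcard := Finset.card_eq_sum_card_fiberwise
    (f := fun p => (fun j : Fin k => u.getD (p + (j : ℕ)) d)) (s := Finset.range n)
    (t := Finset.univ) (fun x _ => Finset.mem_univ _)
  rw [Finset.card_range] at hcard
  rw [hcard]
  apply Finset.sum_congr rfl
  intro φ _
  unfold occCount
  rw [← hn]
  congr 1
  apply Finset.filter_congr
  intro p hp
  constructor
  · intro hocc
    funext j
    have hlt := key p hp j
    have h1 := hocc j
    rw [List.getElem?_eq_getElem hlt] at h1
    show u.getD (p + (j : ℕ)) d = φ j
    rw [List.getD_eq_getElem?_getD, List.getElem?_eq_getElem hlt]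
    simpa using h1
  · intro hfp j
    have hlt := key p hp j
    have h1 : u.getD (p + (j : ℕ)) d = φ j := congrFun hfp j
    rw [List.getD_eq_getElem?_getD, List.getElem?_eq_getElem hlt] at h1
    rw [List.getElem?_eq_getElem hlt]
    simpa using h1
set_option maxHeartbeats 1000000 in
theorem stmt9 {A : Type*} [Fintype A] [DecidableEq A] (k m : ℕ)
    (hk : 1 ≤ k) (hkm : k ≤ m)
    (Γ : Set ((Fin k → A) → ℝ)) (hΓP : ∀ η ∈ Γ, IsProbVec η) (hconv : Convex ℝ Γ)
    (ε : ℝ) (hε : 0 < ε)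
    (hbound : ((m : ℝ) * (k : ℝ) + 2 * ((m : ℝ) - (k : ℝ) + 1)) /
        ((m : ℝ) ^ 2 - (k : ℝ) + 1) ≤ ε)
    (L : List (List A)) (hL : ∀ w ∈ L, w.length = m ∧ memGammaEps Γ ε (freq k w)) :
    ∀ i, i + m ^ 2 ≤ L.flatten.length → freq k ((L.flatten.drop i).take (m ^ 2)) ∈ Γ := by
  classical
  intro i hi
  have hm : 1 ≤ m := le_trans hk hkm
  have hmsq : m ≤ m ^ 2 := by nlinarith
  have hkm2 : k ≤ m ^ 2 := le_trans hkm hmsq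
  have hjlen : L.flatten.length = L.length * m := by
    rw [List.length_flatten]
    have hrep : L.map List.length = List.replicate L.length m := by
      apply List.eq_replicate_iff.mpr
      refine ⟨by simp, ?_⟩
      intro b hb
      obtain ⟨u, hu, rfl⟩ := List.mem_map.mp hb
      exact (hL u hu).1
    rw [hrep, List.sum_replicate, smul_eq_mul]
  rw [hjlen] at hi
  set W : List A := (L.flatten.drop i).take (m ^ 2) with hW
  have hWlen : W.length = m ^ 2 := by
    rw [hW, List.length_take, List.length_drop, hjlen]
    omega
  have hWget : ∀ p, p < m ^ 2 → W[p]? = L.flatten[i + p]? := by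
    intro p hp
    rw [hW, List.getElem?_take_of_lt hp, List.getElem?_drop]
  set n := m ^ 2 - k + 1 with hn
  set M := m - k + 1 with hM
  have hMk : M + k = m + 1 := by omega
  have hnk : n + k = m ^ 2 + 1 := by omega
  have hn0 : 0 < n := by omega
  have hM0 : 0 < M := by omega
  have hMm : M ≤ m := by omega
  set t0 := (i + m - 1) / m with ht0
  set t1 := (i + m ^ 2) / m with ht1
  set F := Finset.Ico t0 t1 with hF
  -- basic block index facts
  have ht0m : i ≤ m * t0 := by
    have h1 := Nat.div_add_mod (i + m - 1) m
    have h2 : (i + m - 1) % m < m := Nat.mod_lt _ (by omega)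
    rw [← ht0] at h1
    omega
  have ht1m : t1 * m ≤ i + m ^ 2 := Nat.div_mul_le_self _ _
  have ht1L : t1 ≤ L.length := by
    rw [ht1]
    calc (i + m ^ 2) / m ≤ L.length * m / m := Nat.div_le_div_right hi
      _ = L.length := Nat.mul_div_cancel _ (by omega)
  have ht1val : t1 = i / m + m := by
    rw [ht1, pow_two, Nat.add_mul_div_right _ _ (show 0 < m by omega)]
  have ht0le : t0 ≤ i / m + 1 := by
    rw [ht0]
    calc (i + m - 1) / m ≤ (i + m) / m := Nat.div_le_div_right (by omega)
      _ = i / m + 1 := Nat.add_div_right _ (by omega)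
  have hqcard : F.card = t1 - t0 := Nat.card_Ico _ _
  have hqm : m - 1 ≤ F.card := by omega
  have hq1 : 1 ≤ F.card := by
    rcases Nat.lt_or_ge m 2 with h2 | h2
    · have hm1 : m = 1 := by omega
      have e0 : t0 = i := by rw [ht0, hm1]; simp
      have e1 : t1 = i + 1 := by rw [ht1val, hm1]; simp
      omega
    · omega
  have hFt : ∀ t ∈ F, i ≤ t * m ∧ t * m + m ≤ i + m ^ 2 ∧ t < L.length := by
    intro t ht
    rw [hF, Finset.mem_Ico] at ht
    refine ⟨?_, ?_, lt_of_lt_of_le ht.2 ht1L⟩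
    · calc i ≤ m * t0 := ht0m
        _ ≤ m * t := Nat.mul_le_mul_left m ht.1
        _ = t * m := Nat.mul_comm _ _
    · calc t * m + m = (t + 1) * m := by ring
        _ ≤ t1 * m := Nat.mul_le_mul_right m ht.2
        _ ≤ i + m ^ 2 := ht1m
  set w : ℕ → List A := fun t => L.getD t [] with hw
  have hwmem : ∀ t, t < L.length → w t ∈ L := by
    intro t ht
    rw [hw]
    simp only
    rw [List.getD_eq_getElem L [] ht]
    exact List.getElem_mem _
  have hwlen : ∀ t, t < L.length → (w t).length = m := fun t ht => (hL _ (hwmem t ht)).1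
  -- the key position correspondence
  have hkey : ∀ t ∈ F, ∀ s, s < M →
      (t * m - i + s < n ∧ ∀ φ : Fin k → A,
        ((∀ j : Fin k, W[t * m - i + s + (j : ℕ)]? = some (φ j)) ↔
         (∀ j : Fin k, (w t)[s + (j : ℕ)]? = some (φ j)))) := by
    intro t ht s hs
    obtain ⟨h1, h2, h3⟩ := hFt t ht
    have hsk : s + k ≤ m := by omega
    refine ⟨by omega, ?_⟩
    intro φ
    have hgets : ∀ j : Fin k, W[t * m - i + s + (j : ℕ)]? = (w t)[s + (j : ℕ)]? := by
      intro j
      have hj : (j : ℕ) < k := j.isLt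
      have hlt : t * m - i + s + (j : ℕ) < m ^ 2 := by omega
      rw [hWget _ hlt]
      have harg : i + (t * m - i + s + (j : ℕ)) = t * m + (s + (j : ℕ)) := by omega
      rw [harg]
      exact join_get_uniform L (fun u hu => (hL u hu).1) t (s + (j : ℕ)) h3 (by omega)
    exact ⟨fun h j => (hgets j) ▸ h j, fun h j => (hgets j).symm ▸ h j⟩
  -- counting setup
  set OccW : (Fin k → A) → Finset ℕ :=
    fun φ => (Finset.range n).filter
      (fun p => ∀ j : Fin k, W[p + (j : ℕ)]? = some (φ j)) with hOccW
  set c : ℕ → (Fin k → A) → ℕ := fun t φ => occCount k (w t) φ with hc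
  set G : Finset ℕ := F.biUnion (fun t => (Finset.range M).image (fun s => t * m - i + s)) with hG
  set r : (Fin k → A) → ℕ := fun φ => (OccW φ \ G).card with hr
  set Bc := ∑ φ : Fin k → A, r φ with hBcdef
  have hOccW_card : ∀ φ, occCount k W φ = (OccW φ).card := by
    intro φ
    rw [hOccW]
    unfold occCount
    rw [hWlen]
  have hdivt : ∀ t ∈ F, ∀ p ∈ (Finset.range M).image (fun s => t * m - i + s),
      (i + p) / m = t := by
    intro t ht p hp
    obtain ⟨s, hs, rfl⟩ := Finset.mem_image.mp hp
    rw [Finset.mem_range] at hs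
    have h1 := (hFt t ht).1
    have harg : i + (t * m - i + s) = t * m + s := by omega
    rw [harg, Nat.mul_comm t m, Nat.mul_add_div (by omega), Nat.div_eq_of_lt (by omega),
      Nat.add_zero]
  have hdisj : ∀ t ∈ F, ∀ t' ∈ F, t ≠ t' →
      Disjoint ((Finset.range M).image (fun s => t * m - i + s))
        ((Finset.range M).image (fun s => t' * m - i + s)) := by
    intro t ht t' ht' hne
    rw [Finset.disjoint_left]
    intro p hp hp'
    exact hne ((hdivt t ht p hp).symm.trans (hdivt t' ht' p hp'))
  have hsplit : ∀ φ, occCount k W φ = (∑ t ∈ F, c t φ) + r φ := by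
    intro φ
    rw [hOccW_card φ, ← Finset.card_inter_add_card_sdiff (OccW φ) G]
    congr 1
    have hIG : OccW φ ∩ G = F.biUnion (fun t =>
        ((Finset.range M).filter
          (fun s => ∀ j : Fin k, (w t)[s + (j : ℕ)]? = some (φ j))).image
          (fun s => t * m - i + s)) := by
      ext p
      simp only [Finset.mem_inter, hOccW, hG, Finset.mem_biUnion, Finset.mem_image,
        Finset.mem_range, Finset.mem_filter]
      constructor
      · rintro ⟨⟨_, hocc⟩, t, ht, s, hs, rfl⟩
        exact ⟨t, ht, s, ⟨hs, ((hkey t ht s hs).2 φ).mp hocc⟩, rfl⟩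
      · rintro ⟨t, ht, s, ⟨hs, hocc⟩, rfl⟩
        exact ⟨⟨(hkey t ht s hs).1, ((hkey t ht s hs).2 φ).mpr hocc⟩, t, ht, s, hs, rfl⟩
    rw [hIG, Finset.card_biUnion]
    · apply Finset.sum_congr rfl
      intro t ht
      have hct : c t φ = ((Finset.range M).filter
          (fun s => ∀ j : Fin k, (w t)[s + (j : ℕ)]? = some (φ j))).card := by
        rw [hc]
        simp only
        unfold occCount
        rw [hwlen t (hFt t ht).2.2]
      rw [Finset.card_image_of_injective _ (fun a b hab => by omega), hct]
    · intro t ht t' ht' hne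
      exact (hdisj t ht t' ht' hne).mono
        (Finset.image_subset_image (Finset.filter_subset _ _))
        (Finset.image_subset_image (Finset.filter_subset _ _))
  have hsumW : ∑ φ : Fin k → A, occCount k W φ = n := by
    rw [sum_occCount hk W (by rw [hWlen]; exact hkm2), hWlen]
  have hsumc : ∀ t ∈ F, ∑ φ : Fin k → A, c t φ = M := by
    intro t ht
    rw [hc]
    simp only
    rw [sum_occCount hk (w t) (by rw [hwlen t (hFt t ht).2.2]; exact hkm),
      hwlen t (hFt t ht).2.2]
  have hnqB : n = F.card * M + Bc := by
    calc n = ∑ φ : Fin k → A, occCount k W φ := hsumW.symm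
      _ = ∑ φ : Fin k → A, ((∑ t ∈ F, c t φ) + r φ) :=
          Finset.sum_congr rfl (fun φ _ => hsplit φ)
      _ = (∑ φ : Fin k → A, ∑ t ∈ F, c t φ) + Bc := Finset.sum_add_distrib
      _ = (∑ t ∈ F, ∑ φ : Fin k → A, c t φ) + Bc := by rw [Finset.sum_comm]
      _ = (∑ t ∈ F, M) + Bc := by
          rw [Finset.sum_congr rfl hsumc]
      _ = F.card * M + Bc := by rw [Finset.sum_const, smul_eq_mul]
  have hr_le : ∀ φ, r φ ≤ Bc :=
    fun φ => Finset.single_le_sum (fun _ _ => Nat.zero_le _) (Finset.mem_univ φ)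
  have hc_le : ∀ t ∈ F, ∀ φ, c t φ ≤ M := by
    intro t ht φ
    rw [hc]
    simp only
    unfold occCount
    rw [hwlen t (hFt t ht).2.2]
    calc _ ≤ (Finset.range (m - k + 1)).card := Finset.card_filter_le _ _
      _ = M := by rw [Finset.card_range]
  have hBc_le : Bc ≤ m * k + 2 * M := by
    have h7 : (m - 1) * M ≤ F.card * M := Nat.mul_le_mul_right M hqm
    have h8 : m * M = (m - 1) * M + M := by
      have hm' : m = (m - 1) + 1 := by omega
      calc m * M = ((m - 1) + 1) * M := by rw [← hm']
        _ = (m - 1) * M + M := Nat.succ_mul _ _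
    have h9 : m * M + m * k = m ^ 2 + m := by
      rw [← Nat.mul_add, hMk, pow_two, Nat.mul_add, Nat.mul_one]
    omega
  -- real number part
  have hn0' : (0 : ℝ) < n := by exact_mod_cast hn0
  have hM0' : (0 : ℝ) < M := by exact_mod_cast hM0
  have hq0' : (0 : ℝ) < F.card := by exact_mod_cast hq1
  have hnr : (n : ℝ) = (F.card : ℝ) * M + Bc := by exact_mod_cast hnqB
  set ν : ℕ → (Fin k → A) → ℝ :=
    fun t φ => ((F.card : ℝ) * (c t φ : ℝ) + (r φ : ℝ)) / n with hν
  have hν_prob : ∀ t ∈ F, IsProbVec (ν t) := by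
    intro t ht
    constructor
    · intro φ
      rw [hν]
      exact div_nonneg (add_nonneg (mul_nonneg (Nat.cast_nonneg _) (Nat.cast_nonneg _))
        (Nat.cast_nonneg _)) (Nat.cast_nonneg _)
    · rw [hν]
      simp only
      rw [← Finset.sum_div]
      rw [div_eq_one_iff_eq (ne_of_gt hn0')]
      rw [Finset.sum_add_distrib, ← Finset.mul_sum]
      rw [hnr]
      congr 1
      · congr 1
        exact_mod_cast congrArg (Nat.cast (R := ℝ)) (hsumc t ht)
      · exact_mod_cast rfl
  have hfreq_w : ∀ t ∈ F, freq k (w t) = fun φ => (c t φ : ℝ) / M := by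
    intro t ht
    funext φ
    unfold freq
    rw [hwlen t (hFt t ht).2.2]
  have hnorm : ∀ t ∈ F, ‖freq k (w t) - ν t‖ ≤ (Bc : ℝ) / n := by
    intro t ht
    rw [pi_norm_le_iff_of_nonneg (div_nonneg (Nat.cast_nonneg _) (le_of_lt hn0'))]
    intro φ
    rw [Pi.sub_apply, hfreq_w t ht, hν]
    simp only
    rw [Real.norm_eq_abs]
    have hc' : (0 : ℝ) ≤ (c t φ : ℝ) := Nat.cast_nonneg _
    have hcM : (c t φ : ℝ) ≤ M := by exact_mod_cast hc_le t ht φ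
    have hr' : (0 : ℝ) ≤ (r φ : ℝ) := Nat.cast_nonneg _
    have hrB : (r φ : ℝ) ≤ Bc := by exact_mod_cast hr_le φ
    have hBc0 : (0 : ℝ) ≤ (Bc : ℝ) := Nat.cast_nonneg _
    have hkey2 : (c t φ : ℝ) / M - ((F.card : ℝ) * (c t φ : ℝ) + (r φ : ℝ)) / n =
        ((Bc : ℝ) * (c t φ : ℝ) - (M : ℝ) * (r φ : ℝ)) / ((M : ℝ) * n) := by
      rw [div_sub_div _ _ (ne_of_gt hM0') (ne_of_gt hn0')]
      congr 1
      rw [hnr]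
      ring
    rw [hkey2, abs_div, abs_of_pos (mul_pos hM0' hn0')]
    have h1 : |(Bc : ℝ) * (c t φ : ℝ) - (M : ℝ) * (r φ : ℝ)| ≤ (Bc : ℝ) * M := by
      have p1 : (M : ℝ) * (r φ : ℝ) ≤ (M : ℝ) * Bc := mul_le_mul_of_nonneg_left hrB (le_of_lt hM0')
      have p2 : (0 : ℝ) ≤ (Bc : ℝ) * (c t φ : ℝ) := mul_nonneg hBc0 hc'
      have p3 : (Bc : ℝ) * (c t φ : ℝ) ≤ (Bc : ℝ) * M := mul_le_mul_of_nonneg_left hcM hBc0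
      have p4 : (0 : ℝ) ≤ (M : ℝ) * (r φ : ℝ) := mul_nonneg (le_of_lt hM0') hr'
      have p5 : (M : ℝ) * (Bc : ℝ) = (Bc : ℝ) * M := mul_comm _ _
      rw [abs_le]
      constructor <;> linarith
    calc |(Bc : ℝ) * (c t φ : ℝ) - (M : ℝ) * (r φ : ℝ)| / ((M : ℝ) * n)
        ≤ ((Bc : ℝ) * M) / ((M : ℝ) * n) := by
          exact (div_le_div_iff_of_pos_right (mul_pos hM0' hn0')).mpr h1
      _ = (Bc : ℝ) / n := by
          rw [mul_comm (Bc : ℝ) (M : ℝ), mul_div_mul_left _ _ (ne_of_gt hM0')]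
  have hM' : (M : ℝ) = (m : ℝ) - k + 1 := by
    rw [hM, Nat.cast_add, Nat.cast_sub hkm, Nat.cast_one]
  have hn' : (n : ℝ) = (m : ℝ) ^ 2 - k + 1 := by
    rw [hn, Nat.cast_add, Nat.cast_sub hkm2, Nat.cast_one, Nat.cast_pow]
  have hBcn_eps : (Bc : ℝ) / n ≤ ε := by
    have h1 : (Bc : ℝ) ≤ (m : ℝ) * k + 2 * M := by exact_mod_cast hBc_le
    calc (Bc : ℝ) / n ≤ ((m : ℝ) * k + 2 * M) / n := by
          exact (div_le_div_iff_of_pos_right hn0').mpr h1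
      _ = ((m : ℝ) * k + 2 * ((m : ℝ) - k + 1)) / ((m : ℝ) ^ 2 - k + 1) := by
          rw [hM', hn']
      _ ≤ ε := hbound
  have hν_mem : ∀ t ∈ F, ν t ∈ Γ := by
    intro t ht
    obtain ⟨hprob_t, δ, hδε, hδ⟩ := (hL (w t) (hwmem t (hFt t ht).2.2)).2
    by_contra hno
    have h1 := hδ (ν t) (hν_prob t ht) hno
    have h2 : ‖freq k (w t) - ν t‖ ≤ ε := le_trans (hnorm t ht) hBcn_eps
    linarith
  have hμ : freq k W = ∑ t ∈ F, ((F.card : ℝ)⁻¹) • ν t := by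
    funext φ
    rw [Finset.sum_apply]
    have hterm : ∀ t ∈ F, (((F.card : ℝ)⁻¹) • ν t) φ =
        (c t φ : ℝ) / n + (r φ : ℝ) / ((F.card : ℝ) * n) := by
      intro t _
      rw [Pi.smul_apply, smul_eq_mul, hν]
      have hFF : (F.card : ℝ)⁻¹ * (F.card : ℝ) = 1 := inv_mul_cancel₀ (ne_of_gt hq0')
      show (F.card : ℝ)⁻¹ * (((F.card : ℝ) * (c t φ : ℝ) + (r φ : ℝ)) / n) = _
      linear_combination ((c t φ : ℝ) / n) * hFF
    rw [Finset.sum_congr rfl hterm, Finset.sum_add_distrib, ← Finset.sum_div,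
      Finset.sum_const, nsmul_eq_mul]
    have hLHS : freq k W φ = ((∑ t ∈ F, c t φ : ℕ) + (r φ : ℕ) : ℝ) / n := by
      unfold freq
      rw [hWlen]
      rw [show W.length = m ^ 2 from hWlen] at *
      rw [hsplit φ]
      rw [← hn]
      push_cast
      ring
    rw [hLHS]
    have h2 : (F.card : ℝ) * ((r φ : ℝ) / ((F.card : ℝ) * (n : ℝ))) = (r φ : ℝ) / (n : ℝ) := by
      rw [← mul_div_assoc, mul_div_mul_left _ _ (ne_of_gt hq0')]
    rw [h2, ← add_div]
    push_cast
    ring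
  rw [hμ]
  exact hconv.sum_mem (fun t _ => inv_nonneg.mpr (le_of_lt hq0'))
    (by rw [Finset.sum_const, nsmul_eq_mul, mul_inv_cancel₀ (ne_of_gt hq0')]) hν_mem
end

section
/- Let ω′ be a contiguous subword of length m² of a concatenation ω_j ω_{j+1} ⋯ ω_{j+m} of m+1 words each of length m ≥ k with empirical k-tuple frequencies μ_{j},…,μ_{j+m}, and let μ be their average. Then for every φ ∈ Σ^k, |fr_{ω′}^k(φ) − μ(φ)| ≤ (mk + 2(m−k+1))/(m² − k + 1). -/
open Finset

lemma join_get? {A : Type*} (m : ℕ) : ∀ (l : List (List A)), (∀ w ∈ l, w.length = m) →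
    ∀ i x (hi : i < l.length), x < m → l.flatten[i*m+x]? = (l.get ⟨i, hi⟩)[x]? := by
  intro l
  induction l with
  | nil => intro _ i x hi; simp at hi
  | cons w l ih =>
    intro hlen i x hi hx
    have hw : w.length = m := hlen w (by simp)
    cases i with
    | zero =>
      simp only [List.flatten_cons, Nat.zero_mul, Nat.zero_add, List.get]
      rw [List.getElem?_append_left (by omega)]
    | succ i' =>
      have : (i'+1)*m + x = w.length + (i'*m + x) := by rw [hw]; ring
      simp only [List.flatten_cons]
      rw [this, List.getElem?_append_right (by omega)]
      simp only [Nat.add_sub_cancel_left]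
      have hi' : i' < l.length := by simpa using hi
      rw [ih (fun w hw => hlen w (by simp [hw])) i' x hi' hx]
      rfl

lemma card_shift {P : ℕ → Prop} [DecidablePred P] (t n : ℕ) :
    ((Finset.range (n+1)).filter (fun i => P (t+i))).card
      = ((Finset.Icc t (t+n)).filter P).card := by
  apply Finset.card_bij (fun i _ => t + i)
  · intro a ha
    simp only [Finset.mem_filter, Finset.mem_range] at ha
    simp only [Finset.mem_filter, Finset.mem_Icc]
    exact ⟨⟨by omega, by omega⟩, ha.2⟩
  · intro a ha b hb h; omega
  · intro b hb
    simp only [Finset.mem_filter, Finset.mem_Icc] at hb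
    refine ⟨b - t, ?_, by omega⟩
    simp only [Finset.mem_filter, Finset.mem_range]
    constructor
    · omega
    · have : t + (b - t) = b := by omega
      rw [this]; exact hb.2

lemma real_key_s10 (M K n f s : ℝ) (hK1 : 1 ≤ K) (hKM : K ≤ M) (hf0 : 0 ≤ f)
    (hfN : f ≤ n) (hNf : n + (M-1)*(M-K+1) ≤ f + (M^2-K+1))
    (hfs : f ≤ s) (hsf : s ≤ f + 2*(M-K+1)) (hsT : s ≤ (M+1)*(M-K+1)) :
    |n*((M+1)*(M-K+1)) - (M^2-K+1)*s| ≤ (M*K + 2*(M-K+1)) * ((M+1)*(M-K+1)) := by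
  have hM1 : (1:ℝ) ≤ M := le_trans hK1 hKM
  have hE : (0:ℝ) ≤ M - K + 1 := by linarith
  have hT : (0:ℝ) ≤ (M+1)*(M-K+1) := mul_nonneg (by linarith) hE
  have hMT : (0:ℝ) ≤ M*((M+1)*(M-K+1)) := mul_nonneg (by linarith) hT
  have hs0 : (0:ℝ) ≤ s := le_trans hf0 hfs
  rw [abs_le]
  constructor
  · -- (M^2-K+1)*s - n*T ≤ B*T
    have h1 : (0:ℝ) ≤ (n - (s - 2*(M-K+1))) * ((M+1)*(M-K+1)) :=
      mul_nonneg (by linarith) hT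
    rcases le_or_gt K 2 with h2 | h2
    · have h3 : (0:ℝ) ≤ s * (M*(2-K)) :=
        mul_nonneg hs0 (mul_nonneg (by linarith) (by linarith))
      nlinarith [h1, h3, hMT]
    · have h3 : (0:ℝ) ≤ ((M+1)*(M-K+1) - s) * (M*(K-2)) :=
        mul_nonneg (by linarith) (mul_nonneg (by linarith) (by linarith))
      nlinarith [h1, h3, hMT]
  · -- n*T - (M^2-K+1)*s ≤ B*T
    have h1 : (0:ℝ) ≤ (s + (M^2-K+1) - (M-1)*(M-K+1) - n) * ((M+1)*(M-K+1)) :=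
      mul_nonneg (by linarith) hT
    rcases le_or_gt K 2 with h2 | h2
    · have h3 : (0:ℝ) ≤ ((M+1)*(M-K+1) - s) * (M*(2-K)) :=
        mul_nonneg (by linarith) (mul_nonneg (by linarith) (by linarith))
      nlinarith [h1, h3, hMT]
    · have h3 : (0:ℝ) ≤ s * (M*(K-2)) :=
        mul_nonneg hs0 (mul_nonneg (by linarith) (by linarith))
      nlinarith [h1, h3, hMT]


theorem stmt10 {A : Type*} [Fintype A] [DecidableEq A] (k m : ℕ)
    (hk : 1 ≤ k) (hkm : k ≤ m)
    (ws : Fin (m + 1) → List A) (hlen : ∀ i, (ws i).length = m)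
    (t : ℕ) (ht : t + m ^ 2 ≤ (List.ofFn ws).flatten.length)
    (μ : (Fin k → A) → ℝ)
    (hμ : ∀ φ, μ φ = (1 / ((m : ℝ) + 1)) * ∑ i : Fin (m + 1), freq k (ws i) φ)
    (φ : Fin k → A) :
    |freq k (((List.ofFn ws).flatten.drop t).take (m ^ 2)) φ - μ φ| ≤
      ((m : ℝ) * (k : ℝ) + 2 * ((m : ℝ) - (k : ℝ) + 1)) /
        ((m : ℝ) ^ 2 - (k : ℝ) + 1) := by
  classical
  set L := (List.ofFn ws).flatten with hL
  have hm2 : m ^ 2 = m * m := sq m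
  have hkm2 : k ≤ m ^ 2 := le_trans hkm (le_trans (Nat.le_mul_of_pos_left m (by omega)) hm2.ge)
  have hLlen : L.length = (m+1)*m := by
    rw [hL, List.length_flatten]
    simp only [List.map_ofFn]
    rw [List.sum_ofFn]
    simp [hlen]
  have hmm : (m+1)*m = m*m + m := by ring
  have htm : t ≤ m := by omega
  have hLget : ∀ (i : Fin (m+1)) (x : ℕ), x < m → L[(i:ℕ)*m + x]? = (ws i)[x]? := by
    intro i x hx
    have hmem : ∀ w ∈ List.ofFn ws, w.length = m := by
      intro w hw
      rw [List.mem_ofFn] at hw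
      obtain ⟨j, rfl⟩ := hw
      exact hlen j
    have := join_get? m (List.ofFn ws) hmem (i:ℕ) x (by simp; omega) hx
    rw [this, List.get_ofFn]
    congr 1
  set Q : ℕ → Prop := fun p => ∀ j : Fin k, L[p + (j:ℕ)]? = some (φ j) with hQ
  set ω' := (L.drop t).take (m^2) with hω'
  have hω'len : ω'.length = m ^ 2 := by
    rw [hω']; simp only [List.length_take, List.length_drop]; omega
  -- window count
  have hocc1 : occCount k ω' φ = ((Finset.Icc t (t + (m^2 - k))).filter Q).card := by
    unfold occCount
    rw [hω'len]
    have h1 : m ^ 2 - k + 1 = (m^2 - k) + 1 := rfl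
    rw [h1, ← card_shift (P := Q) t (m^2 - k)]
    congr 1
    apply Finset.filter_congr
    intro i hi
    simp only [Finset.mem_range] at hi
    simp only [hQ]
    refine forall_congr' fun j => ?_
    have hj : (j:ℕ) < k := j.isLt
    have hlt : i + (j:ℕ) < m ^ 2 := by omega
    rw [hω', List.getElem?_take_of_lt hlt, List.getElem?_drop, add_assoc]
  -- word counts
  set g : ℕ → ℕ := fun i => ((Finset.Icc (i*m) (i*m + (m-k))).filter Q).card with hg
  have hocc2 : ∀ i : Fin (m+1), occCount k (ws i) φ = g (i:ℕ) := by
    intro i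
    show occCount k (ws i) φ = ((Finset.Icc ((i:ℕ)*m) ((i:ℕ)*m + (m-k))).filter Q).card
    unfold occCount
    rw [hlen i, ← card_shift (P := Q) ((i:ℕ)*m) (m-k)]
    congr 1
    apply Finset.filter_congr
    intro a ha
    simp only [Finset.mem_range] at ha
    simp only [hQ]
    refine forall_congr' fun j => ?_
    have hj : (j:ℕ) < k := j.isLt
    have hlt : a + (j:ℕ) < m := by omega
    rw [← hLget i (a + (j:ℕ)) hlt, add_assoc]
  set U : Finset ℕ := (Finset.Icc 1 (m-1)).biUnion (fun i => Finset.Icc (i*m) (i*m + (m-k))) with hU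
  have hdisj : ∀ x ∈ Finset.Icc 1 (m-1), ∀ y ∈ Finset.Icc 1 (m-1), x ≠ y →
      Disjoint (Finset.Icc (x*m) (x*m+(m-k))) (Finset.Icc (y*m) (y*m+(m-k))) := by
    intro x _ y _ hxy
    rw [Finset.disjoint_left]
    intro p hp hp'
    simp only [Finset.mem_Icc] at hp hp'
    rcases lt_or_gt_of_ne hxy with h | h
    · have h1 : (x+1)*m ≤ y*m := Nat.mul_le_mul_right m (by omega)
      have h2 : (x+1)*m = x*m + m := by ring
      omega
    · have h1 : (y+1)*m ≤ x*m := Nat.mul_le_mul_right m (by omega)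
      have h2 : (y+1)*m = y*m + m := by ring
      omega
  have hcardIcc : ∀ x : ℕ, (Finset.Icc (x*m) (x*m+(m-k))).card = (m-k)+1 := by
    intro x; rw [Nat.card_Icc]; omega
  have hUcard : U.card = (m-1) * ((m-k)+1) := by
    rw [hU, Finset.card_biUnion hdisj, Finset.sum_congr rfl (fun x _ => hcardIcc x),
      Finset.sum_const, Nat.card_Icc, smul_eq_mul, Nat.add_sub_cancel]
  have hUsub : U ⊆ Finset.Icc t (t + (m^2 - k)) := by
    intro p hp
    rw [hU, Finset.mem_biUnion] at hp
    obtain ⟨i, hi, hpi⟩ := hp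
    simp only [Finset.mem_Icc] at hi hpi ⊢
    have h1 : 1*m ≤ i*m := Nat.mul_le_mul_right m hi.1
    have h2 : i*m ≤ (m-1)*m := Nat.mul_le_mul_right m hi.2
    have h3 : (m-1)*m = m*m - m := by rw [Nat.sub_one_mul]
    have h4 : m ≤ m*m := Nat.le_mul_of_pos_left m (by omega)
    have h5 : 1*m = m := one_mul m
    omega
  have hg_le : ∀ i, g i ≤ (m-k)+1 := fun i =>
    le_trans (Finset.card_le_card (Finset.filter_subset _ _)) (hcardIcc i).le
  set N := ((Finset.Icc t (t + (m^2 - k))).filter Q).card with hNdef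
  set f := ∑ i ∈ Finset.Icc 1 (m-1), g i with hfdef
  have hfU : f = (U.filter Q).card := by
    rw [hU, Finset.filter_biUnion, Finset.card_biUnion]
    intro x hx y hy hxy
    exact (hdisj x hx y hy hxy).mono (Finset.filter_subset _ _) (Finset.filter_subset _ _)
  have hfN : f ≤ N := by
    rw [hfU, hNdef]
    exact Finset.card_le_card (Finset.filter_subset_filter Q hUsub)
  have hNf : N + (m-1)*((m-k)+1) ≤ f + ((m^2 - k) + 1) := by
    have hsub : (Finset.Icc t (t + (m^2-k))).filter Q ⊆
        (U.filter Q) ∪ ((Finset.Icc t (t+(m^2-k))) \ U) := by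
      intro p hp
      rw [Finset.mem_union]
      by_cases hpU : p ∈ U
      · left; rw [Finset.mem_filter] at hp ⊢; exact ⟨hpU, hp.2⟩
      · right; exact Finset.mem_sdiff.mpr ⟨Finset.mem_of_mem_filter p hp, hpU⟩
    have h1 : N ≤ (U.filter Q).card + ((Finset.Icc t (t+(m^2-k))) \ U).card :=
      le_trans (Finset.card_le_card hsub) (Finset.card_union_le _ _)
    have h2 : ((Finset.Icc t (t+(m^2-k))) \ U).card
        = (Finset.Icc t (t+(m^2-k))).card - U.card := Finset.card_sdiff_of_subset hUsub
    have h3 : U.card ≤ (Finset.Icc t (t+(m^2-k))).card := Finset.card_le_card hUsub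
    have h4 : (Finset.Icc t (t+(m^2-k))).card = (m^2-k)+1 := by rw [Nat.card_Icc]; omega
    rw [hfU]
    omega
  set s := ∑ i ∈ Finset.range (m+1), g i with hsdef
  have hrange : Finset.range (m+1) = insert 0 (insert m (Finset.Icc 1 (m-1))) := by
    ext a; simp only [Finset.mem_range, Finset.mem_insert, Finset.mem_Icc]; omega
  have hsplit : s = g 0 + (g m + f) := by
    rw [hsdef, hfdef, hrange, Finset.sum_insert (by simp; omega),
      Finset.sum_insert (by simp; omega)]
  have hs_le : s ≤ (m+1)*((m-k)+1) := by
    calc s ≤ ∑ _i ∈ Finset.range (m+1), ((m-k)+1) := Finset.sum_le_sum (fun i _ => hg_le i)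
    _ = (m+1)*((m-k)+1) := by rw [Finset.sum_const, Finset.card_range, smul_eq_mul]
  -- casting to ℝ
  have hm1 : 1 ≤ m := le_trans hk hkm
  have hcast_e : (((m - k) + 1 : ℕ) : ℝ) = (m:ℝ) - k + 1 := by
    rw [Nat.cast_add, Nat.cast_sub hkm, Nat.cast_one]
  have hcast_d : (((m^2 - k) + 1 : ℕ) : ℝ) = (m:ℝ)^2 - k + 1 := by
    rw [Nat.cast_add, Nat.cast_sub hkm2, Nat.cast_one, Nat.cast_pow]
  have hfreqsum : ∑ i : Fin (m + 1), freq k (ws i) φ = (s:ℝ)/((m:ℝ) - k + 1) := by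
    have h1 : ∀ i : Fin (m+1), freq k (ws i) φ = (g (i:ℕ) : ℝ)/((m:ℝ) - k + 1) := by
      intro i
      show (occCount k (ws i) φ : ℝ) / (((ws i).length - k + 1 : ℕ) : ℝ) = _
      rw [hocc2 i, hlen i, hcast_e]
    rw [Finset.sum_congr rfl (fun i _ => h1 i), ← Finset.sum_div]
    congr 1
    rw [hsdef, Nat.cast_sum]
    exact Fin.sum_univ_eq_sum_range (fun i => (g i : ℝ)) (m+1)
  have hfreqω : freq k ω' φ = (N:ℝ)/((m:ℝ)^2 - k + 1) := by
    show (occCount k ω' φ : ℝ) / ((ω'.length - k + 1 : ℕ) : ℝ) = _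
    rw [hocc1, hω'len, hcast_d]
  rw [hμ φ, hfreqω, hfreqsum]
  have hM1 : (1:ℝ) ≤ (k:ℝ) := by exact_mod_cast hk
  have hKM : (k:ℝ) ≤ (m:ℝ) := by exact_mod_cast hkm
  have hE : (0:ℝ) < (m:ℝ) - k + 1 := by linarith
  have hD : (0:ℝ) < (m:ℝ)^2 - k + 1 := by nlinarith
  have hT : (0:ℝ) < ((m:ℝ)+1)*((m:ℝ) - k + 1) := mul_pos (by linarith) hE
  have hfNr : (f:ℝ) ≤ (N:ℝ) := by exact_mod_cast hfN
  have hf0 : (0:ℝ) ≤ (f:ℝ) := Nat.cast_nonneg f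
  have hNfr : (N:ℝ) + ((m:ℝ)-1)*((m:ℝ)-(k:ℝ)+1) ≤ (f:ℝ) + ((m:ℝ)^2 - k + 1) := by
    have h := (Nat.cast_le (α := ℝ)).mpr hNf
    push_cast [Nat.cast_sub hkm, Nat.cast_sub hkm2, Nat.cast_sub hm1] at h
    linarith
  have hsfr : (s:ℝ) ≤ (f:ℝ) + 2*((m:ℝ) - k + 1) := by
    have h := hsplit
    have hg0 := hg_le 0
    have hgm := hg_le m
    have h' : (s:ℝ) = (g 0 : ℝ) + ((g m : ℝ) + f) := by exact_mod_cast congrArg (Nat.cast (R := ℝ)) h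
    have h0 : (g 0 : ℝ) ≤ ((m:ℝ) - k + 1) := by
      calc (g 0 : ℝ) ≤ (((m-k)+1 : ℕ) : ℝ) := by exact_mod_cast hg0
      _ = _ := hcast_e
    have hm' : (g m : ℝ) ≤ ((m:ℝ) - k + 1) := by
      calc (g m : ℝ) ≤ (((m-k)+1 : ℕ) : ℝ) := by exact_mod_cast hgm
      _ = _ := hcast_e
    linarith
  have hfsr : (f:ℝ) ≤ (s:ℝ) := by
    have h := hsplit
    have : f ≤ s := by omega
    exact_mod_cast this
  have hsTr : (s:ℝ) ≤ ((m:ℝ)+1)*((m:ℝ) - k + 1) := by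
    calc (s:ℝ) ≤ (((m+1)*((m-k)+1) : ℕ) : ℝ) := by exact_mod_cast hs_le
    _ = _ := by push_cast [Nat.cast_sub hkm]; ring
  have hrw : 1 / ((m:ℝ) + 1) * ((s:ℝ)/((m:ℝ) - k + 1)) = (s:ℝ)/(((m:ℝ)+1)*((m:ℝ) - k + 1)) := by
    rw [div_mul_div_comm, one_mul]
  rw [hrw, div_sub_div _ _ hD.ne' hT.ne', abs_div, abs_of_pos (mul_pos hD hT),
    div_le_div_iff₀ (mul_pos hD hT) hD]
  set M := (m:ℝ)
  set K := (k:ℝ)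
  have key : |(N:ℝ)*((M+1)*(M-K+1)) - (M^2-K+1)*(s:ℝ)| ≤
      (M*K + 2*(M-K+1)) * ((M+1)*(M-K+1)) :=
    real_key_s10 M K (N:ℝ) (f:ℝ) (s:ℝ) hM1 hKM hf0 hfNr hNfr hfsr hsfr hsTr
  calc |(N:ℝ)*((M+1)*(M-K+1)) - (M^2-K+1)*(s:ℝ)| * (M^2-K+1)
      ≤ ((M*K + 2*(M-K+1)) * ((M+1)*(M-K+1))) * (M^2-K+1) :=
        mul_le_mul_of_nonneg_right key hD.le
    _ = (M*K + 2*(M-K+1)) * ((M^2-K+1) * ((M+1)*(M-K+1))) := by ring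
end

section
/- Let η be a rational, entrywise positive, shift-invariant probability measure on Σ^k. Then for every word α ∈ Σ^*, there exists β ∈ Σ^* such that the empirical k-tuple frequency of αβ equals η exactly: fr_{αβ}^k = η. -/
open Finset

set_option linter.unusedSectionVars false

namespace S11
variable {A : Type*} [DecidableEq A]

def occ (y w : List A) : ℕ :=
  ((Finset.range (w.length + 1 - y.length)).filter (fun i => y <+: w.drop i)).card

lemma occ_eq_sum (y w : List A) :
    occ y w = ∑ i ∈ Finset.range (w.length + 1 - y.length), (if y <+: w.drop i then 1 else 0) := by
  rw [occ, Finset.card_filter]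

lemma prefix_unique {x p v : List A} (hx : x <+: v) (hp : p <+: v) (h : x.length = p.length) :
    x = p := by
  rw [List.prefix_iff_eq_take] at hx hp
  rw [hx, hp, h]

lemma suffix_unique {x p v : List A} (hx : x <:+ v) (hp : p <:+ v) (h : x.length = p.length) :
    x = p := by
  rw [List.suffix_iff_eq_drop] at hx hp
  rw [hx, hp, h]

lemma prefix_of_eq_length {y w : List A} (h : y <+: w) (hl : y.length = w.length) : y = w := by
  rw [List.prefix_iff_eq_take] at h
  rw [h, hl, List.take_length]

lemma prefix_iff_eq_of_length {y w : List A} (hl : y.length = w.length) : y <+: w ↔ y = w :=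
  ⟨fun h => prefix_of_eq_length h hl, fun h => h ▸ List.prefix_refl _⟩

lemma prefix_append_iff {y z v : List A} (hl : y.length ≤ z.length) :
    y <+: z ++ v ↔ y <+: z := by
  constructor
  · rw [List.prefix_iff_eq_take, List.prefix_iff_eq_take]
    intro h
    rw [h, List.take_append]
    have : y.length - z.length = 0 := by omega
    rw [this]
    simp
  · intro h
    exact h.trans (List.prefix_append _ _)

/-- Window split: if `u` ends with `x` and windows have length `|x|+1`, occurrences split. -/
lemma occ_append (y x u v : List A) (hy : y.length = x.length + 1) (hx : x <:+ u) :
    occ y (u ++ v) = occ y u + occ y (x ++ v) := by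
  obtain ⟨p, rfl⟩ := hx
  have h1 : (p ++ x ++ v).length + 1 - y.length = p.length + v.length := by
    simp only [List.length_append]; omega
  have h2 : (p ++ x).length + 1 - y.length = p.length := by
    simp only [List.length_append]; omega
  have h3 : (x ++ v).length + 1 - y.length = v.length := by
    simp only [List.length_append]; omega
  rw [occ_eq_sum, occ_eq_sum, occ_eq_sum, h1, h2, h3]
  rw [Finset.sum_range_add]
  congr 1
  · apply Finset.sum_congr rfl
    intro i hi
    rw [Finset.mem_range] at hi
    have hd : (p ++ x ++ v).drop i = (p ++ x).drop i ++ v := by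
      rw [List.append_assoc, List.drop_append]
      rw [List.drop_append (l₁ := p)]
      have : i - p.length = 0 := by omega
      rw [this]
      simp [List.append_assoc]
    have hlen : y.length ≤ ((p ++ x).drop i).length := by
      simp only [List.length_drop, List.length_append]; omega
    rw [hd]
    exact if_congr (prefix_append_iff hlen) rfl rfl
  · apply Finset.sum_congr rfl
    intro i hi
    have hd : (p ++ x ++ v).drop (p.length + i) = (x ++ v).drop i := by
      rw [List.append_assoc, List.drop_append]
      have h1 : p.length + i - p.length = i := by omega
      rw [List.drop_of_length_le (by omega), h1]
      simp
    rw [hd]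

lemma occ_of_length_eq {y w : List A} (h : y.length = w.length) :
    occ y w = if y = w then 1 else 0 := by
  rw [occ_eq_sum]
  have h1 : w.length + 1 - y.length = 1 := by omega
  rw [h1]
  simp only [Finset.sum_range_one, List.drop_zero]
  exact if_congr (prefix_iff_eq_of_length h) rfl rfl

lemma occ_snoc {y x w : List A} (a : A) (hy : y.length = x.length + 1) (hx : x <:+ w) :
    occ y (w ++ [a]) = occ y w + (if y = x ++ [a] then 1 else 0) := by
  rw [occ_append y x w [a] hy hx,
    occ_of_length_eq (y := y) (w := x ++ [a]) (by simp [hy])]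

end S11

namespace S11
variable {A : Type*} [DecidableEq A]

lemma occ_le_append (y w v : List A) : occ y w ≤ occ y (w ++ v) := by
  rw [occ_eq_sum, occ_eq_sum]
  have hle : w.length + 1 - y.length ≤ (w ++ v).length + 1 - y.length := by
    simp only [List.length_append]; omega
  calc ∑ i ∈ Finset.range (w.length + 1 - y.length), (if y <+: w.drop i then 1 else 0)
      ≤ ∑ i ∈ Finset.range (w.length + 1 - y.length), (if y <+: (w ++ v).drop i then 1 else 0) := by
        apply Finset.sum_le_sum
        intro i hi
        by_cases h : y <+: w.drop i
        · have : y <+: (w ++ v).drop i := by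
            rw [List.drop_append]
            exact h.trans (List.prefix_append _ _)
          simp [h, this]
        · simp [h]
    _ ≤ _ := Finset.sum_le_sum_of_subset (Finset.range_subset_range.mpr hle)

lemma snoc_prefix_iff {x z : List A} (a : A) (h : x.length < z.length) :
    x ++ [a] <+: z ↔ (x <+: z ∧ a = z[x.length]'h) := by
  constructor
  · intro hp
    have hx : x <+: z := (List.prefix_append x [a]).trans hp
    refine ⟨hx, ?_⟩
    rw [List.prefix_iff_eq_take] at hp hx
    have h1 : (x ++ [a]).length = x.length + 1 := by simp
    rw [h1] at hp
    rw [List.take_succ, List.getElem?_eq_getElem h, ← hx] at hp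
    simpa using List.append_cancel_left hp
  · rintro ⟨hx, rfl⟩
    rw [List.prefix_iff_eq_take] at hx ⊢
    have h1 : (x ++ [z[x.length]'h]).length = x.length + 1 := by simp
    rw [h1, List.take_succ, List.getElem?_eq_getElem h, ← hx]
    simp

variable [Fintype A]

lemma sum_ite_snoc {x z : List A} (h : x.length < z.length) :
    (∑ a : A, if x ++ [a] <+: z then 1 else 0) = if x <+: z then 1 else 0 := by
  have : ∀ a : A, (if x ++ [a] <+: z then 1 else 0)
      = if a = z[x.length]'h then (if x <+: z then 1 else 0) else 0 := by
    intro a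
    rw [if_congr (snoc_prefix_iff a h) rfl rfl]
    by_cases h1 : x <+: z <;> by_cases h2 : a = z[x.length]'h <;> simp [h1, h2]
  simp only [this]
  rw [Finset.sum_ite_eq' Finset.univ]
  simp

lemma sum_ite_cons {x : List A} {c : A} {z' : List A} :
    (∑ a : A, if a :: x <+: c :: z' then 1 else 0) = if x <+: z' then 1 else 0 := by
  have : ∀ a : A, (if a :: x <+: c :: z' then 1 else 0)
      = if a = c then (if x <+: z' then 1 else 0) else 0 := by
    intro a
    rw [if_congr List.cons_prefix_cons rfl rfl]
    by_cases h1 : x <+: z' <;> by_cases h2 : a = c <;> simp [h1, h2]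
  simp only [this]
  rw [Finset.sum_ite_eq' Finset.univ]
  simp

lemma occ_out (x w : List A) (h : x.length ≤ w.length) :
    occ x w = (∑ a : A, occ (x ++ [a]) w) + (if x <:+ w then 1 else 0) := by
  have hsum : (∑ a : A, occ (x ++ [a]) w)
      = ∑ i ∈ Finset.range (w.length - x.length), (if x <+: w.drop i then 1 else 0) := by
    have h1 : ∀ a : A, occ (x ++ [a]) w
        = ∑ i ∈ Finset.range (w.length - x.length), (if x ++ [a] <+: w.drop i then 1 else 0) := by
      intro a
      rw [occ_eq_sum]
      have he : w.length + 1 - (x ++ [a]).length = w.length - x.length := by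
        simp only [List.length_append, List.length_singleton]; omega
      rw [he]
    simp only [h1]
    rw [Finset.sum_comm]
    apply Finset.sum_congr rfl
    intro i hi
    rw [Finset.mem_range] at hi
    have hlt : x.length < (w.drop i).length := by
      rw [List.length_drop]; omega
    exact sum_ite_snoc hlt
  rw [hsum, occ_eq_sum]
  have h2 : w.length + 1 - x.length = (w.length - x.length) + 1 := by omega
  rw [h2, Finset.sum_range_succ]
  congr 1
  have h3 : x <+: w.drop (w.length - x.length) ↔ x <:+ w := by
    have hl : x.length = (w.drop (w.length - x.length)).length := by
      rw [List.length_drop]; omega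
    rw [prefix_iff_eq_of_length hl, List.suffix_iff_eq_drop]
  exact if_congr h3 rfl rfl

lemma occ_in (x w : List A) (h : x.length ≤ w.length) :
    occ x w = (∑ a : A, occ (a :: x) w) + (if x <+: w then 1 else 0) := by
  have hsum : (∑ a : A, occ (a :: x) w)
      = ∑ i ∈ Finset.range (w.length - x.length), (if x <+: w.drop (i + 1) then 1 else 0) := by
    have h1 : ∀ a : A, occ (a :: x) w
        = ∑ i ∈ Finset.range (w.length - x.length), (if a :: x <+: w.drop i then 1 else 0) := by
      intro a
      rw [occ_eq_sum]
      have he : w.length + 1 - (a :: x).length = w.length - x.length := by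
        simp only [List.length_cons]; omega
      rw [he]
    simp only [h1]
    rw [Finset.sum_comm]
    apply Finset.sum_congr rfl
    intro i hi
    rw [Finset.mem_range] at hi
    have hlt : 0 < (w.drop i).length := by
      rw [List.length_drop]; omega
    obtain ⟨c, z', hz⟩ : ∃ c z', w.drop i = c :: z' := by
      cases hzz : w.drop i with
      | nil => rw [hzz] at hlt; simp at hlt
      | cons c z' => exact ⟨c, z', rfl⟩
    have hz' : z' = w.drop (i + 1) := by
      have := List.tail_drop (l := w) (i := i)
      rw [hz] at this
      simpa using this
    rw [hz, ← hz']
    exact sum_ite_cons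
  rw [hsum, occ_eq_sum]
  have h2 : w.length + 1 - x.length = (w.length - x.length) + 1 := by omega
  rw [h2, Finset.sum_range_succ']
  simp only [List.drop_zero]

end S11

namespace S11
variable {A : Type*} [DecidableEq A]

lemma ofFn_prefix_iff {n : ℕ} (φ : Fin n → A) (z : List A) (h : n ≤ z.length) :
    List.ofFn φ <+: z ↔ φ = (fun j : Fin n => z[(j : ℕ)]'(by omega)) := by
  have htake : z.take n = List.ofFn (fun j : Fin n => z[(j : ℕ)]'(by omega)) := by
    apply List.ext_getElem
    · simp [h]
    · intro i h1 h2
      simp only [List.getElem_take, List.getElem_ofFn]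
  rw [List.prefix_iff_eq_take, List.length_ofFn, htake, List.ofFn_inj]

variable [Fintype A]

lemma sum_ite_window {n : ℕ} (z : List A) (h : n ≤ z.length) :
    (∑ φ : Fin n → A, if List.ofFn φ <+: z then 1 else 0) = 1 := by
  have h1 : ∀ φ : Fin n → A, (if List.ofFn φ <+: z then 1 else 0)
      = if φ = (fun j : Fin n => z[(j : ℕ)]'(by omega)) then 1 else 0 := fun φ =>
    if_congr (ofFn_prefix_iff φ z h) rfl rfl
  simp only [h1]
  rw [Finset.sum_ite_eq' Finset.univ]
  simp

lemma occ_total {n : ℕ} (w : List A) :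
    (∑ φ : Fin n → A, occ (List.ofFn φ) w) = w.length + 1 - n := by
  have h1 : ∀ φ : Fin n → A, occ (List.ofFn φ) w
      = ∑ i ∈ Finset.range (w.length + 1 - n), (if List.ofFn φ <+: w.drop i then 1 else 0) := by
    intro φ
    rw [occ_eq_sum, List.length_ofFn]
  simp only [h1]
  rw [Finset.sum_comm]
  have h2 : ∀ i ∈ Finset.range (w.length + 1 - n),
      (∑ φ : Fin n → A, if List.ofFn φ <+: w.drop i then 1 else 0) = 1 := by
    intro i hi
    rw [Finset.mem_range] at hi
    apply sum_ite_window
    rw [List.length_drop]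
    omega
  rw [Finset.sum_congr rfl h2]
  simp

end S11

namespace S11
variable {A : Type*} [DecidableEq A]

lemma occCount_eq_occ {K : ℕ} (w : List A) (φ : Fin K → A) (h : K ≤ w.length) :
    occCount K w φ = occ (List.ofFn φ) w := by
  rw [occCount, occ]
  have hr : w.length - K + 1 = w.length + 1 - (List.ofFn φ).length := by
    rw [List.length_ofFn]; omega
  rw [hr]
  congr 1
  apply Finset.filter_congr
  intro i hi
  rw [Finset.mem_range, List.length_ofFn] at hi
  have hKz : K ≤ (w.drop i).length := by rw [List.length_drop]; omega
  rw [ofFn_prefix_iff φ _ hKz]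
  constructor
  · intro hp
    funext j
    have := hp j
    rw [List.getElem?_eq_some_iff] at this
    obtain ⟨h1, h2⟩ := this
    rw [List.getElem_drop]
    exact h2.symm
  · intro hp j
    rw [List.getElem?_eq_some_iff]
    refine ⟨by omega, ?_⟩
    have : φ j = (w.drop i)[(j : ℕ)]'(by omega) := by rw [hp]
    rw [this, List.getElem_drop]
end S11

namespace S11
variable {A : Type*} [DecidableEq A] [Fintype A]

lemma exists_ofFn {n : ℕ} (y : List A) (hy : y.length = n) :
    ∃ φ : Fin n → A, List.ofFn φ = y := by
  refine ⟨fun j => y[(j : ℕ)]'(by omega), ?_⟩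
  apply List.ext_getElem
  · simp [hy]
  · intro i h1 h2
    simp only [List.getElem_ofFn]

lemma exists_strict_ext {m : ℕ} (e : List A → ℕ)
    (hbal : ∀ x : List A, x.length = m → (∑ a : A, e (x ++ [a])) = ∑ a : A, e (a :: x))
    (s : List A) (hs : s.length = m) (w : List A) (hsw : s <+: w) (hlw : m + 1 ≤ w.length)
    (hcnt : ∀ y : List A, y.length = m + 1 → occ y w ≤ e y)
    (hxs : w.drop (w.length - m) ≠ s) :
    ∃ a : A, occ (w.drop (w.length - m) ++ [a]) w < e (w.drop (w.length - m) ++ [a]) := by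
  set x := w.drop (w.length - m) with hxdef
  have hx_len : x.length = m := by rw [hxdef, List.length_drop]; omega
  have hx_suff : x <:+ w := List.drop_suffix _ _
  have hO := occ_out x w (by omega)
  rw [if_pos hx_suff] at hO
  have hI := occ_in x w (by omega)
  have hnp : ¬ x <+: w := by
    intro hp
    exact hxs (prefix_unique hp hsw (by omega))
  rw [if_neg hnp, add_zero] at hI
  have hle : (∑ a : A, occ (a :: x) w) ≤ ∑ a : A, e (a :: x) :=
    Finset.sum_le_sum fun a _ => hcnt (a :: x) (by simp [hx_len])
  have hkey : (∑ a : A, occ (x ++ [a]) w) < ∑ a : A, e (x ++ [a]) := by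
    rw [hbal x hx_len]; omega
  by_contra hcon
  push_neg at hcon
  have hge : (∑ a : A, e (x ++ [a])) ≤ ∑ a : A, occ (x ++ [a]) w :=
    Finset.sum_le_sum fun a _ => hcon a
  omega

lemma extend_to_closed {m : ℕ} (e : List A → ℕ)
    (hbal : ∀ x : List A, x.length = m → (∑ a : A, e (x ++ [a])) = ∑ a : A, e (a :: x))
    (s : List A) (hs : s.length = m) (fuel : ℕ) :
    ∀ (w : List A), s <+: w → m + 1 ≤ w.length →
    (∀ y : List A, y.length = m + 1 → occ y w ≤ e y) →
    ((∑ φ : Fin (m+1) → A, e (List.ofFn φ)) ≤ (w.length + 1 - (m+1)) + fuel) →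
    ∃ w', w <+: w' ∧ (∀ y, y.length = m+1 → occ y w' ≤ e y) ∧ s <:+ w' := by
  induction fuel with
  | zero =>
    intro w hsw hlw hcnt htot
    by_cases hxs : w.drop (w.length - m) = s
    · exact ⟨w, List.prefix_refl _, hcnt, hxs ▸ List.drop_suffix _ _⟩
    · exfalso
      obtain ⟨a, ha⟩ := exists_strict_ext e hbal s hs w hsw hlw hcnt hxs
      set x := w.drop (w.length - m) with hxdef
      have hx_len : x.length = m := by rw [hxdef, List.length_drop]; omega
      obtain ⟨φ0, hφ0⟩ := exists_ofFn (n := m + 1) (x ++ [a]) (by simp [hx_len])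
      have hstrict : (∑ φ : Fin (m+1) → A, occ (List.ofFn φ) w)
          < ∑ φ : Fin (m+1) → A, e (List.ofFn φ) := by
        apply Finset.sum_lt_sum (fun φ _ => hcnt (List.ofFn φ) (by simp))
        exact ⟨φ0, Finset.mem_univ _, by rw [hφ0]; exact ha⟩
      rw [occ_total] at hstrict
      omega
  | succ f ih =>
    intro w hsw hlw hcnt htot
    by_cases hxs : w.drop (w.length - m) = s
    · exact ⟨w, List.prefix_refl _, hcnt, hxs ▸ List.drop_suffix _ _⟩
    · obtain ⟨a, ha⟩ := exists_strict_ext e hbal s hs w hsw hlw hcnt hxs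
      set x := w.drop (w.length - m) with hxdef
      have hx_len : x.length = m := by rw [hxdef, List.length_drop]; omega
      have hx_suff : x <:+ w := List.drop_suffix _ _
      have hcnt' : ∀ y : List A, y.length = m + 1 → occ y (w ++ [a]) ≤ e y := by
        intro y hy
        rw [occ_snoc a (by omega) hx_suff]
        by_cases hcase : y = x ++ [a]
        · rw [if_pos hcase, hcase]
          omega
        · rw [if_neg hcase, add_zero]
          exact hcnt y hy
      obtain ⟨w', hw'1, hw'2, hw'3⟩ := ih (w ++ [a])
        (hsw.trans (List.prefix_append _ _))
        (by simp; omega)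
        hcnt'
        (by simp only [List.length_append, List.length_singleton] at *; omega)
      exact ⟨w', (List.prefix_append w [a]).trans hw'1, hw'2, hw'3⟩
end S11

namespace S11
variable {A : Type*} [DecidableEq A] [Fintype A]

lemma occ_closed_balanced {m : ℕ} (z s : List A) (hs_len : s.length = m)
    (hpre : s <+: z) (hsuf : s <:+ z) (x : List A) (hx : x.length = m) :
    (∑ a : A, occ (x ++ [a]) z) = ∑ a : A, occ (a :: x) z := by
  have hm : x.length ≤ z.length := by
    have := hpre.length_le
    omega
  have hO := occ_out x z hm
  have hI := occ_in x z hm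
  by_cases hxs : x = s
  · rw [if_pos (hxs ▸ hsuf)] at hO
    rw [if_pos (hxs ▸ hpre)] at hI
    omega
  · rw [if_neg (fun h => hxs (suffix_unique h hsuf (by omega)))] at hO
    rw [if_neg (fun h => hxs (prefix_unique h hpre (by omega)))] at hI
    omega

lemma decomp (m : ℕ) : ∀ (n : ℕ) (e : List A → ℕ),
    (∀ x : List A, x.length = m → (∑ a : A, e (x ++ [a])) = ∑ a : A, e (a :: x)) →
    (∑ φ : Fin (m+1) → A, e (List.ofFn φ)) ≤ n →
    ∃ C : List (List A),
      (∀ z ∈ C, m + 1 ≤ z.length ∧ z.take m <+: z ∧ z.take m <:+ z) ∧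
      (∀ y : List A, y.length = m + 1 → ((C.map (occ y)).sum) = e y) := by
  intro n
  induction n with
  | zero =>
    intro e _ htot
    refine ⟨[], by simp, ?_⟩
    intro y hy
    obtain ⟨φ, rfl⟩ := exists_ofFn y hy
    have h0 : (∑ φ : Fin (m+1) → A, e (List.ofFn φ)) = 0 := by omega
    have := (Finset.sum_eq_zero_iff.mp h0) φ (Finset.mem_univ _)
    simpa using this.symm
  | succ n ih =>
    intro e hbal htot
    by_cases h0 : (∑ φ : Fin (m+1) → A, e (List.ofFn φ)) = 0
    · refine ⟨[], by simp, ?_⟩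
      intro y hy
      obtain ⟨φ, rfl⟩ := exists_ofFn y hy
      have := (Finset.sum_eq_zero_iff.mp h0) φ (Finset.mem_univ _)
      simpa using this.symm
    · obtain ⟨φ0, hφ0⟩ : ∃ φ0 : Fin (m+1) → A, 0 < e (List.ofFn φ0) := by
        by_contra hc
        push_neg at hc
        exact h0 (Finset.sum_eq_zero fun φ _ => by have := hc φ; omega)
      set w0 := List.ofFn φ0 with hw0
      have hw0_len : w0.length = m + 1 := by simp [hw0]
      set s := w0.take m with hsdef
      have hs_len : s.length = m := by
        rw [hsdef, List.length_take]; omega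
      have hs_pre : s <+: w0 := List.take_prefix _ _
      have hcnt0 : ∀ y : List A, y.length = m + 1 → occ y w0 ≤ e y := by
        intro y hy
        rw [occ_of_length_eq (by omega)]
        by_cases hc : y = w0
        · rw [if_pos hc, hc]; omega
        · rw [if_neg hc]; omega
      obtain ⟨z, hz_pre, hz_cnt, hz_suf⟩ := extend_to_closed e hbal s hs_len
        (∑ φ : Fin (m+1) → A, e (List.ofFn φ)) w0 hs_pre (by omega) hcnt0 (by omega)
      have hz_len : m + 1 ≤ z.length := by
        have := hz_pre.length_le; omega
      have htake : z.take m = s := by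
        obtain ⟨r, rfl⟩ := hz_pre
        rw [List.take_append]
        have h1 : m - w0.length = 0 := by omega
        rw [h1]
        simp [hsdef]
      set e' := fun y => e y - occ y z with he'
      have hsub : ∀ y : List A, y.length = m + 1 → e' y + occ y z = e y := fun y hy =>
        Nat.sub_add_cancel (hz_cnt y hy)
      have hbal' : ∀ x : List A, x.length = m →
          (∑ a : A, e' (x ++ [a])) = ∑ a : A, e' (a :: x) := by
        intro x hx
        have hzb := occ_closed_balanced z s hs_len (htake ▸ List.take_prefix m z)
          hz_suf x hx
        have h1 : (∑ a : A, e' (x ++ [a])) + (∑ a : A, occ (x ++ [a]) z)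
            = ∑ a : A, e (x ++ [a]) := by
          rw [← Finset.sum_add_distrib]
          exact Finset.sum_congr rfl fun a _ => hsub _ (by simp [hx])
        have h2 : (∑ a : A, e' (a :: x)) + (∑ a : A, occ (a :: x) z)
            = ∑ a : A, e (a :: x) := by
          rw [← Finset.sum_add_distrib]
          exact Finset.sum_congr rfl fun a _ => hsub _ (by simp [hx])
        have h3 := hbal x hx
        omega
      have htot' : (∑ φ : Fin (m+1) → A, e' (List.ofFn φ)) ≤ n := by
        have h1 : (∑ φ : Fin (m+1) → A, e' (List.ofFn φ))
            + (∑ φ : Fin (m+1) → A, occ (List.ofFn φ) z)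
            = ∑ φ : Fin (m+1) → A, e (List.ofFn φ) := by
          rw [← Finset.sum_add_distrib]
          exact Finset.sum_congr rfl fun φ _ => hsub _ (by simp)
        rw [occ_total] at h1
        omega
      obtain ⟨C', hC'1, hC'2⟩ := ih e' hbal' htot'
      refine ⟨z :: C', ?_, ?_⟩
      · intro z' hz'
        rw [List.mem_cons] at hz'
        rcases hz' with rfl | hz'
        · refine ⟨hz_len, List.take_prefix _ _, ?_⟩
          rw [htake]
          exact hz_suf
        · exact hC'1 z' hz'
      · intro y hy
        simp only [List.map_cons, List.sum_cons]
        rw [hC'2 y hy]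
        have := hsub y hy
        omega
end S11

namespace S11
variable {A : Type*} [DecidableEq A]

def glue (m : ℕ) (C : List (List A)) (p0 : List A) : List A → List (List A) → List A
  | w, [] => w ++ p0
  | w, x :: xs =>
      glue m C p0 (w ++ x ++ ((C.filter (fun z => z.take m == x)).map (fun z => z.drop m)).flatten) xs

lemma glue_prefix (m : ℕ) (C : List (List A)) (p0 : List A) :
    ∀ (xs : List (List A)) (w : List A), ∃ r, glue m C p0 w xs = w ++ r := by
  intro xs
  induction xs with
  | nil => exact fun w => ⟨p0, rfl⟩
  | cons x xs ih =>
    intro w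
    obtain ⟨r, hr⟩ := ih (w ++ x ++ ((C.filter (fun z => z.take m == x)).map (fun z => z.drop m)).flatten)
    exact ⟨x ++ ((C.filter (fun z => z.take m == x)).map (fun z => z.drop m)).flatten ++ r,
      by rw [glue, hr]; simp [List.append_assoc]⟩

lemma occ_chain {m : ℕ} (y : List A) (hy : y.length = m + 1) :
    ∀ (D : List (List A)) (x R : List A), x.length = m →
    (∀ z ∈ D, z.take m = x ∧ x <:+ z) →
    occ y (x ++ (((D.map (fun z => z.drop m)).flatten) ++ R))
      = ((D.map (occ y)).sum) + occ y (x ++ R) := by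
  intro D
  induction D with
  | nil => simp
  | cons z D' ih =>
    intro x R hx hD
    obtain ⟨hz1, hz2⟩ := hD z (List.mem_cons_self)
    have hzdec : x ++ z.drop m = z := by
      conv_rhs => rw [← List.take_append_drop m z]
      rw [hz1]
    have hassoc : x ++ (((z :: D').map (fun z => z.drop m)).flatten ++ R)
        = z ++ (((D'.map (fun z => z.drop m)).flatten) ++ R) := by
      calc x ++ (((z :: D').map (fun z => z.drop m)).flatten ++ R)
          = (x ++ z.drop m) ++ (((D'.map (fun z => z.drop m)).flatten) ++ R) := by
            simp [List.append_assoc]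
        _ = z ++ (((D'.map (fun z => z.drop m)).flatten) ++ R) := by rw [hzdec]
    rw [hassoc, occ_append y x z _ (by rw [hx]; exact hy) hz2,
      ih x R hx (fun z' hz' => hD z' (List.mem_cons_of_mem _ hz'))]
    simp only [List.map_cons, List.sum_cons]
    ring

lemma decide_or' (p q : Prop) [Decidable p] [Decidable q] :
    decide (p ∨ q) = (decide p || decide q) := by
  by_cases p <;> by_cases q <;> simp [*]

lemma sum_filter_split_bool (g : List A → ℕ) (p q : List A → Bool)
    (hpq : ∀ z, ¬(p z = true ∧ q z = true)) : ∀ (C : List (List A)),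
    ((C.filter (fun z => p z || q z)).map g).sum
      = ((C.filter p).map g).sum + ((C.filter q).map g).sum := by
  intro C
  induction C with
  | nil => simp
  | cons z C' ih =>
    cases hp : p z
    · cases hq : q z
      · simp [List.filter_cons, hp, hq, ih]
      · simp [List.filter_cons, hp, hq, ih]
        omega
    · cases hq : q z
      · simp [List.filter_cons, hp, hq, ih]
        omega
      · exact absurd ⟨hp, hq⟩ (hpq z)
  
lemma sum_filter_split (g : List A → ℕ) (f : List A → List A) (x : List A) (xs : List (List A))
    (hx : x ∉ xs) : ∀ (C : List (List A)),
    ((C.filter (fun z => decide (f z ∈ x :: xs))).map g).sum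
      = ((C.filter (fun z => f z == x)).map g).sum
        + ((C.filter (fun z => decide (f z ∈ xs))).map g).sum := by
  intro C
  have hpred : (fun z => decide (f z ∈ x :: xs)) = (fun z => (f z == x) || decide (f z ∈ xs)) := by
    funext z
    by_cases h1 : f z = x <;> by_cases h2 : f z ∈ xs <;> simp [h1, h2]
  rw [hpred]
  apply sum_filter_split_bool
  intro z ⟨h1, h2⟩
  rw [beq_iff_eq] at h1
  rw [decide_eq_true_iff] at h2
  exact hx (h1 ▸ h2)

variable [Fintype A]

lemma glue_occ {m : ℕ} (C : List (List A))
    (hC : ∀ z ∈ C, m + 1 ≤ z.length ∧ z.take m <+: z ∧ z.take m <:+ z)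
    (p0 : List A) (y : List A) (hy : y.length = m + 1) :
    ∀ (xs : List (List A)) (w : List A), xs.Nodup → (∀ x ∈ xs, x.length = m) →
    occ y (glue m C p0 w xs)
      = occ y (w ++ (xs.flatten ++ p0))
        + ((C.filter (fun z => decide (z.take m ∈ xs))).map (occ y)).sum := by
  intro xs
  induction xs with
  | nil => intro w _ _; simp [glue]
  | cons x xs ih =>
    intro w hnd hlen
    rw [glue]
    set Sx := ((C.filter (fun z => z.take m == x)).map (fun z => z.drop m)).flatten with hSx
    rw [ih _ (List.nodup_cons.mp hnd).2 (fun x' hx' => hlen x' (List.mem_cons_of_mem _ hx'))]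
    have hxlen : x.length = m := hlen x (List.mem_cons_self)
    have hassoc1 : w ++ x ++ Sx ++ (xs.flatten ++ p0) = (w ++ x) ++ (Sx ++ (xs.flatten ++ p0)) := by
      simp [List.append_assoc]
    rw [hassoc1, occ_append y x (w ++ x) _ (by rw [hxlen]; exact hy) (List.suffix_append _ _)]
    have hchain := occ_chain y hy (C.filter (fun z => z.take m == x)) x (xs.flatten ++ p0) hxlen
      (by
        intro z hz
        rw [List.mem_filter] at hz
        have h1 : z.take m = x := by simpa using hz.2
        obtain ⟨_, _, h3⟩ := hC z hz.1
        exact ⟨h1, h1 ▸ h3⟩)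
    rw [hchain]
    have hassoc2 : occ y ((w ++ x) ++ (xs.flatten ++ p0)) = occ y (w ++ ((x :: xs).flatten ++ p0)) := by
      simp [List.append_assoc]
    have hback : occ y (w ++ x) + occ y (x ++ (xs.flatten ++ p0)) = occ y (w ++ ((x :: xs).flatten ++ p0)) := by
      rw [← occ_append y x (w ++ x) _ (by rw [hxlen]; exact hy) (List.suffix_append _ _), hassoc2]
    have hsplit := sum_filter_split (occ y) (fun z => z.take m) x xs (List.nodup_cons.mp hnd).1 C
    rw [hsplit]
    omega
end S11

namespace S11
variable {A : Type*} [DecidableEq A]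

lemma exists_nat_mul (q : ℚ) (N : ℕ) (hd : q.den ∣ N) (hq : 0 < q) (hN : 0 < N) :
    ∃ m : ℕ, (m : ℚ) = q * N ∧ 1 ≤ m := by
  obtain ⟨t, ht⟩ := hd
  have hnum : (0:ℤ) < q.num := Rat.num_pos.mpr hq
  refine ⟨q.num.toNat * t, ?_, ?_⟩
  · have h1 : ((q.num.toNat : ℕ) : ℚ) = (q.num : ℚ) := by
      rw [← Int.cast_natCast, Int.toNat_of_nonneg hnum.le]
    rw [ht]
    push_cast
    rw [h1, ← Rat.mul_den_eq_num]
    ring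
  · have ht' : 0 < t := by
      rcases Nat.eq_zero_or_pos t with h | h
      · rw [h, Nat.mul_zero] at ht; omega
      · exact h
    have : 0 < q.num.toNat := by omega
    exact Nat.one_le_iff_ne_zero.mpr (by positivity)

lemma getD_ofFn {n : ℕ} (φ : Fin n → A) (a0 : A) (j : Fin n) :
    (List.ofFn φ).getD (j : ℕ) a0 = φ j := by
  rw [List.getD_eq_getElem _ _ (by simp)]
  simp

lemma toFn_snoc (k : ℕ) (x : List A) (a0 a : A) (hx : x.length = k + 1) :
    (fun j : Fin (k+2) => (x ++ [a]).getD (j : ℕ) a0)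
      = Fin.snoc (fun j : Fin (k+1) => x.getD (j : ℕ) a0) a := by
  funext j
  refine Fin.lastCases ?_ ?_ j
  · rw [Fin.snoc_last]
    have : ((Fin.last (k+1) : Fin (k+2)) : ℕ) = k + 1 := rfl
    rw [this, List.getD_eq_getElem _ _ (by simp [hx]), List.getElem_append_right (by omega)]
    simp [hx]
  · intro i
    rw [Fin.snoc_castSucc]
    have hc : ((i.castSucc : Fin (k+2)) : ℕ) = (i : ℕ) := rfl
    rw [hc, List.getD_eq_getElem _ _ (by simp [hx]),
      List.getD_eq_getElem _ _ (by omega),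
      List.getElem_append_left (by omega)]

lemma toFn_cons (k : ℕ) (x : List A) (a0 a : A) (hx : x.length = k + 1) :
    (fun j : Fin (k+2) => (a :: x).getD (j : ℕ) a0)
      = Fin.cons a (fun j : Fin (k+1) => x.getD (j : ℕ) a0) := by
  funext j
  refine Fin.cases ?_ ?_ j
  · simp
  · intro i
    rw [Fin.cons_succ]
    have hc : ((i.succ : Fin (k+2)) : ℕ) = (i : ℕ) + 1 := rfl
    rw [hc, List.getD_cons_succ]
end S11

theorem stmt11 {A : Type*} [Fintype A] [DecidableEq A] (k : ℕ)
    (η : (Fin (k + 2) → A) → ℝ) (hprob : IsProbVec η)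
    (hrat : ∀ φ, ∃ q : ℚ, η φ = (q : ℝ)) (hpos : ∀ φ, 0 < η φ)
    (hsi : ShiftInv k η) (α : List A) :
    ∃ β : List A, k + 2 ≤ (α ++ β).length ∧ ∀ φ, freq (k + 2) (α ++ β) φ = η φ := by
  classical
  open S11 in
  -- A is nonempty
  have hA : Nonempty A := by
    by_contra h
    have hE : IsEmpty (Fin (k+2) → A) := ⟨fun f => h ⟨f 0⟩⟩
    have h2 := hprob.2
    rw [Finset.univ_eq_empty, Finset.sum_empty] at h2
    exact absurd h2 (by norm_num)
  obtain ⟨a0⟩ := hA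
  -- rational values with common denominator N
  set q : (Fin (k+2) → A) → ℚ := fun φ => (hrat φ).choose with hqdef
  have hqη : ∀ φ, η φ = ((q φ : ℚ) : ℝ) := fun φ => (hrat φ).choose_spec
  have hqpos : ∀ φ, 0 < q φ := by
    intro φ
    have := hpos φ
    rw [hqη φ] at this
    exact_mod_cast this
  set N : ℕ := ∏ φ : Fin (k+2) → A, (q φ).den with hNdef
  have hN : 0 < N := Finset.prod_pos (fun φ _ => (q φ).den_pos)
  have hMex : ∀ φ : Fin (k+2) → A, ∃ m : ℕ, ((m : ℝ) = η φ * N ∧ 1 ≤ m) := by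
    intro φ
    obtain ⟨m, hm, hm1⟩ := exists_nat_mul (q φ) N
      (Finset.dvd_prod_of_mem _ (Finset.mem_univ φ)) (hqpos φ) hN
    refine ⟨m, ?_, hm1⟩
    have := congrArg (fun r : ℚ => (r : ℝ)) hm
    push_cast at this
    rw [hqη φ]
    exact this
  choose Mf hMf hMf1 using hMex
  -- sum of Mf equals N
  have hsumN : (∑ φ : Fin (k+2) → A, Mf φ) = N := by
    have hsumR : (∑ φ : Fin (k+2) → A, (Mf φ : ℝ)) = N := by
      calc (∑ φ : Fin (k+2) → A, (Mf φ : ℝ)) = ∑ φ : Fin (k+2) → A, η φ * N :=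
            Finset.sum_congr rfl (fun φ _ => hMf φ)
        _ = (∑ φ : Fin (k+2) → A, η φ) * N := (Finset.sum_mul _ _ _).symm
        _ = N := by rw [hprob.2, one_mul]
    have : ((∑ φ : Fin (k+2) → A, Mf φ : ℕ) : ℝ) = ((N : ℕ) : ℝ) := by
      push_cast
      exact hsumR
    exact_mod_cast this
  -- integer shift-invariance
  have hbalM : ∀ ψ : Fin (k+1) → A,
      (∑ a : A, Mf (Fin.cons a ψ)) = ∑ a : A, Mf (Fin.snoc ψ a) := by
    intro ψ
    have hR : (∑ a : A, (Mf (Fin.cons a ψ) : ℝ)) = ∑ a : A, (Mf (Fin.snoc ψ a) : ℝ) := by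
      calc (∑ a : A, (Mf (Fin.cons a ψ) : ℝ)) = ∑ a : A, η (Fin.cons a ψ) * N :=
            Finset.sum_congr rfl (fun a _ => hMf _)
        _ = (∑ a : A, η (Fin.cons a ψ)) * N := (Finset.sum_mul _ _ _).symm
        _ = (∑ a : A, η (Fin.snoc ψ a)) * N := by rw [hsi ψ]
        _ = ∑ a : A, η (Fin.snoc ψ a) * N := Finset.sum_mul _ _ _
        _ = _ := Finset.sum_congr rfl (fun a _ => (hMf _).symm)
    have : ((∑ a : A, Mf (Fin.cons a ψ) : ℕ) : ℝ) = ((∑ a : A, Mf (Fin.snoc ψ a) : ℕ) : ℝ) := by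
      push_cast
      exact hR
    exact_mod_cast this
  -- list-level measure
  set mL : List A → ℕ := fun y => Mf (fun j : Fin (k+2) => y.getD (j : ℕ) a0) with hmLdef
  have hmL_ofFn : ∀ φ : Fin (k+2) → A, mL (List.ofFn φ) = Mf φ := by
    intro φ
    have : (fun j : Fin (k+2) => (List.ofFn φ).getD (j : ℕ) a0) = φ := by
      funext j
      exact getD_ofFn φ a0 j
    rw [hmLdef]
    simp only [this]
  have hmL1 : ∀ y, 1 ≤ mL y := fun y => hMf1 _
  have hbalL : ∀ x : List A, x.length = k+1 →
      (∑ a : A, mL (x ++ [a])) = ∑ a : A, mL (a :: x) := by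
    intro x hx
    have h1 : ∀ a : A, mL (x ++ [a]) = Mf (Fin.snoc (fun j : Fin (k+1) => x.getD (j : ℕ) a0) a) := by
      intro a
      rw [hmLdef]
      simp only [toFn_snoc k x a0 a hx]
    have h2 : ∀ a : A, mL (a :: x) = Mf (Fin.cons a (fun j : Fin (k+1) => x.getD (j : ℕ) a0)) := by
      intro a
      rw [hmLdef]
      simp only [toFn_cons k x a0 a hx]
    simp only [h1, h2]
    exact (hbalM _).symm
  -- base word
  set α0 : List A := α ++ List.replicate (k+1) a0 with hα0def
  have hα0 : k+1 ≤ α0.length := by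
    rw [hα0def, List.length_append, List.length_replicate]
    omega
  set p0 : List A := α0.take (k+1) with hp0def
  have hp0 : p0.length = k+1 := by
    rw [hp0def, List.length_take]
    omega
  set verts : List (List A) := (Finset.univ : Finset (Fin (k+1) → A)).toList.map List.ofFn
    with hvertsdef
  have hverts_len : ∀ x ∈ verts, x.length = k+1 := by
    intro x hx
    rw [hvertsdef, List.mem_map] at hx
    obtain ⟨φ, _, rfl⟩ := hx
    simp
  have hverts_nodup : verts.Nodup := by
    rw [hvertsdef]
    exact (Finset.nodup_toList _).map (fun a b h => List.ofFn_inj.mp h)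
  have hverts_mem : ∀ x : List A, x.length = k+1 → x ∈ verts := by
    intro x hx
    obtain ⟨φ, rfl⟩ := exists_ofFn x hx
    rw [hvertsdef, List.mem_map]
    exact ⟨φ, Finset.mem_toList.mpr (Finset.mem_univ _), rfl⟩
  set base : List A := α0 ++ (verts.flatten ++ p0) with hbasedef
  have hp0_pre : p0 <+: base := by
    rw [hbasedef, hp0def]
    exact (List.take_prefix _ _).trans (List.prefix_append _ _)
  have hp0_suf : p0 <:+ base := by
    rw [hbasedef]
    exact (List.suffix_append verts.flatten p0).trans (List.suffix_append _ _)
  have hbase_len : k + 2 ≤ base.length := by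
    rw [hbasedef]
    simp only [List.length_append]
    omega
  set B : List A → ℕ := fun y => occ y base with hBdef
  have hBbal : ∀ x : List A, x.length = k+1 →
      (∑ a : A, B (x ++ [a])) = ∑ a : A, B (a :: x) :=
    fun x hx => occ_closed_balanced base p0 hp0 hp0_pre hp0_suf x hx
  set T : ℕ := ∑ φ : Fin (k+2) → A, B (List.ofFn φ) with hTdef
  have hT_eq : T = base.length + 1 - (k+2) := by
    rw [hTdef, hBdef]
    exact occ_total base
  have hT1 : 1 ≤ T := by omega
  set c : List A → ℕ := fun y => T * mL y with hcdef
  have hBc : ∀ y : List A, y.length = k+2 → B y ≤ c y := by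
    intro y hy
    obtain ⟨φy, rfl⟩ := exists_ofFn y hy
    have h1 : B (List.ofFn φy) ≤ T := by
      rw [hTdef]
      exact Finset.single_le_sum (f := fun φ => B (List.ofFn φ))
        (fun φ _ => Nat.zero_le _) (Finset.mem_univ φy)
    calc B (List.ofFn φy) ≤ T := h1
      _ ≤ T * mL (List.ofFn φy) := Nat.le_mul_of_pos_right T (hmL1 _)
  set d : List A → ℕ := fun y => c y - B y with hddef
  have hd_apply : ∀ y, d y = c y - B y := fun _ => rfl
  have hc_apply : ∀ y, c y = T * mL y := fun _ => rfl
  have hdbal : ∀ x : List A, x.length = k+1 →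
      (∑ a : A, d (x ++ [a])) = ∑ a : A, d (a :: x) := by
    intro x hx
    have hcbal : (∑ a : A, c (x ++ [a])) = ∑ a : A, c (a :: x) := by
      simp only [hc_apply]
      rw [← Finset.mul_sum, ← Finset.mul_sum, hbalL x hx]
    have h1 : (∑ a : A, d (x ++ [a])) + (∑ a : A, B (x ++ [a])) = ∑ a : A, c (x ++ [a]) := by
      rw [← Finset.sum_add_distrib]
      refine Finset.sum_congr rfl (fun a _ => ?_)
      have := hBc (x ++ [a]) (by simp [hx])
      have e2 := hd_apply (x ++ [a])
      omega
    have h2 : (∑ a : A, d (a :: x)) + (∑ a : A, B (a :: x)) = ∑ a : A, c (a :: x) := by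
      rw [← Finset.sum_add_distrib]
      refine Finset.sum_congr rfl (fun a _ => ?_)
      have := hBc (a :: x) (by simp [hx])
      have e2 := hd_apply (a :: x)
      omega
    have h3 := hBbal x hx
    omega
  obtain ⟨C, hC1, hC2⟩ := decomp (k+1) (∑ φ : Fin (k+2) → A, d (List.ofFn φ)) d hdbal le_rfl
  set w : List A := glue (k+1) C p0 α0 verts with hwdef
  obtain ⟨r, hr⟩ := glue_prefix (k+1) C p0 verts α0
  have hw_r : w = α0 ++ r := hr
  -- occurrence counts of w
  have hocc : ∀ y : List A, y.length = k+2 → occ y w = c y := by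
    intro y hy
    have hg := glue_occ C hC1 p0 y hy verts α0 hverts_nodup hverts_len
    have hfilter : C.filter (fun z => decide (z.take (k+1) ∈ verts)) = C := by
      rw [List.filter_eq_self]
      intro z hz
      obtain ⟨hz1, _, _⟩ := hC1 z hz
      apply decide_eq_true
      apply hverts_mem
      rw [List.length_take]
      omega
    rw [show w = glue (k+1) C p0 α0 verts from rfl, hg, hfilter, hC2 y hy]
    have hb := hBc y hy
    have e1 : B y = occ y (α0 ++ (verts.flatten ++ p0)) := rfl
    have e2 := hd_apply y
    omega
  -- length of w
  have hlenw : w.length + 1 - (k+2) = T * N := by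
    have h1 : (∑ φ : Fin (k+2) → A, occ (List.ofFn φ) w) = w.length + 1 - (k+2) := occ_total w
    have h2 : (∑ φ : Fin (k+2) → A, occ (List.ofFn φ) w) = T * N := by
      calc (∑ φ : Fin (k+2) → A, occ (List.ofFn φ) w)
          = ∑ φ : Fin (k+2) → A, c (List.ofFn φ) :=
            Finset.sum_congr rfl (fun φ _ => hocc _ (by simp))
        _ = ∑ φ : Fin (k+2) → A, T * Mf φ := by
            refine Finset.sum_congr rfl (fun φ _ => ?_)
            rw [hc_apply, hmL_ofFn]
        _ = T * ∑ φ : Fin (k+2) → A, Mf φ := (Finset.mul_sum _ _ _).symm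
        _ = T * N := by rw [hsumN]
    omega
  have hw_ge : k + 1 ≤ w.length := by
    rw [hw_r, List.length_append]
    omega
  have hTN : 1 ≤ T * N := Nat.mul_pos hT1 hN
  have hwlen_eq : w.length = T * N + k + 1 := by omega
  -- produce β
  refine ⟨List.replicate (k+1) a0 ++ r, ?_, ?_⟩
  · have : α ++ (List.replicate (k+1) a0 ++ r) = w := by
      rw [hw_r, hα0def, List.append_assoc]
    rw [this]
    omega
  · intro φ
    have hαβ : α ++ (List.replicate (k+1) a0 ++ r) = w := by
      rw [hw_r, hα0def, List.append_assoc]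
    rw [hαβ]
    rw [freq]
    have hwK : k + 2 ≤ w.length := by omega
    rw [occCount_eq_occ w φ hwK, hocc (List.ofFn φ) (by simp), hc_apply, hmL_ofFn]
    have hden : w.length - (k+2) + 1 = T * N := by omega
    rw [hden]
    have hMfR := hMf φ
    have hT0 : (T : ℝ) ≠ 0 := by positivity
    have hN0 : (N : ℝ) ≠ 0 := by
      have : (0:ℝ) < N := by exact_mod_cast hN
      linarith
    push_cast
    rw [hMfR]
    field_simp
end

section
/- Let η be a shift-invariant probability measure on Σ^k, and let ω = a_0 a_1 ⋯ a_{n−1} ∈ Σ^n with n ≥ k satisfy fr_ω^k = η. Then the (k−1)-prefix of ω equals its (k−1)-suffix: a_0 ⋯ a_{k−2} = a_{n−k+1} ⋯ a_{n−1}. -/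
open Finset

theorem stmt13 {A : Type*} [Fintype A] [DecidableEq A] (k : ℕ)
    (η : (Fin (k + 2) → A) → ℝ) (hprob : IsProbVec η) (hsi : ShiftInv k η)
    (ω : List A) (hlen : k + 2 ≤ ω.length)
    (hfreq : ∀ φ, freq (k + 2) ω φ = η φ) :
    ω.take (k + 1) = ω.drop (ω.length - (k + 1)) := by
  classical
  set n := ω.length with hn
  set m := ω.length - (k + 2) + 1 with hm
  -- the match predicate for words of length k+1
  set M : (Fin (k + 1) → A) → ℕ → Prop :=
    fun ψ i => ∀ j : Fin (k + 1), ω[i + (j : ℕ)]? = some (ψ j) with hM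
  have hmle : m ≤ n - 1 + 1 := by omega
  -- occurrence counts equal η φ * m
  have hocc : ∀ φ, (occCount (k + 2) ω φ : ℝ) = η φ * m := by
    intro φ
    have := hfreq φ
    rw [freq] at this
    have hm0 : ((ω.length - (k + 2) + 1 : ℕ) : ℝ) ≠ 0 := by
      positivity
    rw [div_eq_iff hm0] at this
    exact this
  -- key combinatorial identity, `cons` side
  have hcons : ∀ ψ : Fin (k + 1) → A,
      ∑ a : A, occCount (k + 2) ω (Fin.cons a ψ) =
        ∑ i ∈ Finset.range m, if M ψ (i + 1) then 1 else 0 := by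
    intro ψ
    have : ∀ a : A, occCount (k + 2) ω (Fin.cons a ψ) =
        ∑ i ∈ Finset.range m, if (ω[i]? = some a ∧ M ψ (i + 1)) then 1 else 0 := by
      intro a
      rw [occCount, Finset.card_filter]
      apply Finset.sum_congr rfl
      intro i _
      congr 1
      apply propext
      constructor
      · intro h
        constructor
        · have h0 := h 0
          simpa using h0
        · intro j
          have hj := h j.succ
          simp only [Fin.cons_succ, Fin.val_succ] at hj
          rw [show i + 1 + (j : ℕ) = i + ((j : ℕ) + 1) by omega]
          exact hj
      · rintro ⟨h0, h1⟩ j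
        induction j using Fin.cases with
        | zero => simpa using h0
        | succ j =>
          have := h1 j
          simp only [Fin.cons_succ, Fin.val_succ]
          rw [show i + ((j : ℕ) + 1) = i + 1 + (j : ℕ) by omega]
          exact this
    simp only [this]
    rw [Finset.sum_comm]
    apply Finset.sum_congr rfl
    intro i hi
    have hilt : i < n := by
      simp only [Finset.mem_range] at hi; omega
    have hg : ω[i]? = some (ω.get ⟨i, hilt⟩) := List.getElem?_eq_getElem hilt
    by_cases hMi : M ψ (i + 1)
    · rw [if_pos hMi]
      have hiff : ∀ a : A, (ω[i]? = some a ∧ M ψ (i + 1)) ↔ a = ω.get ⟨i, hilt⟩ := by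
        intro a
        rw [hg]
        simp only [Option.some.injEq]
        constructor
        · rintro ⟨h, -⟩; exact h.symm
        · intro h; exact ⟨h.symm, hMi⟩
      simp only [hiff]
      rw [Finset.sum_ite_eq' Finset.univ (ω.get ⟨i, hilt⟩) (fun _ => 1)]
      simp
    · simp [hMi]
  -- key combinatorial identity, `snoc` side
  have hsnoc : ∀ ψ : Fin (k + 1) → A,
      ∑ a : A, occCount (k + 2) ω (Fin.snoc ψ a) =
        ∑ i ∈ Finset.range m, if M ψ i then 1 else 0 := by
    intro ψ
    have : ∀ a : A, occCount (k + 2) ω (Fin.snoc ψ a) =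
        ∑ i ∈ Finset.range m, if (ω[i + (k + 1)]? = some a ∧ M ψ i) then 1 else 0 := by
      intro a
      rw [occCount, Finset.card_filter]
      apply Finset.sum_congr rfl
      intro i _
      congr 1
      apply propext
      constructor
      · intro h
        constructor
        · have hl := h (Fin.last (k + 1))
          simpa [Fin.snoc_last, Fin.val_last] using hl
        · intro j
          have hj := h j.castSucc
          simpa [Fin.snoc_castSucc, Fin.coe_castSucc] using hj
      · rintro ⟨h0, h1⟩ j
        induction j using Fin.lastCases with
        | last => simpa [Fin.snoc_last, Fin.val_last] using h0
        | cast j =>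
          have := h1 j
          simpa [Fin.snoc_castSucc, Fin.coe_castSucc] using this
    simp only [this]
    rw [Finset.sum_comm]
    apply Finset.sum_congr rfl
    intro i hi
    have hilt : i + (k + 1) < n := by
      simp only [Finset.mem_range] at hi; omega
    have hg : ω[i + (k + 1)]? = some (ω.get ⟨i + (k + 1), hilt⟩) := List.getElem?_eq_getElem hilt
    by_cases hMi : M ψ i
    · rw [if_pos hMi]
      have hiff : ∀ a : A, (ω[i + (k + 1)]? = some a ∧ M ψ i) ↔ a = ω.get ⟨i + (k + 1), hilt⟩ := by
        intro a
        rw [hg]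
        simp only [Option.some.injEq]
        constructor
        · rintro ⟨h, -⟩; exact h.symm
        · intro h; exact ⟨h.symm, hMi⟩
      simp only [hiff]
      rw [Finset.sum_ite_eq' Finset.univ (ω.get ⟨i + (k + 1), hilt⟩) (fun _ => 1)]
      simp
    · simp [hMi]
  -- shift invariance transfers to counts
  have hkey : ∀ ψ : Fin (k + 1) → A,
      (∑ i ∈ Finset.range m, if M ψ (i + 1) then 1 else 0) =
        ∑ i ∈ Finset.range m, if M ψ i then (1 : ℕ) else 0 := by
    intro ψ
    rw [← hcons, ← hsnoc]
    have : ((∑ a : A, occCount (k + 2) ω (Fin.cons a ψ) : ℕ) : ℝ) =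
        ((∑ a : A, occCount (k + 2) ω (Fin.snoc ψ a) : ℕ) : ℝ) := by
      push_cast
      simp only [hocc]
      rw [← Finset.sum_mul, ← Finset.sum_mul, hsi ψ]
    exact_mod_cast this
  -- take ψ to be the prefix of ω
  set ψ : Fin (k + 1) → A := fun j => ω.get ⟨(j : ℕ), lt_of_lt_of_le j.isLt (by omega)⟩ with hψ
  have hM0 : M ψ 0 := by
    intro j
    rw [zero_add]
    exact List.getElem?_eq_getElem _
  have hMm : M ψ m := by
    have e1 : (∑ i ∈ Finset.range m, if M ψ (i + 1) then 1 else 0) + (if M ψ 0 then 1 else 0) =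
        ∑ i ∈ Finset.range (m + 1), if M ψ i then (1 : ℕ) else 0 :=
      (Finset.sum_range_succ' (fun i => if M ψ i then (1 : ℕ) else 0) m).symm
    have e2 : ∑ i ∈ Finset.range (m + 1), (if M ψ i then (1 : ℕ) else 0) =
        (∑ i ∈ Finset.range m, if M ψ i then 1 else 0) + (if M ψ m then 1 else 0) :=
      Finset.sum_range_succ _ m
    rw [hkey ψ] at e1
    rw [e2] at e1
    rw [if_pos hM0] at e1
    by_contra hc
    rw [if_neg hc] at e1
    omega
  -- now conclude the list equality
  have hmn : ω.length - (k + 1) = m := by omega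
  rw [hmn]
  apply List.ext_get
  · simp only [List.length_take, List.length_drop]
    omega
  · intro i h1 h2
    have hik : i < k + 1 := by
      simp only [List.length_take] at h1; omega
    have hmi : m + i < n := by omega
    have hgi := hMm ⟨i, hik⟩
    have hgm : ω[m + i]? = some (ω.get ⟨m + i, hmi⟩) := List.getElem?_eq_getElem hmi
    rw [hgm] at hgi
    have heq : ω.get ⟨m + i, hmi⟩ = ψ ⟨i, hik⟩ := Option.some.inj hgi
    simp only [List.get_eq_getElem, List.getElem_take, List.getElem_drop]
    rw [show ψ ⟨i, hik⟩ = ω.get ⟨i, _⟩ from rfl] at heq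
    simp only [List.get_eq_getElem] at heq
    exact heq.symm
end

section
/- Let η be a rational shift-invariant probability measure on Σ^k, and let G_η be the De-Bruijn-type multigraph on vertex set Σ^{k−1} with Mη(a_0⋯a_{k−1}) parallel edges from a_0⋯a_{k−2} to a_1⋯a_{k−1} (M the least integer making Mη integral), with isolated vertices removed. Then there exists a word ω with fr_ω^k = η if and only if G_η is strongly connected. -/
open Finset

/-- The edge relation of the De-Bruijn-type graph `G_η`: an edge from `u` to `v`
whenever there is a `k`-tuple `φ` with `η φ > 0`, whose `(k-1)`-prefix is `u`
and whose `(k-1)`-suffix is `v`. (Strong connectivity of the multigraph depends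
only on which tuples carry positive mass, not on the multiplicities `Mη(φ)`.) -/
def deBruijnEdge {A : Type*} {k : ℕ} (η : (Fin (k + 2) → A) → ℝ)
    (u v : Fin (k + 1) → A) : Prop :=
  ∃ φ : Fin (k + 2) → A, 0 < η φ ∧
    u = (fun j : Fin (k + 1) => φ j.castSucc) ∧ v = (fun j : Fin (k + 1) => φ j.succ)

def nonIsolated {A : Type*} {k : ℕ} (η : (Fin (k + 2) → A) → ℝ)
    (u : Fin (k + 1) → A) : Prop :=
  ∃ v, deBruijnEdge η u v ∨ deBruijnEdge η v u


set_option linter.unusedSectionVars false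
set_option maxHeartbeats 1000000
set_option linter.unusedSectionVars false
set_option maxHeartbeats 1000000
set_option linter.unusedSectionVars false
set_option maxHeartbeats 1000000
set_option linter.unusedSectionVars false
set_option maxHeartbeats 1000000

namespace EulerAux

variable {V E : Type*} [DecidableEq V] [DecidableEq E] [Fintype E]

def deg (p : E → V) (m : E → ℕ) (v : V) : ℕ :=
  ∑ e ∈ Finset.univ.filter (fun e => p e = v), m e

lemma deg_cons (p : E → V) (e : E) (l : List E) (v : V) :
    deg p (fun f => (e :: l).count f) v
      = deg p (fun f => l.count f) v + (if p e = v then 1 else 0) := by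
  classical
  simp only [deg, List.count_cons, beq_iff_eq, Finset.sum_add_distrib]
  congr 1
  simp [Finset.sum_ite_eq]

lemma length_eq_sum_count (l : List E) : l.length = ∑ e : E, l.count e := by
  induction l with
  | nil => simp
  | cons a t ih =>
    simp only [List.length_cons, List.count_cons, beq_iff_eq, Finset.sum_add_distrib]
    rw [← ih]
    simp [Finset.sum_ite_eq]

lemma deg_le_deg (p : E → V) {m m' : E → ℕ} (h : ∀ e, m e ≤ m' e) (v : V) :
    deg p m v ≤ deg p m' v :=
  Finset.sum_le_sum fun e _ => h e

variable (src tgt : E → V)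

lemma trail_count (v : V) :
    ∀ (l : List E) (h : l ≠ []), List.Chain' (fun e f => tgt e = src f) l →
      deg src (fun f => l.count f) v + (if tgt (l.getLast h) = v then 1 else 0)
        = deg tgt (fun f => l.count f) v + (if src (l.head h) = v then 1 else 0)
  | [e], _, _ => by
    have h1 : deg src (fun f => List.count f ([] : List E)) v = 0 := by simp [deg]
    have h2 : deg tgt (fun f => List.count f ([] : List E)) v = 0 := by simp [deg]
    simp only [deg_cons, List.getLast_singleton, List.head_cons, h1, h2]
    simp only [zero_add]; exact Nat.add_comm _ _
  | e :: f :: t, _, hc => by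
    obtain ⟨hef, hc'⟩ := List.isChain_cons_cons.mp hc
    have ih := trail_count v (f :: t) (by simp) hc'
    have hlast : (e :: f :: t).getLast (by simp) = (f :: t).getLast (by simp) :=
      List.getLast_cons _
    rw [hlast, List.head_cons]
    rw [List.head_cons] at ih
    simp only [deg_cons] at ih ⊢
    have hv : (if src f = v then (1:ℕ) else 0) = (if tgt e = v then 1 else 0) := by rw [hef]
    split_ifs at ih hv ⊢ <;> omega

lemma extract (m : E → ℕ) (hbal : ∀ v, deg src m v = deg tgt m v) (w : V)
    (hw : ∃ e, 0 < m e ∧ src e = w) :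
    ∃ c : List E, ∃ hc : c ≠ [], (∀ e, c.count e ≤ m e) ∧
      List.Chain' (fun e f => tgt e = src f) c ∧
      src (c.head hc) = w ∧ tgt (c.getLast hc) = w := by
  classical
  obtain ⟨e₀, he₀, hsrc₀⟩ := hw
  set N := ∑ e : E, m e with hN
  set P : List E → Prop := fun l =>
    (l ≠ []) ∧ (∀ e, l.count e ≤ m e) ∧
      List.Chain' (fun e f => tgt e = src f) l ∧
      ∀ h : l ≠ [], src (l.head h) = w with hP
  have hlenP : ∀ l, P l → l.length ≤ N := by
    intro l hl
    rw [length_eq_sum_count]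
    exact Finset.sum_le_sum fun e _ => hl.2.1 e
  set Q : ℕ → Prop := fun n => ∃ l, P l ∧ l.length = n with hQ
  have hPe0 : P [e₀] := by
    refine ⟨by simp, ?_, List.isChain_singleton _, fun h => by simpa using hsrc₀⟩
    intro e
    rcases eq_or_ne e e₀ with rfl | h
    · simp; omega
    · simp [List.count_cons, h, Ne.symm h]
  have hQ1 : Q 1 := ⟨[e₀], hPe0, by simp⟩
  have h1N : 1 ≤ N := by simpa using hlenP [e₀] hPe0
  set n := Nat.findGreatest Q N with hn
  have hQn : Q n := Nat.findGreatest_spec h1N hQ1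
  obtain ⟨c, hPc, hlen⟩ := hQn
  obtain ⟨hcne, hcnt, hchain, hhead⟩ := hPc
  refine ⟨c, hcne, hcnt, hchain, hhead hcne, ?_⟩
  by_contra hx
  have htc := trail_count src tgt (tgt (c.getLast hcne)) c hcne hchain
  rw [if_pos rfl, if_neg (by rw [hhead hcne]; exact fun h => hx h.symm)] at htc
  have h2 : deg tgt (fun f => c.count f) (tgt (c.getLast hcne))
      ≤ deg tgt m (tgt (c.getLast hcne)) := deg_le_deg tgt hcnt _
  have h3 : deg src (fun f => c.count f) (tgt (c.getLast hcne))
      < deg src m (tgt (c.getLast hcne)) := by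
    rw [hbal]; omega
  simp only [deg] at h3
  obtain ⟨g, hg, hlt⟩ := Finset.exists_lt_of_sum_lt h3
  rw [Finset.mem_filter] at hg
  have hcP : P (c ++ [g]) := by
    refine ⟨by simp, ?_, ?_, ?_⟩
    · intro e
      rw [List.count_append]
      by_cases h : e = g
      · subst h
        have h5 : [e].count e = 1 := by simp
        omega
      · have h5 : [g].count e = 0 := by simp [List.count_cons, h, Ne.symm h]
        have h6 := hcnt e
        omega
    · rw [List.Chain', List.isChain_append]
      refine ⟨hchain, List.isChain_singleton g, ?_⟩
      intro x hx' y hy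
      rw [List.getLast?_eq_getLast hcne] at hx'
      simp only [Option.mem_def, Option.some.injEq, List.head?_cons] at hx' hy
      rw [← hx', ← hy]
      exact hg.2.symm
    · intro h
      rw [List.head_append_of_ne_nil hcne]
      exact hhead hcne
  have : n + 1 ≤ n := by
    have hle : (c ++ [g]).length ≤ N := hlenP _ hcP
    have := Nat.le_findGreatest (P := Q) (by simpa using hle) (⟨c ++ [g], hcP, rfl⟩ : Q ((c ++ [g]).length))
    simp only [List.length_append, List.length_singleton, hlen] at this ⊢
    omega
  omega

def IsCyc (l : List E) : Prop :=
  List.Chain' (fun e f => tgt e = src f) l ∧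
    ∀ h : l ≠ [], tgt (l.getLast h) = src (l.head h)

lemma isCyc_rotate {l₁ l₂ : List E} (h : IsCyc src tgt (l₁ ++ l₂)) :
    IsCyc src tgt (l₂ ++ l₁) := by
  rcases eq_or_ne l₁ [] with rfl | h₁
  · simpa using h
  rcases eq_or_ne l₂ [] with rfl | h₂
  · simpa using h
  obtain ⟨hc, hcl⟩ := h
  rw [List.Chain', List.isChain_append] at hc
  obtain ⟨c1, c2, link⟩ := hc
  have hne : l₁ ++ l₂ ≠ [] := by simp [h₁]
  have hne' : l₂ ++ l₁ ≠ [] := by simp [h₂]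
  have hlast : (l₁ ++ l₂).getLast hne = l₂.getLast h₂ := List.getLast_append_of_ne_nil _ h₂
  have hhead : (l₁ ++ l₂).head hne = l₁.head h₁ := List.head_append_of_ne_nil h₁
  have hcl' := hcl hne
  rw [hlast, hhead] at hcl'
  constructor
  · rw [List.Chain', List.isChain_append]
    refine ⟨c2, c1, ?_⟩
    intro x hx y hy
    rw [List.getLast?_eq_getLast h₂] at hx
    rw [List.head?_eq_head h₁] at hy
    simp only [Option.mem_def, Option.some.injEq] at hx hy
    rw [← hx, ← hy]
    exact hcl'
  · intro h
    have hlast2 : (l₂ ++ l₁).getLast h = l₁.getLast h₁ := List.getLast_append_of_ne_nil _ h₁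
    have hhead2 : (l₂ ++ l₁).head h = l₂.head h₂ := List.head_append_of_ne_nil h₂
    rw [hlast2, hhead2]
    exact link _ (by rw [List.getLast?_eq_getLast h₁]; rfl)
      _ (by rw [List.head?_eq_head h₂]; rfl)

lemma closed_trail_balanced (l : List E) (hcyc : IsCyc src tgt l) (v : V) :
    deg src (fun f => l.count f) v = deg tgt (fun f => l.count f) v := by
  rcases eq_or_ne l [] with rfl | h
  · simp [deg]
  · have := trail_count src tgt v l h hcyc.1
    rw [hcyc.2 h] at this
    split_ifs at this <;> omega

theorem euler (m : E → ℕ) (hbal : ∀ v, deg src m v = deg tgt m v)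
    (hconn : ∀ e f, 0 < m e → 0 < m f →
      Relation.ReflTransGen (fun u v => ∃ g, 0 < m g ∧ src g = u ∧ tgt g = v) (tgt e) (src f))
    (hne : ∃ e, 0 < m e) :
    ∃ l : List E, l ≠ [] ∧ (∀ e, l.count e = m e) ∧ IsCyc src tgt l := by
  classical
  set N := ∑ e : E, m e with hN
  set P : List E → Prop := fun l =>
    (∀ e, l.count e ≤ m e) ∧ IsCyc src tgt l with hP
  have hlenP : ∀ l, P l → l.length ≤ N := by
    intro l hl
    rw [length_eq_sum_count]
    exact Finset.sum_le_sum fun e _ => hl.1 e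
  set Q : ℕ → Prop := fun n => ∃ l, P l ∧ l.length = n with hQ
  have hQ0 : Q 0 := ⟨[], ⟨by simp, List.isChain_nil, by simp⟩, rfl⟩
  set n := Nat.findGreatest Q N with hn
  have hQn : Q n := Nat.findGreatest_spec (Nat.zero_le N) hQ0
  obtain ⟨l, hPl, hlen⟩ := hQn
  obtain ⟨hcnt, hcyc⟩ := hPl
  -- main claim : l uses everything
  have hall : ∀ e, l.count e = m e := by
    by_contra hax
    push_neg at hax
    obtain ⟨e₀, he₀⟩ := hax
    have he₀' : l.count e₀ < m e₀ := lt_of_le_of_ne (hcnt e₀) he₀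
    set m' : E → ℕ := fun e => m e - l.count e with hm'
    have hm'bal : ∀ v, deg src m' v = deg tgt m' v := by
      intro v
      have h1 : deg src m' v + deg src (fun f => l.count f) v = deg src m v := by
        simp only [deg, hm', ← Finset.sum_add_distrib]
        exact Finset.sum_congr rfl fun e _ => Nat.sub_add_cancel (hcnt e)
      have h2 : deg tgt m' v + deg tgt (fun f => l.count f) v = deg tgt m v := by
        simp only [deg, hm', ← Finset.sum_add_distrib]
        exact Finset.sum_congr rfl fun e _ => Nat.sub_add_cancel (hcnt e)
      have h3 := closed_trail_balanced src tgt l hcyc v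
      have h4 := hbal v
      omega
    have hm'e₀ : 0 < m' e₀ := by simp only [hm']; omega
    -- find w with positive m'-out-degree, with w on l if l ≠ []
    have key : ∃ w, (∃ f, 0 < m' f ∧ src f = w) ∧ (l = [] ∨ w ∈ l.map src) := by
      rcases eq_or_ne l [] with rfl | hlne
      · exact ⟨src e₀, ⟨e₀, hm'e₀, rfl⟩, Or.inl rfl⟩
      · -- there is a remaining edge whose target is on l
        have hstep : ∃ g, 0 < m' g ∧ tgt g ∈ l.map src := by
          have hhd : l.head hlne ∈ l := List.head_mem hlne
          have hmhd : 0 < m (l.head hlne) := by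
            have : 0 < l.count (l.head hlne) := List.count_pos_iff.mpr hhd
            have := hcnt (l.head hlne)
            omega
          have hme₀ : 0 < m e₀ := by omega
          have hrtg := hconn e₀ (l.head hlne) hme₀ hmhd
          have hsrchd : src (l.head hlne) ∈ l.map src := List.mem_map_of_mem (f := src) hhd
          -- induction along the path
          have aux : ∀ x, Relation.ReflTransGen
              (fun u v => ∃ g, 0 < m g ∧ src g = u ∧ tgt g = v) x (src (l.head hlne)) →
              x ∈ l.map src ∨ ∃ g, 0 < m' g ∧ tgt g ∈ l.map src := by
            intro x hx
            induction hx using Relation.ReflTransGen.head_induction_on with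
            | refl => exact Or.inl hsrchd
            | head hr _ ih =>
              rename_i a c _
              obtain ⟨g, hmg, hsg, htg⟩ := hr
              rcases ih with hc | hdone
              · by_cases hg' : 0 < m' g
                · exact Or.inr ⟨g, hg', htg ▸ hc⟩
                · have hgl : g ∈ l := by
                    have h8 := hcnt g
                    simp only [hm'] at hg'
                    exact List.count_pos_iff.mp (by omega)
                  exact Or.inl (hsg ▸ List.mem_map_of_mem (f := src) hgl)
              · exact Or.inr hdone
          rcases aux (tgt e₀) hrtg with hc | hdone
          · exact ⟨e₀, hm'e₀, hc⟩
          · exact hdone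
        obtain ⟨g, hg, hgtgt⟩ := hstep
        -- positive in-degree at tgt g, so positive out-degree by balance
        have hin : 0 < deg tgt m' (tgt g) := by
          have hmem : g ∈ Finset.univ.filter (fun e => tgt e = tgt g) := by simp
          exact lt_of_lt_of_le hg (Finset.single_le_sum (fun e _ => Nat.zero_le _) hmem)
        rw [← hm'bal] at hin
        have : ∃ f ∈ Finset.univ.filter (fun e => src e = tgt g), 0 < m' f := by
          by_contra hc
          push_neg at hc
          have : deg src m' (tgt g) = 0 := Finset.sum_eq_zero fun e he => by
            have := hc e he; omega
          omega
        obtain ⟨f, hf, hf'⟩ := this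
        rw [Finset.mem_filter] at hf
        exact ⟨tgt g, ⟨f, hf', hf.2⟩, Or.inr hgtgt⟩
    obtain ⟨w, hwout, hwl⟩ := key
    obtain ⟨c, hcne, hccnt, hcchain, hchead, hclast⟩ := extract src tgt m' hm'bal w hwout
    -- splice
    have hbig : ∃ l', P l' ∧ n < l'.length := by
      rcases hwl with rfl | hwmem
      · refine ⟨c, ⟨?_, hcchain, ?_⟩, ?_⟩
        · intro e
          have h1 := hccnt e
          simp only [hm', List.count_nil] at h1
          omega
        · intro h
          rw [hchead, hclast]
        · have hc0 : 0 < c.length := List.length_pos_iff.mpr hcne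
          simp only [List.length_nil] at hlen
          omega
      · obtain ⟨g', hg'mem, hg'src⟩ := by
          rw [List.mem_map] at hwmem
          exact hwmem
        obtain ⟨l₁, l₂, rfl⟩ := List.append_of_mem hg'mem
        have hrot : IsCyc src tgt ((g' :: l₂) ++ l₁) := isCyc_rotate src tgt hcyc
        have hlr : src (((g' :: l₂) ++ l₁).head (by simp)) = w := by
          rw [List.head_append_of_ne_nil (by simp)]
          simpa using hg'src
        refine ⟨c ++ ((g' :: l₂) ++ l₁), ⟨?_, ?_, ?_⟩, ?_⟩
        · intro e
          rw [List.count_append]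
          have h1 := hccnt e
          have h2 := hcnt e
          have h3 : ((g' :: l₂) ++ l₁).count e = (l₁ ++ g' :: l₂).count e := by
            rw [List.count_append, List.count_append]
            omega
          simp only [hm'] at h1
          omega
        · rw [List.Chain', List.isChain_append]
          refine ⟨hcchain, hrot.1, ?_⟩
          intro x hx y hy
          rw [List.getLast?_eq_getLast hcne] at hx
          rw [List.head?_eq_head (by simp)] at hy
          simp only [Option.mem_def, Option.some.injEq] at hx hy
          rw [← hx, ← hy, hclast, hlr]
        · intro h
          rw [List.getLast_append_of_ne_nil _ (by simp),
            List.head_append_of_ne_nil hcne, hchead]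
          rw [hrot.2 (by simp), hlr]
        · rw [List.length_append]
          have hc0 : 0 < c.length := List.length_pos_iff.mpr hcne
          have : ((g' :: l₂) ++ l₁).length = (l₁ ++ g' :: l₂).length := by
            simp [List.length_append]; omega
          omega
    obtain ⟨l', hPl', hlong⟩ := hbig
    have := Nat.le_findGreatest (P := Q) (hlenP l' hPl') (⟨l', hPl', rfl⟩ : Q l'.length)
    omega
  have hlne : l ≠ [] := by
    obtain ⟨e, he⟩ := hne
    intro hnil
    rw [hnil] at hall
    have := hall e
    simp at this
    omega
  exact ⟨l, hlne, hall, hcyc⟩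


lemma filter_range_succ_top (P : ℕ → Prop) [DecidablePred P] (n : ℕ) :
    ((Finset.range (n+1)).filter P).card
      = ((Finset.range n).filter P).card + (if P n then 1 else 0) := by
  rw [Finset.range_add_one, Finset.filter_insert]
  split_ifs with h
  · rw [Finset.card_insert_of_notMem (by simp)]
  · rfl

lemma filter_range_succ_zero (P : ℕ → Prop) [DecidablePred P] (n : ℕ) :
    ((Finset.range (n+1)).filter P).card
      = (if P 0 then 1 else 0) + ((Finset.range n).filter (fun i => P (i+1))).card := by
  induction n with
  | zero => simp [Finset.range_one, Finset.filter_singleton]; split_ifs <;> simp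
  | succ n ih =>
    rw [filter_range_succ_top P (n+1), ih, filter_range_succ_top (fun i => P (i+1)) n]
    split_ifs <;> omega

lemma count_eq_card_filter {α : Type*} [DecidableEq α] (l : List α) (a : α) :
    ((Finset.range l.length).filter (fun i => l[i]? = some a)).card = l.count a := by
  induction l with
  | nil => simp
  | cons b t ih =>
    rw [List.length_cons, filter_range_succ_zero]
    have h0 : ((b :: t)[0]? = some a) ↔ b = a := by simp
    have hs : ∀ i, (b :: t)[i+1]? = t[i]? := fun i => rfl
    simp only [hs, ih, List.count_cons, h0, beq_iff_eq]
    split_ifs with h1 h2 h2 <;> simp_all <;> omega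

end EulerAux

namespace StmtAux

open EulerAux

variable {A : Type*} [Fintype A] [DecidableEq A]

lemma exists_m (k : ℕ) (η : (Fin (k + 2) → A) → ℝ) (hprob : IsProbVec η)
    (hrat : ∀ φ, ∃ q : ℚ, η φ = (q : ℝ)) :
    ∃ M : ℕ, 0 < M ∧ ∃ m : (Fin (k+2) → A) → ℕ, ∀ φ, (m φ : ℝ) = (M : ℝ) * η φ := by
  classical
  choose q hq using hrat
  refine ⟨∏ φ : Fin (k+2) → A, (q φ).den, Finset.prod_pos fun φ _ => (q φ).pos, ?_⟩
  set M := ∏ φ : Fin (k+2) → A, (q φ).den with hM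
  have hint : ∀ φ, ∃ n : ℕ, ((M : ℝ) * η φ) = n := by
    intro φ
    obtain ⟨c, hc⟩ := Finset.dvd_prod_of_mem (fun φ => (q φ).den) (Finset.mem_univ φ)
    have hz : (q φ * M : ℚ) = ((q φ).num * c : ℤ) := by
      rw [← hM] at hc
      rw [hc]
      push_cast
      rw [← mul_assoc, Rat.mul_den_eq_num]
    have hre : ((q φ * M : ℚ) : ℝ) = (M : ℝ) * η φ := by
      rw [hq φ]; push_cast; ring
    have hnn : (0:ℝ) ≤ (M : ℝ) * η φ :=
      mul_nonneg (by positivity) (hprob.1 φ)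
    refine ⟨((q φ).num * c).toNat, ?_⟩
    have hnn' : (0:ℤ) ≤ (q φ).num * c := by
      have h10 : (0:ℚ) ≤ q φ * M := by
        rw [← hre] at hnn
        exact_mod_cast hnn
      rw [hz] at h10
      exact_mod_cast h10
    rw [← hre, hz]
    norm_cast
    omega
  choose m hm using hint
  exact ⟨m, fun φ => (hm φ).symm⟩

lemma reverse_dir (k : ℕ) (η : (Fin (k + 2) → A) → ℝ) (hprob : IsProbVec η)
    (hrat : ∀ φ, ∃ q : ℚ, η φ = (q : ℝ)) (hsi : ShiftInv k η)
    (hconn : ∀ u v : Fin (k + 1) → A, nonIsolated η u → nonIsolated η v →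
      Relation.ReflTransGen (deBruijnEdge η) u v) :
    ∃ ω : List A, k + 2 ≤ ω.length ∧ ∀ φ, freq (k + 2) ω φ = η φ := by
  classical
  obtain ⟨M, hM0, m, hm⟩ := exists_m k η hprob hrat
  have hmpos : ∀ φ, 0 < m φ ↔ 0 < η φ := by
    intro φ
    constructor
    · intro h
      have h1 : (0:ℝ) < (m φ : ℝ) := by exact_mod_cast h
      rw [hm φ] at h1
      have hM' : (0:ℝ) < (M:ℝ) := by exact_mod_cast hM0
      nlinarith
    · intro h
      have h1 : (0:ℝ) < (m φ : ℝ) := by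
        rw [hm φ]
        have hM' : (0:ℝ) < (M:ℝ) := by exact_mod_cast hM0
        positivity
      exact_mod_cast h1
  -- balance
  have hdeg_src : ∀ v : Fin (k+1) → A,
      deg (Fin.init (α := fun _ : Fin (k+2) => A)) m v = ∑ a : A, m (Fin.snoc v a) := by
    intro v
    refine Finset.sum_nbij' (fun e => e (Fin.last (k+1))) (fun a => Fin.snoc v a)
      ?_ ?_ ?_ ?_ ?_
    · intro e _; exact Finset.mem_univ _
    · intro a _
      simp only [Finset.mem_filter, Finset.mem_univ, true_and]
      exact Fin.init_snoc (α := fun _ : Fin (k+2) => A) a v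
    · intro e he
      simp only [Finset.mem_filter, Finset.mem_univ, true_and] at he
      rw [← he]
      exact Fin.snoc_init_self e
    · intro a _; simp
    · intro e he
      simp only [Finset.mem_filter, Finset.mem_univ, true_and] at he
      rw [← he, Fin.snoc_init_self]
  have hdeg_tgt : ∀ v : Fin (k+1) → A,
      deg (Fin.tail (α := fun _ : Fin (k+2) => A)) m v = ∑ a : A, m (Fin.cons a v) := by
    intro v
    refine Finset.sum_nbij' (fun e => e 0) (fun a => Fin.cons a v) ?_ ?_ ?_ ?_ ?_
    · intro e _; exact Finset.mem_univ _
    · intro a _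
      simp only [Finset.mem_filter, Finset.mem_univ, true_and]
      exact Fin.tail_cons (α := fun _ : Fin (k+2) => A) a v
    · intro e he
      simp only [Finset.mem_filter, Finset.mem_univ, true_and] at he
      rw [← he]
      exact Fin.cons_self_tail e
    · intro a _; simp
    · intro e he
      simp only [Finset.mem_filter, Finset.mem_univ, true_and] at he
      rw [← he, Fin.cons_self_tail]
  have hbal : ∀ v : Fin (k+1) → A,
      deg (Fin.init (α := fun _ : Fin (k+2) => A)) m v
        = deg (Fin.tail (α := fun _ : Fin (k+2) => A)) m v := by
    intro v
    rw [hdeg_src v, hdeg_tgt v]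
    have : ((∑ a : A, m (Fin.snoc v a) : ℕ) : ℝ) = ((∑ a : A, m (Fin.cons a v) : ℕ) : ℝ) := by
      push_cast
      simp only [hm]
      rw [← Finset.mul_sum, ← Finset.mul_sum, ← hsi v]
    exact_mod_cast this
  -- connectivity in euler form
  have heconn : ∀ e f : Fin (k+2) → A, 0 < m e → 0 < m f →
      Relation.ReflTransGen
        (fun u v => ∃ g, 0 < m g ∧ Fin.init g = u ∧ Fin.tail g = v)
        (Fin.tail e) (Fin.init f) := by
    intro e f he hf
    have hηe := (hmpos e).1 he
    have hηf := (hmpos f).1 hf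
    have hedgee : deBruijnEdge η (Fin.init e) (Fin.tail e) := ⟨e, hηe, rfl, rfl⟩
    have hedgef : deBruijnEdge η (Fin.init f) (Fin.tail f) := ⟨f, hηf, rfl, rfl⟩
    have h1 : nonIsolated η (Fin.tail e) := ⟨Fin.init e, Or.inr hedgee⟩
    have h2 : nonIsolated η (Fin.init f) := ⟨Fin.tail f, Or.inl hedgef⟩
    refine Relation.ReflTransGen.mono ?_ _ _ (hconn _ _ h1 h2)
    rintro u v ⟨φ, hφ, hu, hv⟩
    exact ⟨φ, (hmpos φ).2 hφ, hu.symm, hv.symm⟩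
  have hne : ∃ e : Fin (k+2) → A, 0 < m e := by
    have hA : ∃ φ : Fin (k+2) → A, 0 < η φ := by
      by_contra hcon
      push_neg at hcon
      have : ∑ φ : Fin (k+2) → A, η φ = 0 :=
        le_antisymm (Finset.sum_nonpos fun φ _ => hcon φ)
          (Finset.sum_nonneg fun φ _ => hprob.1 φ)
      rw [hprob.2] at this
      norm_num at this
    obtain ⟨φ, hφ⟩ := hA
    exact ⟨φ, (hmpos φ).2 hφ⟩
  obtain ⟨l, hlne, hlcount, hchain, hclosed⟩ :=
    euler (Fin.init (α := fun _ : Fin (k+2) => A)) Fin.tail m hbal heconn hne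
  -- length of l equals sum of multiplicities, which is M
  have hsumM : ((∑ e : Fin (k+2) → A, m e : ℕ) : ℝ) = (M : ℝ) := by
    push_cast
    simp only [hm]
    rw [← Finset.mul_sum, hprob.2, mul_one]
  have hlenl : (l.length : ℝ) = (M : ℝ) := by
    rw [length_eq_sum_count l]
    rw [show (∑ e : Fin (k+2) → A, l.count e) = ∑ e : Fin (k+2) → A, m e from
      Finset.sum_congr rfl fun e _ => hlcount e]
    exact hsumM
  have hl1 : 1 ≤ l.length := List.length_pos_iff.mpr hlne
  -- the word
  set ω : List A := (List.ofFn (Fin.init (l.head hlne))) ++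
    l.map (fun e => e (Fin.last (k+1))) with hω
  have hωlen : ω.length = (k+1) + l.length := by simp [hω]; omega
  have hωge : k + 2 ≤ ω.length := by omega
  refine ⟨ω, hωge, ?_⟩
  -- windows of ω are the edges of l
  have window : ∀ i (hi : i < l.length) (j : Fin (k+2)),
      ω[i + (j:ℕ)]? = some (l.get ⟨i, hi⟩ j) := by
    intro i
    induction i with
    | zero =>
      intro hi j
      have hhead : l.get ⟨0, hi⟩ = l.head hlne := List.get_mk_zero hi
      simp only [Nat.zero_add]
      induction j using Fin.lastCases with
      | last =>
        have hv : ((Fin.last (k+1) : Fin (k+2)) : ℕ) = k+1 := rfl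
        rw [hv, hω, List.getElem?_append_right (by simp), List.getElem?_map]
        simp only [List.length_ofFn, Nat.sub_self]
        rw [List.getElem?_eq_getElem (by omega : 0 < l.length)]
        simp only [Option.map_some, List.get_eq_getElem]
      | cast j =>
        have hv : ((j.castSucc : Fin (k+2)) : ℕ) = (j : ℕ) := rfl
        rw [hv, hω, List.getElem?_append_left (by simp [j.isLt]), List.getElem?_ofFn]
        simp only [j.isLt, ↓reduceDIte]
        congr 1
        rw [hhead]
        rfl
    | succ i ih =>
      intro hi j
      have hi' : i < l.length := by omega
      induction j using Fin.lastCases with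
      | last =>
        have hv : ((Fin.last (k+1) : Fin (k+2)) : ℕ) = k+1 := rfl
        rw [hv, hω, List.getElem?_append_right (by simp), List.getElem?_map]
        simp only [List.length_ofFn]
        rw [show i + 1 + (k + 1) - (k + 1) = i + 1 from by omega]
        rw [List.getElem?_eq_getElem (by omega : i + 1 < l.length)]
        rfl
      | cast j =>
        have harith : i + 1 + ((j.castSucc : Fin (k+2)) : ℕ)
            = i + (((j.succ : Fin (k+2))) : ℕ) := by
          simp only [Fin.coe_castSucc, Fin.val_succ]
          omega
        rw [harith, ih hi' j.succ]
        congr 1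
        have hstep := List.isChain_iff_getElem.mp hchain i (by omega)
        have h7 := congrFun hstep j
        simpa [Fin.tail, Fin.init] using h7
    -- end window
  intro φ
  have hocc : occCount (k+2) ω φ = l.count φ := by
    have hD : ω.length - (k+2) + 1 = l.length := by omega
    have hset : (Finset.range (ω.length - (k+2) + 1)).filter
        (fun i => ∀ j : Fin (k+2), ω[i + (j : ℕ)]? = some (φ j))
        = (Finset.range l.length).filter (fun i => l[i]? = some φ) := by
      ext i
      simp only [Finset.mem_filter, Finset.mem_range, hD]
      constructor
      · rintro ⟨hi, hP⟩
        refine ⟨hi, ?_⟩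
        rw [List.getElem?_eq_getElem hi]
        congr 1
        funext j
        have h1 := window i hi j
        have h2 := hP j
        rw [h1] at h2
        exact Option.some.inj h2
      · rintro ⟨hi, hP⟩
        refine ⟨hi, fun j => ?_⟩
        rw [List.getElem?_eq_getElem hi] at hP
        rw [window i hi j, List.get_eq_getElem, Option.some.inj hP]
    rw [occCount, hset, count_eq_card_filter]
  rw [freq, hocc]
  have hD : ω.length - (k+2) + 1 = l.length := by omega
  rw [hD]
  have hcnt : ((l.count φ : ℕ) : ℝ) = (M:ℝ) * η φ := by
    rw [hlcount φ]; exact hm φ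
  rw [hcnt, hlenl]
  field_simp

lemma forward_dir (k : ℕ) (η : (Fin (k + 2) → A) → ℝ) (hsi : ShiftInv k η)
    (ω : List A) (hlen : k + 2 ≤ ω.length) (hfreq : ∀ φ, freq (k + 2) ω φ = η φ) :
    ∀ u v : Fin (k + 1) → A, nonIsolated η u → nonIsolated η v →
      Relation.ReflTransGen (deBruijnEdge η) u v := by
  classical
  set L := ω.length with hL
  set D := L - (k+2) + 1 with hDdef
  have hD0 : 0 < D := by omega
  have hDL : D + (k + 1) = L := by omega
  -- basic predicates
  set At : (Fin (k+1) → A) → ℕ → Prop :=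
    fun u i => ∀ j : Fin (k+1), ω[i + (j:ℕ)]? = some (u j) with hAt
  set Occ : (Fin (k+2) → A) → ℕ → Prop :=
    fun φ i => ∀ j : Fin (k+2), ω[i + (j:ℕ)]? = some (φ j) with hOcc
  have hη : ∀ φ, η φ = (occCount (k+2) ω φ : ℝ) / (D:ℝ) := by
    intro φ
    rw [← hfreq φ, freq]
  have hDR : (0:ℝ) < (D:ℝ) := by exact_mod_cast hD0
  have hpos : ∀ φ, 0 < η φ ↔ 0 < occCount (k+2) ω φ := by
    intro φ
    rw [hη φ]
    constructor
    · intro h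
      by_contra hc
      push_neg at hc
      interval_cases h2 : occCount (k+2) ω φ
      · simp at h
    · intro h
      apply div_pos _ hDR
      exact_mod_cast h
  have hocc_ex : ∀ φ, 0 < occCount (k+2) ω φ → ∃ i, i < D ∧ Occ φ i := by
    intro φ h
    rw [occCount] at h
    obtain ⟨i, hi⟩ := Finset.card_pos.mp h
    rw [Finset.mem_filter, Finset.mem_range] at hi
    exact ⟨i, hi.1, hi.2⟩
  have hocc_of : ∀ φ i, i < D → Occ φ i → 0 < occCount (k+2) ω φ := by
    intro φ i hi h
    rw [occCount]
    apply Finset.card_pos.mpr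
    exact ⟨i, Finset.mem_filter.mpr ⟨Finset.mem_range.mpr hi, h⟩⟩
  have hat_unique : ∀ u v i, At u i → At v i → u = v := by
    intro u v i hu hv
    funext j
    have h1 := hu j
    have h2 := hv j
    rw [h1] at h2
    exact Option.some.inj h2
  have hat_exists : ∀ i, i + (k+1) ≤ L → ∃ u, At u i := by
    intro i hi
    refine ⟨fun j => ω.get ⟨i + (j:ℕ), by have := j.isLt; omega⟩, fun j => ?_⟩
    exact List.getElem?_eq_getElem _
  have hat_init : ∀ φ i, Occ φ i → At (fun j => φ j.castSucc) i := by
    intro φ i h j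
    exact h j.castSucc
  have hat_tail : ∀ φ i, Occ φ i → At (fun j => φ j.succ) (i+1) := by
    intro φ i h j
    have := h j.succ
    rw [show i + ((j.succ : Fin (k+2)) : ℕ) = i + 1 + (j:ℕ) from by
      simp only [Fin.val_succ]; omega] at this
    exact this
  -- single step
  have hstep : ∀ i u v, i < D → At u i → At v (i+1) → deBruijnEdge η u v := by
    intro i u v hi hu hv
    set φ : Fin (k+2) → A := Fin.snoc u (v (Fin.last k)) with hφ
    have hOccφ : Occ φ i := by
      intro j
      induction j using Fin.lastCases with
      | last =>
        have h1 := hv (Fin.last k)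
        rw [show (i + ((Fin.last (k+1) : Fin (k+2)) : ℕ)) = i + 1 + ((Fin.last k : Fin (k+1)) : ℕ)
          from by simp [Fin.val_last]; omega]
        rw [h1, hφ]
        congr 1
        exact (Fin.snoc_last (α := fun _ : Fin (k+2) => A) (v (Fin.last k)) u).symm
      | cast j =>
        have h1 := hu j
        rw [show (i + ((j.castSucc : Fin (k+2)) : ℕ)) = i + (j : ℕ) from rfl]
        rw [h1, hφ]
        congr 1
        exact (Fin.snoc_castSucc (α := fun _ : Fin (k+2) => A) (v (Fin.last k)) u j).symm
    refine ⟨φ, (hpos φ).mpr (hocc_of φ i hi hOccφ), ?_, ?_⟩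
    · funext j
      have h1 := hu j
      have h2 := hOccφ j.castSucc
      rw [show (i + ((j.castSucc : Fin (k+2)) : ℕ)) = i + (j : ℕ) from rfl] at h2
      rw [h1] at h2
      exact Option.some.inj h2
    · funext j
      have h1 := hv j
      have h2 := hOccφ j.succ
      rw [show (i + ((j.succ : Fin (k+2)) : ℕ)) = i + 1 + (j:ℕ) from by
        simp only [Fin.val_succ]; omega] at h2
      rw [h1] at h2
      exact Option.some.inj h2
  -- reachability along the word
  have hreach : ∀ d i u v, i + d ≤ D → At u i → At v (i + d) →
      Relation.ReflTransGen (deBruijnEdge η) u v := by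
    intro d
    induction d with
    | zero =>
      intro i u v _ hu hv
      rw [hat_unique u v i hu (by simpa using hv)]
    | succ d ih =>
      intro i u v hle hu hv
      obtain ⟨w, hw⟩ := hat_exists (i+1) (by omega)
      have hi : i < D := by omega
      have hedge := hstep i u w hi hu hw
      have htail : Relation.ReflTransGen (deBruijnEdge η) w v := by
        apply ih (i+1) w v (by omega) hw
        rw [show i + 1 + d = i + (d+1) from by omega]
        exact hv
      exact Relation.ReflTransGen.head hedge htail
  -- locating non-isolated vertices on the word
  have hlocate : ∀ u, nonIsolated η u → ∃ i, i ≤ D ∧ At u i := by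
    rintro u ⟨v, hv | hv⟩
    · obtain ⟨φ, hφ, hu, -⟩ := hv
      obtain ⟨i, hi, hOccφ⟩ := hocc_ex φ ((hpos φ).mp hφ)
      exact ⟨i, by omega, hu ▸ hat_init φ i hOccφ⟩
    · obtain ⟨φ, hφ, -, hu⟩ := hv
      obtain ⟨i, hi, hOccφ⟩ := hocc_ex φ ((hpos φ).mp hφ)
      exact ⟨i + 1, by omega, hu ▸ hat_tail φ i hOccφ⟩
  -- the wrap-around: first window equals last window
  obtain ⟨x0, hx0⟩ := hat_exists 0 (by omega)
  have hwrap : At x0 D := by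
    have hsum : ∀ ψ : Fin (k+1) → A, ∑ a : A, occCount (k+2) ω (Fin.cons a ψ)
        = ∑ a : A, occCount (k+2) ω (Fin.snoc ψ a) := by
      intro ψ
      have h1 := hsi ψ
      simp only [hη] at h1
      rw [← Finset.sum_div, ← Finset.sum_div] at h1
      rw [div_eq_div_iff (ne_of_gt hDR) (ne_of_gt hDR)] at h1
      have h2 := mul_right_cancel₀ (ne_of_gt hDR) h1
      exact_mod_cast h2
    have hocc_card : ∀ φ, occCount (k+2) ω φ
        = ((Finset.range D).filter (fun i => Occ φ i)).card := by
      intro φ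
      rw [occCount]
    have hcons : ∀ ψ : Fin (k+1) → A,
        ((Finset.range D).filter (fun i => At ψ (i+1))).card
          = ∑ a : A, occCount (k+2) ω (Fin.cons a ψ) := by
      intro ψ
      have hset : (Finset.range D).filter (fun i => At ψ (i+1))
          = Finset.univ.biUnion
            (fun a : A => (Finset.range D).filter (fun i => Occ (Fin.cons a ψ) i)) := by
        ext i
        simp only [Finset.mem_filter, Finset.mem_range, Finset.mem_biUnion,
          Finset.mem_univ, true_and]
        constructor
        · rintro ⟨hi, hAt⟩
          refine ⟨ω.get ⟨i, by omega⟩, hi, fun j => ?_⟩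
          induction j using Fin.cases with
          | zero =>
            rw [show (i + ((0 : Fin (k+2)) : ℕ)) = i from by simp]
            rw [List.getElem?_eq_getElem (show i < ω.length from by omega)]
            simp
          | succ j =>
            have h3 := hAt j
            rw [show (i + ((j.succ : Fin (k+2)) : ℕ)) = i + 1 + (j:ℕ) from by
              simp only [Fin.val_succ]; omega]
            rw [h3]
            simp
        · rintro ⟨a, hi, hOccC⟩
          refine ⟨hi, fun j => ?_⟩
          have h3 := hOccC j.succ
          rw [show (i + ((j.succ : Fin (k+2)) : ℕ)) = i + 1 + (j:ℕ) from by
            simp only [Fin.val_succ]; omega] at h3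
          rw [h3]
          simp
      rw [hset, Finset.card_biUnion]
      · exact Finset.sum_congr rfl fun a _ => (hocc_card (Fin.cons a ψ)).symm
      · intro a _ b _ hab
        apply Finset.disjoint_left.mpr
        intro i hi1 hi2
        rw [Finset.mem_filter] at hi1 hi2
        apply hab
        have h1 := hi1.2 (0 : Fin (k+2))
        have h2 := hi2.2 (0 : Fin (k+2))
        rw [h1] at h2
        have h3 := Option.some.inj h2
        simpa using h3
    have hsnoc : ∀ ψ : Fin (k+1) → A,
        ((Finset.range D).filter (fun i => At ψ i)).card
          = ∑ a : A, occCount (k+2) ω (Fin.snoc ψ a) := by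
      intro ψ
      have hset : (Finset.range D).filter (fun i => At ψ i)
          = Finset.univ.biUnion
            (fun a : A => (Finset.range D).filter (fun i => Occ (Fin.snoc ψ a) i)) := by
        ext i
        simp only [Finset.mem_filter, Finset.mem_range, Finset.mem_biUnion,
          Finset.mem_univ, true_and]
        constructor
        · rintro ⟨hi, hAt⟩
          refine ⟨ω.get ⟨i + (k+1), by omega⟩, hi, fun j => ?_⟩
          induction j using Fin.lastCases with
          | last =>
            rw [show (i + ((Fin.last (k+1) : Fin (k+2)) : ℕ)) = i + (k+1) from rfl]
            rw [List.getElem?_eq_getElem (show i + (k+1) < ω.length from by omega)]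
            congr 1
            exact (Fin.snoc_last (α := fun _ : Fin (k+2) => A) _ ψ).symm
          | cast j =>
            have h3 := hAt j
            rw [show (i + ((j.castSucc : Fin (k+2)) : ℕ)) = i + (j:ℕ) from rfl]
            rw [h3]
            congr 1
            exact (Fin.snoc_castSucc (α := fun _ : Fin (k+2) => A) _ ψ j).symm
        · rintro ⟨a, hi, hOccC⟩
          refine ⟨hi, fun j => ?_⟩
          have h3 := hOccC j.castSucc
          rw [show (i + ((j.castSucc : Fin (k+2)) : ℕ)) = i + (j:ℕ) from rfl] at h3
          rw [h3]
          congr 1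
          exact Fin.snoc_castSucc (α := fun _ : Fin (k+2) => A) a ψ j
      rw [hset, Finset.card_biUnion]
      · exact Finset.sum_congr rfl fun a _ => (hocc_card (Fin.snoc ψ a)).symm
      · intro a _ b _ hab
        apply Finset.disjoint_left.mpr
        intro i hi1 hi2
        rw [Finset.mem_filter] at hi1 hi2
        apply hab
        have h1 := hi1.2 (Fin.last (k+1))
        have h2 := hi2.2 (Fin.last (k+1))
        rw [h1] at h2
        have h3 := Option.some.inj h2
        simpa using h3
    have key : ((Finset.range D).filter (fun i => At x0 (i+1))).card
        = ((Finset.range D).filter (fun i => At x0 i)).card := by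
      rw [hcons x0, hsnoc x0, hsum x0]
    have e1 := EulerAux.filter_range_succ_top (fun i => At x0 i) D
    have e2 := EulerAux.filter_range_succ_zero (fun i => At x0 i) D
    rw [if_pos (show At x0 0 from hx0)] at e2
    by_contra hcon
    rw [if_neg hcon] at e1
    rw [key] at e2
    omega
  -- finish
  intro u v hu hv
  obtain ⟨iu, hiu, hAu⟩ := hlocate u hu
  obtain ⟨iv, hiv, hAv⟩ := hlocate v hv
  rcases le_or_gt iu iv with h | h
  · apply hreach (iv - iu) iu u v (by omega) hAu
    rw [show iu + (iv - iu) = iv from by omega]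
    exact hAv
  · have h1 : Relation.ReflTransGen (deBruijnEdge η) u x0 := by
      apply hreach (D - iu) iu u x0 (by omega) hAu
      rw [show iu + (D - iu) = D from by omega]
      exact hwrap
    have h2 : Relation.ReflTransGen (deBruijnEdge η) x0 v := by
      apply hreach iv 0 x0 v (by omega) hx0
      simpa using hAv
    exact h1.trans h2

end StmtAux

theorem stmt14 {A : Type*} [Fintype A] [DecidableEq A] (k : ℕ)
    (η : (Fin (k + 2) → A) → ℝ) (hprob : IsProbVec η)
    (hrat : ∀ φ, ∃ q : ℚ, η φ = (q : ℝ)) (hsi : ShiftInv k η) :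
    (∃ ω : List A, k + 2 ≤ ω.length ∧ ∀ φ, freq (k + 2) ω φ = η φ) ↔
    (∀ u v : Fin (k + 1) → A, nonIsolated η u → nonIsolated η v →
      Relation.ReflTransGen (deBruijnEdge η) u v) := by
  constructor
  · rintro ⟨ω, hlen, hfreq⟩
    exact StmtAux.forward_dir k η hsi ω hlen hfreq
  · intro hconn
    exact StmtAux.reverse_dir k η hprob hrat hsi hconn
end
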